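/- arXiv:2003.07206 — 13 statements merged into one kernel-verified Lean document; each statement's English description precedes it below -/
import Mathlib

section
/- Let c, M > 0 and suppose that either (η > 1 and a, b > 0) or (η = 1 and b > a > 0). Then there exists a constant C > 0 such that for all real numbers x, y with 0 ≤ x ≤ M·y < ∞ one has (a(1+x)y² + b(1+x)^η y²)/(1+y²) − 2b(1+x)^η y⁴/(1+y²)² + c(1+x)^η y⁴/((1+y²)²(1 + log(1+y²))) ≤ C. -/
set_option maxHeartbeats 1600000 in
/-- Lemma 5.1 (the "log lemma"): an algebraic inequality. -/
theorem log_lemma (a b c M η : ℝ) (hc : 0 < c) (hM : 0 < M)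
    (h : (1 < η ∧ 0 < a ∧ 0 < b) ∨ (η = 1 ∧ 0 < a ∧ a < b)) :
    ∃ C : ℝ, 0 < C ∧ ∀ x y : ℝ, 0 ≤ x → x ≤ M * y →
      (a * (1 + x) * y ^ 2 + b * (1 + x) ^ η * y ^ 2) / (1 + y ^ 2)
        - 2 * b * (1 + x) ^ η * y ^ 4 / (1 + y ^ 2) ^ 2
        + c * (1 + x) ^ η * y ^ 4 / ((1 + y ^ 2) ^ 2 * (1 + Real.log (1 + y ^ 2))) ≤ C := by
  have ha : 0 < a := by rcases h with ⟨_, ha, _⟩ | ⟨_, ha, _⟩ <;> exact ha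
  have hb : 0 < b := by
    rcases h with ⟨_, _, hb⟩ | ⟨_, ha, hab⟩
    · exact hb
    · linarith
  have hη1 : 1 ≤ η := by rcases h with ⟨hη, _, _⟩ | ⟨hη, _, _⟩ <;> [linarith; exact hη.ge]
  -- choose a' < b and a threshold u₀ with a*u ≤ a'*u^η for u ≥ u₀
  obtain ⟨a', u₀, ha'0, ha'b, hu₀1, hbd⟩ :
      ∃ a' u₀ : ℝ, 0 < a' ∧ a' < b ∧ 1 ≤ u₀ ∧ ∀ u : ℝ, u₀ ≤ u → a * u ≤ a' * u ^ η := by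
    rcases h with ⟨hη, ha, hb⟩ | ⟨hη, ha, hab⟩
    · refine ⟨b / 2, max 1 ((2 * a / b) ^ (η - 1)⁻¹), by positivity, by linarith,
        le_max_left _ _, ?_⟩
      intro u hu
      have hu1 : (1 : ℝ) ≤ u := le_trans (le_max_left _ _) hu
      have hab0 : (0 : ℝ) ≤ 2 * a / b := by positivity
      have h1 : 2 * a / b ≤ u ^ (η - 1) := by
        calc 2 * a / b = ((2 * a / b) ^ (η - 1)⁻¹) ^ (η - 1) :=
              (Real.rpow_inv_rpow hab0 (by linarith : η - 1 ≠ 0)).symm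
          _ ≤ (max 1 ((2 * a / b) ^ (η - 1)⁻¹)) ^ (η - 1) :=
              Real.rpow_le_rpow (Real.rpow_nonneg hab0 _) (le_max_right _ _) (by linarith)
          _ ≤ u ^ (η - 1) :=
              Real.rpow_le_rpow (le_trans zero_le_one (le_max_left _ _)) hu (by linarith)
      have h2 : u ^ η = u ^ (η - 1) * u := by
        rw [show η = (η - 1) + 1 by ring, Real.rpow_add (by linarith : (0:ℝ) < u),
          Real.rpow_one]
        ring_nf
      rw [h2]
      have h3 : 2 * a / b * (b / 2 * u) = a * u := by field_simp
      have h4 := mul_le_mul_of_nonneg_right h1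
        (mul_nonneg (by linarith : (0:ℝ) ≤ b / 2) (by linarith : (0:ℝ) ≤ u))
      nlinarith [h4]
    · exact ⟨a, 1, ha, hab, le_refl 1, fun u hu => by rw [hη, Real.rpow_one]⟩
  set δ := b - a' with hδdef
  have hδ : 0 < δ := by simp only [hδdef]; linarith
  set s₀ := 1 + 4 * b / δ + Real.exp (4 * c / δ) with hs₀def
  have hexp : 0 < Real.exp (4 * c / δ) := Real.exp_pos _
  have hs₀1 : 1 ≤ s₀ := by
    have : 0 < 4 * b / δ := by positivity
    simp only [hs₀def]; linarith
  have hs₀pos : 0 < 1 + s₀ := by linarith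
  have hδs₀ : 4 * b ≤ δ * s₀ := by
    have h1 : δ * (4 * b / δ) = 4 * b := by field_simp
    have h2 : 0 < δ * Real.exp (4 * c / δ) := by positivity
    rw [hs₀def]
    nlinarith
  have hlogs₀ : 4 * c / δ ≤ Real.log (1 + s₀) := by
    rw [Real.le_log_iff_exp_le (by linarith)]
    simp only [hs₀def]
    have : 0 < 4 * b / δ := by positivity
    linarith
  -- key facts about t₀ := s₀ / (1 + s₀)
  have ht₀half : 1 / 2 ≤ s₀ / (1 + s₀) := by
    rw [div_le_div_iff₀ (by norm_num) hs₀pos]; linarith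
  have hkey : 4 * b * (1 - s₀ / (1 + s₀)) ≤ δ := by
    have h1 : 1 - s₀ / (1 + s₀) = 1 / (1 + s₀) := by field_simp; ring
    rw [h1]
    have h2 : 4 * b * (1 / (1 + s₀)) = 4 * b / (1 + s₀) := by ring
    rw [h2, div_le_iff₀ hs₀pos]
    nlinarith
  set u₁ := max u₀ (1 + M * Real.sqrt s₀) with hu₁def
  have hu₁1 : 1 ≤ u₁ := le_trans hu₀1 (le_max_left _ _)
  have hu₁η : 0 < u₁ ^ η := Real.rpow_pos_of_pos (by linarith) η
  clear_value δ s₀ u₁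
  refine ⟨a * u₁ + (b + c) * u₁ ^ η + 1,
    by linarith [mul_pos ha (lt_of_lt_of_le one_pos hu₁1),
      mul_pos (by linarith : (0:ℝ) < b + c) hu₁η], ?_⟩
  intro x y hx hxy
  have hy : 0 ≤ y := by
    by_contra hy
    push_neg at hy
    have := mul_neg_of_pos_of_neg hM hy
    linarith
  set u := 1 + x with hudef
  clear_value u
  have hu1 : 1 ≤ u := by simp only [hudef]; linarith
  have hupos : 0 < u := by linarith
  have hs1 : 0 < 1 + y ^ 2 := by positivity
  have hL1 : 1 ≤ 1 + Real.log (1 + y ^ 2) := by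
    have := Real.log_nonneg (by linarith [sq_nonneg y] : (1:ℝ) ≤ 1 + y ^ 2)
    linarith
  have hLpos : 0 < 1 + Real.log (1 + y ^ 2) := by linarith
  set L := 1 + Real.log (1 + y ^ 2) with hLdef
  set t := y ^ 2 / (1 + y ^ 2) with htdef
  clear_value L t
  have ht0 : 0 ≤ t := by
    rw [htdef]; positivity
  have ht1 : t ≤ 1 := by
    rw [htdef, div_le_one hs1]; linarith [sq_nonneg y]
  have ht2 : t ^ 2 ≤ 1 := by rw [sq]; exact mul_le_one₀ ht1 ht0 ht1
  have huη : 0 < u ^ η := Real.rpow_pos_of_pos hupos η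
  have hE : (a * u * y ^ 2 + b * u ^ η * y ^ 2) / (1 + y ^ 2)
        - 2 * b * u ^ η * y ^ 4 / (1 + y ^ 2) ^ 2
        + c * u ^ η * y ^ 4 / ((1 + y ^ 2) ^ 2 * L)
      = (a * u + b * u ^ η) * t - 2 * b * u ^ η * t ^ 2
        + c * u ^ η * (t ^ 2 / L) := by
    have e1 : (a * u * y ^ 2 + b * u ^ η * y ^ 2) / (1 + y ^ 2)
        = (a * u + b * u ^ η) * t := by rw [htdef]; ring
    have et : t ^ 2 = y ^ 4 / (1 + y ^ 2) ^ 2 := by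
      rw [htdef, div_pow]; ring_nf
    have e2 : 2 * b * u ^ η * y ^ 4 / (1 + y ^ 2) ^ 2 = 2 * b * u ^ η * t ^ 2 := by
      rw [et]; ring
    have e3 : c * u ^ η * y ^ 4 / ((1 + y ^ 2) ^ 2 * L)
        = c * u ^ η * (t ^ 2 / L) := by
      rw [et, div_div, mul_div_assoc]
    rw [e1, e2, e3]
  rw [hE]
  by_cases hbig : u₀ ≤ u ∧ s₀ ≤ y ^ 2
  · obtain ⟨hu₀u, hs₀s⟩ := hbig
    have hlogmono : Real.log (1 + s₀) ≤ Real.log (1 + y ^ 2) :=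
      Real.log_le_log (by linarith) (by linarith)
    have hL4c : 4 * c / δ ≤ L := by simp only [hLdef]; linarith
    have hcL : c * t ^ 2 / L ≤ δ / 4 := by
      have h1 : c * t ^ 2 ≤ c := mul_le_of_le_one_right hc.le ht2
      have h2 : c * t ^ 2 / L ≤ c / L := by gcongr
      have h3 : δ * (4 * c / δ) = 4 * c := by field_simp
      have h4 : 4 * c ≤ δ * L := by
        linarith [mul_le_mul_of_nonneg_left hL4c hδ.le, h3]
      have h5 : c / L ≤ δ / 4 := by
        rw [div_le_div_iff₀ hLpos (by norm_num : (0:ℝ) < 4)]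
        linarith
      linarith
    have ht₀t : s₀ / (1 + s₀) ≤ t := by
      rw [htdef, div_le_div_iff₀ hs₀pos hs1]
      linarith [hs₀s]
    have h1 : a' + b - 2 * b * t ≤ -δ / 2 := by
      linarith [mul_le_mul_of_nonneg_left ht₀t hb.le, hkey]
    have h2 : t * (a' + b - 2 * b * t) ≤ -δ / 4 := by
      have h3 : t * (a' + b - 2 * b * t) ≤ t * (-δ / 2) :=
        mul_le_mul_of_nonneg_left h1 ht0
      have h4 : 0 ≤ (t - 1 / 2) * δ :=
        mul_nonneg (by linarith [le_trans ht₀half ht₀t]) hδ.le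
      nlinarith [h3, h4]
    have hbracket : (a' + b) * t - 2 * b * t ^ 2 + c * t ^ 2 / L ≤ 0 := by
      linarith [h2, hcL]
    have hau : a * u + b * u ^ η ≤ (a' + b) * u ^ η := by
      linarith [hbd u hu₀u]
    have hstep : (a * u + b * u ^ η) * t - 2 * b * u ^ η * t ^ 2
        + c * u ^ η * (t ^ 2 / L)
        ≤ u ^ η * ((a' + b) * t - 2 * b * t ^ 2 + c * t ^ 2 / L) := by
      have h7 : u ^ η * ((a' + b) * t - 2 * b * t ^ 2 + c * t ^ 2 / L)
          = (a' + b) * u ^ η * t - 2 * b * u ^ η * t ^ 2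
            + c * u ^ η * (t ^ 2 / L) := by ring
      rw [h7]
      have h8 := mul_le_mul_of_nonneg_right hau ht0
      linarith [h8]
    have hfin : u ^ η * ((a' + b) * t - 2 * b * t ^ 2 + c * t ^ 2 / L) ≤ 0 :=
      mul_nonpos_of_nonneg_of_nonpos huη.le hbracket
    linarith [hstep, hfin, mul_pos ha (lt_of_lt_of_le one_pos hu₁1),
      mul_pos (by linarith : (0:ℝ) < b + c) hu₁η]
  · push_neg at hbig
    have huu₁ : u ≤ u₁ := by
      by_cases h' : u₀ ≤ u
      · have hys : y ^ 2 < s₀ := hbig h'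
        have hysqrt : y ≤ Real.sqrt s₀ := by
          calc y = Real.sqrt (y ^ 2) := (Real.sqrt_sq hy).symm
            _ ≤ Real.sqrt s₀ := Real.sqrt_le_sqrt hys.le
        calc u = 1 + x := hudef
          _ ≤ 1 + M * y := by linarith
          _ ≤ 1 + M * Real.sqrt s₀ := by
              linarith [mul_le_mul_of_nonneg_left hysqrt hM.le]
          _ ≤ u₁ := by rw [hu₁def]; exact le_max_right _ _
      · push_neg at h'
        rw [hu₁def]; exact le_trans h'.le (le_max_left _ _)
    have huηle : u ^ η ≤ u₁ ^ η := Real.rpow_le_rpow (by linarith) huu₁ (by linarith)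
    have hcoef : 0 ≤ a * u + b * u ^ η := by
      linarith [mul_pos ha hupos, mul_pos hb huη]
    have ht2L : t ^ 2 / L ≤ 1 := by
      rw [div_le_one hLpos]; linarith
    have t1 : (a * u + b * u ^ η) * t ≤ a * u₁ + b * u₁ ^ η := by
      linarith [mul_le_mul_of_nonneg_left ht1 hcoef,
        mul_le_mul_of_nonneg_left huu₁ ha.le,
        mul_le_mul_of_nonneg_left huηle hb.le]
    have t2 : 0 ≤ 2 * b * u ^ η * t ^ 2 :=
      mul_nonneg (mul_nonneg (by linarith) huη.le) (sq_nonneg t)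
    have t3 : c * u ^ η * (t ^ 2 / L) ≤ c * u₁ ^ η := by
      have hcu : 0 ≤ c * u ^ η := mul_nonneg hc.le huη.le
      calc c * u ^ η * (t ^ 2 / L) ≤ c * u ^ η * 1 :=
            mul_le_mul_of_nonneg_left ht2L hcu
        _ = c * u ^ η := by ring
        _ ≤ c * u₁ ^ η := mul_le_mul_of_nonneg_left huηle hc.le
    linarith [t1, t2, t3]
end

section
/- Let c, M > 0 and suppose that either (η > 1 and a, b > 0) or (η = 1 and b > a > 0). Then the function φ(x) = a(1+x) + b(1+x)^η − 2b(1+x)^η·(x/M)⁴/(1 + (x/M)²)² + c(1+x)^η/(1 + log(1 + (x/M)²)) tends to −∞ as x → ∞. -/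
open Filter Real

/-- Key limit computation in the proof of the "log lemma" (Lemma 5.1):
the function φ tends to −∞ as x → ∞. -/
theorem log_lemma_limit (a b c M η : ℝ) (hc : 0 < c) (hM : 0 < M)
    (h : (1 < η ∧ 0 < a ∧ 0 < b) ∨ (η = 1 ∧ 0 < a ∧ a < b)) :
    Filter.Tendsto (fun x : ℝ =>
        a * (1 + x) + b * (1 + x) ^ η
          - 2 * b * (1 + x) ^ η * (x / M) ^ 4 / (1 + (x / M) ^ 2) ^ 2
          + c * (1 + x) ^ η / (1 + Real.log (1 + (x / M) ^ 2)))
      Filter.atTop Filter.atBot := by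
  have hb : 0 < b := by rcases h with ⟨_, _, hb⟩ | ⟨_, ha, hab⟩ <;> linarith
  have hη : 0 < η := by rcases h with ⟨h1, _⟩ | ⟨h1, _⟩ <;> linarith
  set A : ℝ := if η = 1 then a else 0 with hA
  have hAb : A - b < 0 := by
    rcases h with ⟨h1, _, _⟩ | ⟨h1, ha, hab⟩
    · simp only [hA, if_neg (by linarith : ¬ η = 1)]; linarith
    · simp only [hA, if_pos h1]; linarith
  -- basic tendsto facts
  have h1x : Tendsto (fun x : ℝ => 1 + x) atTop atTop :=
    tendsto_atTop_add_const_left _ _ tendsto_id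
  have htM : Tendsto (fun x : ℝ => x / M) atTop atTop :=
    Tendsto.atTop_div_const hM tendsto_id
  have ht2 : Tendsto (fun x : ℝ => (x / M) ^ 2) atTop atTop :=
    (tendsto_pow_atTop two_ne_zero).comp htM
  have h1t2 : Tendsto (fun x : ℝ => 1 + (x / M) ^ 2) atTop atTop :=
    tendsto_atTop_add_const_left _ _ ht2
  have hinv : Tendsto (fun x : ℝ => (1 + (x / M) ^ 2)⁻¹) atTop (nhds 0) :=
    h1t2.inv_tendsto_atTop
  -- the quartic ratio tends to 1
  have hT : Tendsto (fun x : ℝ => (x / M) ^ 4 / (1 + (x / M) ^ 2) ^ 2) atTop (nhds 1) := by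
    have h1 : Tendsto (fun x : ℝ => (1 - (1 + (x / M) ^ 2)⁻¹) ^ 2) atTop (nhds 1) := by
      have := ((tendsto_const_nhds (x := (1:ℝ))).sub hinv).pow 2
      simpa using this
    refine h1.congr' ?_
    filter_upwards [eventually_gt_atTop (0 : ℝ)] with x hx
    have hpos : (0:ℝ) < 1 + (x / M) ^ 2 := by positivity
    field_simp
    ring
  -- the log term tends to 0
  have hlog : Tendsto (fun x : ℝ => c / (1 + Real.log (1 + (x / M) ^ 2))) atTop (nhds 0) := by
    have hd : Tendsto (fun x : ℝ => 1 + Real.log (1 + (x / M) ^ 2)) atTop atTop :=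
      tendsto_atTop_add_const_left _ _ (Real.tendsto_log_atTop.comp h1t2)
    simpa using (tendsto_const_nhds (x := c)).div_atTop hd
  -- the prefactor term tends to A
  have hpre : Tendsto (fun x : ℝ => a * (1 + x) ^ (1 - η)) atTop (nhds A) := by
    rcases eq_or_ne η 1 with h1 | h1
    · simp only [hA, if_pos h1, h1, sub_self]
      simpa [Real.rpow_zero] using tendsto_const_nhds (x := a) (f := atTop (α := ℝ))
    · simp only [hA, if_neg h1]
      have hη1 : 1 < η := by
        rcases h with ⟨h2, _⟩ | ⟨h2, _⟩
        · exact h2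
        · exact absurd h2 h1
      have : Tendsto (fun x : ℝ => (1 + x) ^ (-(η - 1))) atTop (nhds 0) :=
        (tendsto_rpow_neg_atTop (by linarith)).comp h1x
      have := this.const_mul a
      simpa [neg_sub] using this
  -- combined: inner function tends to A - b < 0
  have hg : Tendsto (fun x : ℝ =>
      a * (1 + x) ^ (1 - η) + (b - 2 * b * ((x / M) ^ 4 / (1 + (x / M) ^ 2) ^ 2))
        + c / (1 + Real.log (1 + (x / M) ^ 2))) atTop (nhds (A - b)) := by
    have hbT : Tendsto (fun x : ℝ => b - 2 * b * ((x / M) ^ 4 / (1 + (x / M) ^ 2) ^ 2))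
        atTop (nhds (-b)) := by
      have := (tendsto_const_nhds (x := b)).sub ((hT.const_mul (2 * b)))
      convert this using 2
      ring
    have := (hpre.add hbT).add hlog
    simpa [sub_eq_add_neg] using this
  have hpow : Tendsto (fun x : ℝ => (1 + x) ^ η) atTop atTop :=
    (tendsto_rpow_atTop hη).comp h1x
  have := hpow.atTop_mul_neg hAb hg
  refine this.congr' ?_
  filter_upwards [eventually_gt_atTop (0 : ℝ)] with x hx
  have h1xp : (0:ℝ) < 1 + x := by linarith
  have hr : (1 + x) ^ η * ((1 + x) ^ (1 - η)) = 1 + x := by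
    rw [← Real.rpow_add h1xp]; norm_num
  have expand : (1 + x) ^ η * (a * (1 + x) ^ (1 - η)
      + (b - 2 * b * ((x / M) ^ 4 / (1 + (x / M) ^ 2) ^ 2))
      + c / (1 + Real.log (1 + (x / M) ^ 2)))
      = a * ((1 + x) ^ η * (1 + x) ^ (1 - η)) + b * (1 + x) ^ η
        - 2 * b * (1 + x) ^ η * (x / M) ^ 4 / (1 + (x / M) ^ 2) ^ 2
        + c * (1 + x) ^ η / (1 + Real.log (1 + (x / M) ^ 2)) := by ring
  rw [expand, hr]
end

section
/- Let v : ℝ → ℝ be 2π-periodic and continuously differentiable. Then for every x ∈ ℝ, (1/(2 sinh π)) ∫₀^{2π} cosh((x−y) − 2π⌊(x−y)/(2π)⌋ − π) · (v(y)² + v'(y)²/2) dy ≥ v(x)²/2. -/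
open Real MeasureTheory intervalIntegral

lemma green_key_ineq (v : ℝ → ℝ) (hv : ContDiff ℝ 1 v) (ε a b : ℝ) (hε : ε ^ 2 = 1)
    (hab : a ≤ b) :
    ε * (Real.exp (ε * b) * (v b) ^ 2 / 2) - ε * (Real.exp (ε * a) * (v a) ^ 2 / 2)
      ≤ ∫ y in a..b, Real.exp (ε * y) * ((v y) ^ 2 + (deriv v y) ^ 2 / 2) := by
  have hvc : Continuous v := hv.continuous
  have hv' : Continuous (deriv v) := hv.continuous_deriv le_rfl
  have hdv : ∀ y, HasDerivAt v (deriv v y) y := fun y =>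
    ((hv.differentiable one_ne_zero) y).hasDerivAt
  set g : ℝ → ℝ := fun y => ε * (Real.exp (ε * y) * (v y) ^ 2 / 2) with hgdef
  have hg : ∀ y, HasDerivAt g (Real.exp (ε * y) * ((v y) ^ 2 / 2 + ε * (v y * deriv v y))) y := by
    intro y
    have h1 : HasDerivAt (fun y : ℝ => Real.exp (ε * y)) (ε * Real.exp (ε * y)) y := by
      simpa [mul_comm, Function.comp_def] using (Real.hasDerivAt_exp (ε * y)).comp y
        ((hasDerivAt_id y).const_mul ε)
    have h2 : HasDerivAt (fun y => (v y) ^ 2) (2 * v y * deriv v y) y := by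
      simpa [Pi.pow_def] using ((hdv y).pow 2)
    have h3 := ((h1.mul h2).div_const 2).const_mul ε
    refine h3.congr_deriv ?_
    linear_combination (Real.exp (ε * y) * v y ^ 2 / 2) * hε
  have hgcont : Continuous (fun y => Real.exp (ε * y) * ((v y) ^ 2 / 2 + ε * (v y * deriv v y))) := by
    continuity
  have hFTC : ∫ y in a..b, Real.exp (ε * y) * ((v y) ^ 2 / 2 + ε * (v y * deriv v y)) = g b - g a :=
    intervalIntegral.integral_eq_sub_of_hasDerivAt (fun y _ => hg y)
      (hgcont.intervalIntegrable a b)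
  have hFint : IntervalIntegrable (fun y => Real.exp (ε * y) * ((v y) ^ 2 + (deriv v y) ^ 2 / 2))
      volume a b := by
    apply Continuous.intervalIntegrable; continuity
  have hGint : IntervalIntegrable (fun y => Real.exp (ε * y) * ((v y) ^ 2 / 2 + ε * (v y * deriv v y)))
      volume a b := hgcont.intervalIntegrable a b
  have hmono : (∫ y in a..b, Real.exp (ε * y) * ((v y) ^ 2 / 2 + ε * (v y * deriv v y)))
      ≤ ∫ y in a..b, Real.exp (ε * y) * ((v y) ^ 2 + (deriv v y) ^ 2 / 2) := by
    apply intervalIntegral.integral_mono_on hab hGint hFint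
    intro y _
    have hexp := Real.exp_pos (ε * y)
    have h := mul_nonneg hexp.le (sq_nonneg (v y - ε * deriv v y))
    have heq : Real.exp (ε * y) * ((v y) ^ 2 + (deriv v y) ^ 2 / 2)
        - Real.exp (ε * y) * ((v y) ^ 2 / 2 + ε * (v y * deriv v y))
        = Real.exp (ε * y) * (v y - ε * deriv v y) ^ 2 / 2 := by
      linear_combination (-(Real.exp (ε * y) * (deriv v y) ^ 2 / 2)) * hε
    linarith
  calc ε * (Real.exp (ε * b) * (v b) ^ 2 / 2) - ε * (Real.exp (ε * a) * (v a) ^ 2 / 2)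
      = g b - g a := by simp [hgdef]
    _ = _ := hFTC.symm
    _ ≤ _ := hmono
lemma green_core (v : ℝ → ℝ) (hv : ContDiff ℝ 1 v)
    (hper : ∀ x, v (x + 2 * π) = v x) (x : ℝ) (hx0 : 0 ≤ x) (hx2 : x < 2 * π) :
    (1 / (2 * Real.sinh π)) *
      (∫ y in (0 : ℝ)..(2 * π),
        Real.cosh ((x - y) - 2 * π * (⌊(x - y) / (2 * π)⌋ : ℤ) - π) *
          ((v y) ^ 2 + (deriv v y) ^ 2 / 2)) ≥ (v x) ^ 2 / 2 := by
  have hπ : (0:ℝ) < π := Real.pi_pos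
  have h2π : (0:ℝ) < 2 * π := by linarith
  have hvc : Continuous v := hv.continuous
  have hv' : Continuous (deriv v) := hv.continuous_deriv le_rfl
  set f : ℝ → ℝ := fun y => (v y) ^ 2 + (deriv v y) ^ 2 / 2 with hf
  have hfc : Continuous f := by fun_prop
  set K : ℝ → ℝ := fun y =>
    Real.cosh ((x - y) - 2 * π * (⌊(x - y) / (2 * π)⌋ : ℤ) - π) * f y with hK
  -- floor values
  have hfloor1 : ∀ y ∈ Set.uIcc (0:ℝ) x, K y = Real.cosh (x - y - π) * f y := by
    intro y hy
    rw [Set.uIcc_of_le hx0] at hy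
    have h1 : (0:ℝ) ≤ (x - y) / (2 * π) := div_nonneg (by linarith [hy.2]) h2π.le
    have h2 : (x - y) / (2 * π) < 1 := (div_lt_one h2π).2 (by linarith [hy.1])
    have : ⌊(x - y) / (2 * π)⌋ = 0 := Int.floor_eq_zero_iff.2 ⟨h1, h2⟩
    simp only [hK, this]; norm_num
  have hfloor2 : ∀ y ∈ Set.uIcc x (2 * π), K y = Real.cosh (x - y + π) * f y := by
    intro y hy
    rw [Set.uIcc_of_le hx2.le] at hy
    rcases eq_or_lt_of_le hy.1 with heq | hlt
    · simp only [hK, ← heq, sub_self, zero_div, Int.floor_zero, Int.cast_zero, mul_zero,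
        zero_sub, zero_add, Real.cosh_neg]
    · have h1 : ((-1 : ℤ) : ℝ) ≤ (x - y) / (2 * π) := by
        rw [le_div_iff₀ h2π]
        push_cast
        linarith [hy.2]
      have h2 : (x - y) / (2 * π) < 0 := div_neg_of_neg_of_pos (by linarith) h2π
      have hfl : ⌊(x - y) / (2 * π)⌋ = -1 := (Int.floor_eq_iff).2 ⟨h1, by push_cast; linarith⟩
      simp only [hK, hfl]
      push_cast
      ring_nf
  -- integrability
  have hc1 : Continuous (fun y => Real.cosh (x - y - π) * f y) := by fun_prop
  have hc2 : Continuous (fun y => Real.cosh (x - y + π) * f y) := by fun_prop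
  have hKint1 : IntervalIntegrable K volume 0 x := by
    rw [intervalIntegrable_iff]
    exact (intervalIntegrable_iff.1 (hc1.intervalIntegrable 0 x)).congr_fun
      (fun y hy => (hfloor1 y (Set.uIoc_subset_uIcc hy)).symm) measurableSet_uIoc
  have hKint2 : IntervalIntegrable K volume x (2 * π) := by
    rw [intervalIntegrable_iff]
    exact (intervalIntegrable_iff.1 (hc2.intervalIntegrable x (2 * π))).congr_fun
      (fun y hy => (hfloor2 y (Set.uIoc_subset_uIcc hy)).symm) measurableSet_uIoc
  have hsplit : ∫ y in (0:ℝ)..(2 * π), K y = (∫ y in (0:ℝ)..x, K y) + ∫ y in x..(2 * π), K y :=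
    (integral_add_adjacent_intervals hKint1 hKint2).symm
  have e1 : ∫ y in (0:ℝ)..x, K y = ∫ y in (0:ℝ)..x, Real.cosh (x - y - π) * f y :=
    intervalIntegral.integral_congr hfloor1
  have e2 : ∫ y in x..(2 * π), K y = ∫ y in x..(2 * π), Real.cosh (x - y + π) * f y :=
    intervalIntegral.integral_congr hfloor2
  -- decompose cosh
  have hint_neg : ∀ a b : ℝ, IntervalIntegrable (fun y => Real.exp (-1 * y) * f y) volume a b :=
    fun a b => (by fun_prop : Continuous fun y => Real.exp (-1 * y) * f y).intervalIntegrable a b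
  have hint_pos : ∀ a b : ℝ, IntervalIntegrable (fun y => Real.exp (1 * y) * f y) volume a b :=
    fun a b => (by fun_prop : Continuous fun y => Real.exp (1 * y) * f y).intervalIntegrable a b
  have d1 : ∫ y in (0:ℝ)..x, Real.cosh (x - y - π) * f y
      = Real.exp (x - π) / 2 * (∫ y in (0:ℝ)..x, Real.exp (-1 * y) * f y)
        + Real.exp (π - x) / 2 * (∫ y in (0:ℝ)..x, Real.exp (1 * y) * f y) := by
    rw [← intervalIntegral.integral_const_mul, ← intervalIntegral.integral_const_mul,
      ← intervalIntegral.integral_add ((hint_neg 0 x).const_mul _) ((hint_pos 0 x).const_mul _)]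
    apply intervalIntegral.integral_congr
    intro y _
    have p1 : Real.exp (x - y - π) = Real.exp (x - π) * Real.exp (-1 * y) := by
      rw [← Real.exp_add]; congr 1; ring
    have p2 : Real.exp (-(x - y - π)) = Real.exp (π - x) * Real.exp (1 * y) := by
      rw [← Real.exp_add]; congr 1; ring
    simp only [Real.cosh_eq, p1, p2]
    ring
  have d2 : ∫ y in x..(2 * π), Real.cosh (x - y + π) * f y
      = Real.exp (x + π) / 2 * (∫ y in x..(2 * π), Real.exp (-1 * y) * f y)
        + Real.exp (-x - π) / 2 * (∫ y in x..(2 * π), Real.exp (1 * y) * f y) := by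
    rw [← intervalIntegral.integral_const_mul, ← intervalIntegral.integral_const_mul,
      ← intervalIntegral.integral_add ((hint_neg x (2 * π)).const_mul _)
        ((hint_pos x (2 * π)).const_mul _)]
    apply intervalIntegral.integral_congr
    intro y _
    have p1 : Real.exp (x - y + π) = Real.exp (x + π) * Real.exp (-1 * y) := by
      rw [← Real.exp_add]; congr 1; ring
    have p2 : Real.exp (-(x - y + π)) = Real.exp (-x - π) * Real.exp (1 * y) := by
      rw [← Real.exp_add]; congr 1; ring
    simp only [Real.cosh_eq, p1, p2]
    ring
  -- the four energy estimates
  have hI1 : (1:ℝ) * (Real.exp (1 * x) * (v x) ^ 2 / 2) - 1 * (Real.exp (1 * 0) * (v 0) ^ 2 / 2)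
      ≤ ∫ y in (0:ℝ)..x, Real.exp (1 * y) * f y :=
    green_key_ineq v hv 1 0 x (by norm_num) hx0
  have hI2 : (-1:ℝ) * (Real.exp (-1 * x) * (v x) ^ 2 / 2) - (-1) * (Real.exp (-1 * 0) * (v 0) ^ 2 / 2)
      ≤ ∫ y in (0:ℝ)..x, Real.exp (-1 * y) * f y :=
    green_key_ineq v hv (-1) 0 x (by norm_num) hx0
  have hJ1 : (1:ℝ) * (Real.exp (1 * (2 * π)) * (v (2 * π)) ^ 2 / 2)
        - 1 * (Real.exp (1 * x) * (v x) ^ 2 / 2)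
      ≤ ∫ y in x..(2 * π), Real.exp (1 * y) * f y :=
    green_key_ineq v hv 1 x (2 * π) (by norm_num) hx2.le
  have hJ2 : (-1:ℝ) * (Real.exp (-1 * (2 * π)) * (v (2 * π)) ^ 2 / 2)
        - (-1) * (Real.exp (-1 * x) * (v x) ^ 2 / 2)
      ≤ ∫ y in x..(2 * π), Real.exp (-1 * y) * f y :=
    green_key_ineq v hv (-1) x (2 * π) (by norm_num) hx2.le
  have hv20 : v (2 * π) = v 0 := by simpa using hper 0
  rw [hv20] at hJ1 hJ2
  -- multiply by the positive coefficients
  have m1 := mul_le_mul_of_nonneg_left hI1 (by positivity : (0:ℝ) ≤ Real.exp (π - x) / 2)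
  have m2 := mul_le_mul_of_nonneg_left hI2 (by positivity : (0:ℝ) ≤ Real.exp (x - π) / 2)
  have m3 := mul_le_mul_of_nonneg_left hJ1 (by positivity : (0:ℝ) ≤ Real.exp (-x - π) / 2)
  have m4 := mul_le_mul_of_nonneg_left hJ2 (by positivity : (0:ℝ) ≤ Real.exp (x + π) / 2)
  -- the exponential identity
  have hiden : Real.exp (x - π) / 2 * ((-1:ℝ) * (Real.exp (-1 * x) * (v x) ^ 2 / 2)
          - (-1) * (Real.exp (-1 * 0) * (v 0) ^ 2 / 2))
      + Real.exp (π - x) / 2 * ((1:ℝ) * (Real.exp (1 * x) * (v x) ^ 2 / 2)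
          - 1 * (Real.exp (1 * 0) * (v 0) ^ 2 / 2))
      + (Real.exp (x + π) / 2 * ((-1:ℝ) * (Real.exp (-1 * (2 * π)) * (v 0) ^ 2 / 2)
          - (-1) * (Real.exp (-1 * x) * (v x) ^ 2 / 2))
        + Real.exp (-x - π) / 2 * ((1:ℝ) * (Real.exp (1 * (2 * π)) * (v 0) ^ 2 / 2)
          - 1 * (Real.exp (1 * x) * (v x) ^ 2 / 2)))
      = (v x) ^ 2 / 2 * (2 * Real.sinh π) := by
    have q1 : Real.exp (π - x) = Real.exp π / Real.exp x := Real.exp_sub π x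
    have q2 : Real.exp (x - π) = Real.exp x / Real.exp π := Real.exp_sub x π
    have q3 : Real.exp (x + π) = Real.exp x * Real.exp π := Real.exp_add x π
    have q4 : Real.exp (-x - π) = ((Real.exp x) * (Real.exp π))⁻¹ := by
      rw [show -x - π = -(x + π) by ring, Real.exp_neg, Real.exp_add]
    have q5 : Real.exp (1 * x) = Real.exp x := by norm_num
    have q6 : Real.exp (-1 * x) = (Real.exp x)⁻¹ := by
      rw [show (-1:ℝ) * x = -x by ring, Real.exp_neg]
    have q7 : Real.exp ((1:ℝ) * 0) = 1 := by norm_num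
    have q8 : Real.exp ((-1:ℝ) * 0) = 1 := by norm_num
    have q9 : Real.exp ((1:ℝ) * (2 * π)) = Real.exp π * Real.exp π := by
      rw [show (1:ℝ) * (2 * π) = π + π by ring, Real.exp_add]
    have q10 : Real.exp ((-1:ℝ) * (2 * π)) = ((Real.exp π) * (Real.exp π))⁻¹ := by
      rw [show (-1:ℝ) * (2 * π) = -(π + π) by ring, Real.exp_neg, Real.exp_add]
    have q11 : Real.sinh π = (Real.exp π - (Real.exp π)⁻¹) / 2 := by
      rw [Real.sinh_eq, Real.exp_neg]
    rw [q1, q2, q3, q4, q5, q6, q7, q8, q9, q10, q11]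
    have hx0' : Real.exp x ≠ 0 := Real.exp_ne_zero x
    have hp0' : Real.exp π ≠ 0 := Real.exp_ne_zero π
    field_simp
    ring
  -- conclude
  have hs : (0:ℝ) < Real.sinh π := Real.sinh_pos_iff.2 hπ
  rw [ge_iff_le, hsplit, e1, e2, d1, d2, one_div_mul_eq_div, le_div_iff₀ (by positivity)]
  linarith [m1, m2, m3, m4, hiden]

/-- The convolution inequality G*(v² + v_x²/2) ≥ v²/2 (equation (6.12)), where
G(x) = cosh(x − 2π⌊x/(2π)⌋ − π)/(2 sinh π) is the Green's function of 1 − ∂²ₓₓ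
on the torus 𝕋 = ℝ/2πℤ, for a C¹ 2π-periodic function v. -/
theorem green_convolution_lower_bound (v : ℝ → ℝ) (hv : ContDiff ℝ 1 v)
    (hper : ∀ x, v (x + 2 * π) = v x) :
    ∀ x : ℝ, (1 / (2 * Real.sinh π)) *
      (∫ y in (0 : ℝ)..(2 * π),
        Real.cosh ((x - y) - 2 * π * (⌊(x - y) / (2 * π)⌋ : ℤ) - π) *
          ((v y) ^ 2 + (deriv v y) ^ 2 / 2)) ≥ (v x) ^ 2 / 2 := by
  intro x
  have hπ : (0:ℝ) < π := Real.pi_pos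
  have h2π : (0:ℝ) < 2 * π := by linarith
  have hp : Function.Periodic v (2 * π) := hper
  set n : ℤ := ⌊x / (2 * π)⌋ with hn
  set x' : ℝ := x - n * (2 * π) with hx'
  have hx'0 : 0 ≤ x' := by
    rw [hx']
    have : (n : ℝ) ≤ x / (2 * π) := Int.floor_le _
    nlinarith [(mul_le_mul_of_nonneg_right this h2π.le), div_mul_cancel₀ x h2π.ne']
  have hx'2 : x' < 2 * π := by
    rw [hx']
    have : x / (2 * π) < n + 1 := Int.lt_floor_add_one _
    nlinarith [(mul_lt_mul_of_pos_right this h2π), div_mul_cancel₀ x h2π.ne']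
  have hvx : v x' = v x := hp.sub_int_mul_eq n
  have hkernel : ∀ y : ℝ,
      (x - y) - 2 * π * (⌊(x - y) / (2 * π)⌋ : ℤ) = (x' - y) - 2 * π * (⌊(x' - y) / (2 * π)⌋ : ℤ) := by
    intro y
    have harg : (x - y) / (2 * π) = (x' - y) / (2 * π) + n := by
      rw [hx']; field_simp; ring
    have hfl : ⌊(x - y) / (2 * π)⌋ = ⌊(x' - y) / (2 * π)⌋ + n := by
      rw [harg, Int.floor_add_intCast]
    rw [hfl, hx']
    push_cast
    ring
  have hres := green_core v hv hper x' hx'0 hx'2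
  rw [hvx] at hres
  have hint : (∫ y in (0 : ℝ)..(2 * π),
        Real.cosh ((x - y) - 2 * π * (⌊(x - y) / (2 * π)⌋ : ℤ) - π) *
          ((v y) ^ 2 + (deriv v y) ^ 2 / 2))
      = ∫ y in (0 : ℝ)..(2 * π),
        Real.cosh ((x' - y) - 2 * π * (⌊(x' - y) / (2 * π)⌋ : ℤ) - π) *
          ((v y) ^ 2 + (deriv v y) ^ 2 / 2) := by
    apply intervalIntegral.integral_congr
    intro y _
    simp only []
    rw [hkernel y]
  rw [hint]
  exact hres
end

section
/- Let v : ℝ → ℝ be 2π-periodic and twice continuously differentiable, and set V(y) = v(y) − v''(y). Then for every x ∈ ℝ: v(x) + v'(x) = (1/(2 sinh π)) ∫₀^{2π} exp(x − y − 2π⌊(x−y)/(2π)⌋ − π) V(y) dy, and v(x) − v'(x) = (1/(2 sinh π)) ∫₀^{2π} exp(y − x + 2π⌊(x−y)/(2π)⌋ + π) V(y) dy. -/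
open Real MeasureTheory intervalIntegral

/-- The kernel representation formulas (6.6)–(6.7) for v ± v_x in terms of the
momentum variable V = v − v_xx, for a C² 2π-periodic function v on the torus. -/
theorem kernel_representation_v_pm_vx (v : ℝ → ℝ) (hv : ContDiff ℝ 2 v)
    (hper : ∀ x, v (x + 2 * π) = v x) (V : ℝ → ℝ)
    (hV : ∀ y, V y = v y - iteratedDeriv 2 v y) :
    ∀ x : ℝ,
      (v x + deriv v x = (1 / (2 * Real.sinh π)) *
        ∫ y in (0 : ℝ)..(2 * π),
          Real.exp (x - y - 2 * π * (⌊(x - y) / (2 * π)⌋ : ℤ) - π) * V y) ∧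
      (v x - deriv v x = (1 / (2 * Real.sinh π)) *
        ∫ y in (0 : ℝ)..(2 * π),
          Real.exp (y - x + 2 * π * (⌊(x - y) / (2 * π)⌋ : ℤ) + π) * V y) := by
  intro x
  have hπ : (0:ℝ) < 2 * π := by positivity
  have hv1 : ContDiff ℝ 1 (deriv v) := by simpa using hv.iterate_deriv' 1 1
  have hvd : Differentiable ℝ v := hv.differentiable (by norm_num)
  have hv1d : Differentiable ℝ (deriv v) := hv1.differentiable (by norm_num)
  have hit : iteratedDeriv 2 v = deriv (deriv v) := by
    rw [iteratedDeriv_succ, iteratedDeriv_one]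
  have hVeq : V = fun y => v y - deriv (deriv v) y := by
    funext y; rw [hV, hit]
  have hVcont : Continuous V := by
    rw [hVeq]; exact hv.continuous.sub (hv1.continuous_deriv le_rfl)
  -- periodicity of deriv v
  have hperd : ∀ y, deriv v (y + 2 * π) = deriv v y := by
    intro y
    have h1 : (fun t => v (t + 2 * π)) = v := funext hper
    calc deriv v (y + 2 * π) = deriv (fun t => v (t + 2 * π)) y := by
          rw [deriv_comp_add_const]
      _ = deriv v y := by rw [h1]
  have hperdd : ∀ y, deriv (deriv v) (y + 2 * π) = deriv (deriv v) y := by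
    intro y
    have h1 : (fun t => deriv v (t + 2 * π)) = deriv v := funext hperd
    calc deriv (deriv v) (y + 2 * π) = deriv (fun t => deriv v (t + 2 * π)) y := by
          rw [deriv_comp_add_const]
      _ = deriv (deriv v) y := by rw [h1]
  have hpV : Function.Periodic V (2 * π) := by
    intro y; rw [hVeq]; simp only [hper, hperdd]
  -- values at x - 2π
  have hvx : v (x - 2 * π) = v x := by
    have := hper (x - 2 * π); rw [sub_add_cancel] at this; exact this.symm
  have hdx : deriv v (x - 2 * π) = deriv v x := by
    have := hperd (x - 2 * π); rw [sub_add_cancel] at this; exact this.symm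
  -- floor facts
  have hfloor_shift : ∀ y : ℝ, (⌊(x - (y + 2 * π)) / (2 * π)⌋ : ℤ)
      = ⌊(x - y) / (2 * π)⌋ - 1 := by
    intro y
    have h1 : (x - (y + 2 * π)) / (2 * π) = (x - y) / (2 * π) - 1 := by
      field_simp
      ring
    rw [h1]
    exact_mod_cast Int.floor_sub_intCast ((x - y) / (2 * π)) 1
  have hfloor_zero : ∀ y ∈ Set.Ioc (x - 2 * π) x, (⌊(x - y) / (2 * π)⌋ : ℤ) = 0 := by
    intro y hy
    obtain ⟨hy1, hy2⟩ := hy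
    refine Int.floor_eq_zero_iff.mpr ⟨div_nonneg (by linarith) hπ.le, ?_⟩
    rw [div_lt_one hπ]; linarith
  have hexpne : Real.exp (-π) < Real.exp π := Real.exp_lt_exp.mpr (by linarith [pi_pos])
  have hsinh : 2 * Real.sinh π = Real.exp π - Real.exp (-π) := by
    rw [Real.sinh_eq]; ring
  constructor
  · -- first formula
    set f : ℝ → ℝ := fun y =>
      Real.exp (x - y - 2 * π * (⌊(x - y) / (2 * π)⌋ : ℤ) - π) * V y with hf
    have hpf : Function.Periodic f (2 * π) := by
      intro y
      simp only [hf]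
      rw [hpV y, hfloor_shift y]
      congr 1
      push_cast
      ring_nf
    have shift : (∫ y in (0:ℝ)..(2 * π), f y) = ∫ y in (x - 2 * π)..x, f y := by
      have h := hpf.intervalIntegral_add_eq (x - 2 * π) 0
      rw [sub_add_cancel, zero_add] at h
      exact h.symm
    have congr1 : (∫ y in (x - 2 * π)..x, f y)
        = ∫ y in (x - 2 * π)..x, Real.exp (x - y - π) * V y := by
      rw [intervalIntegral.integral_of_le (by linarith),
        intervalIntegral.integral_of_le (by linarith)]
      apply setIntegral_congr_fun measurableSet_Ioc
      intro y hy
      simp only [hf, hfloor_zero y hy]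
      norm_num
    have hderiv : ∀ t ∈ Set.uIcc (x - 2 * π) x,
        HasDerivAt (fun y => -(Real.exp (x - y - π) * (v y + deriv v y)))
          (Real.exp (x - t - π) * V t) t := by
      intro t _
      have hinner : HasDerivAt (fun y : ℝ => x - y - π) (-1) t := by
        simpa using (((hasDerivAt_id t).const_sub x).sub_const π)
      have he : HasDerivAt (fun y => Real.exp (x - y - π)) (-Real.exp (x - t - π)) t := by
        have := (Real.hasDerivAt_exp (x - t - π)).comp t hinner
        simpa [Function.comp_def] using this
      have hw : HasDerivAt (fun y => v y + deriv v y)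
          (deriv v t + deriv (deriv v) t) t :=
        ((hvd t).hasDerivAt).add ((hv1d t).hasDerivAt)
      have hm := (he.mul hw).neg
      exact hm.congr_deriv (by rw [hVeq]; ring)
    have hint : IntervalIntegrable (fun y => Real.exp (x - y - π) * V y)
        volume (x - 2 * π) x :=
      (((Real.continuous_exp.comp (by continuity))).mul hVcont).intervalIntegrable _ _
    have ftc := intervalIntegral.integral_eq_sub_of_hasDerivAt hderiv hint
    have hval : (∫ y in (x - 2 * π)..x, Real.exp (x - y - π) * V y)
        = (Real.exp π - Real.exp (-π)) * (v x + deriv v x) := by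
      rw [ftc, hvx, hdx]
      have h1 : x - x - π = -π := by ring
      have h2 : x - (x - 2 * π) - π = π := by ring
      rw [h1, h2]; ring
    rw [shift, congr1, hval, ← hsinh]
    have hs : Real.sinh π ≠ 0 := ne_of_gt (by rw [Real.sinh_eq]; linarith)
    field_simp
  · -- second formula
    set f : ℝ → ℝ := fun y =>
      Real.exp (y - x + 2 * π * (⌊(x - y) / (2 * π)⌋ : ℤ) + π) * V y with hf
    have hpf : Function.Periodic f (2 * π) := by
      intro y
      simp only [hf]
      rw [hpV y, hfloor_shift y]
      congr 1
      push_cast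
      ring_nf
    have shift : (∫ y in (0:ℝ)..(2 * π), f y) = ∫ y in (x - 2 * π)..x, f y := by
      have h := hpf.intervalIntegral_add_eq (x - 2 * π) 0
      rw [sub_add_cancel, zero_add] at h
      exact h.symm
    have congr1 : (∫ y in (x - 2 * π)..x, f y)
        = ∫ y in (x - 2 * π)..x, Real.exp (y - x + π) * V y := by
      rw [intervalIntegral.integral_of_le (by linarith),
        intervalIntegral.integral_of_le (by linarith)]
      apply setIntegral_congr_fun measurableSet_Ioc
      intro y hy
      simp only [hf, hfloor_zero y hy]
      norm_num
    have hderiv : ∀ t ∈ Set.uIcc (x - 2 * π) x,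
        HasDerivAt (fun y => Real.exp (y - x + π) * (v y - deriv v y))
          (Real.exp (t - x + π) * V t) t := by
      intro t _
      have hinner : HasDerivAt (fun y : ℝ => y - x + π) 1 t := by
        simpa using (((hasDerivAt_id t).sub_const x).add_const π)
      have he : HasDerivAt (fun y => Real.exp (y - x + π)) (Real.exp (t - x + π)) t := by
        have := (Real.hasDerivAt_exp (t - x + π)).comp t hinner
        simpa [Function.comp_def] using this
      have hw : HasDerivAt (fun y => v y - deriv v y)
          (deriv v t - deriv (deriv v) t) t :=
        ((hvd t).hasDerivAt).sub ((hv1d t).hasDerivAt)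
      have hm := he.mul hw
      exact hm.congr_deriv (by rw [hVeq]; ring)
    have hint : IntervalIntegrable (fun y => Real.exp (y - x + π) * V y)
        volume (x - 2 * π) x :=
      (((Real.continuous_exp.comp (by continuity))).mul hVcont).intervalIntegrable _ _
    have ftc := intervalIntegral.integral_eq_sub_of_hasDerivAt hderiv hint
    have hval : (∫ y in (x - 2 * π)..x, Real.exp (y - x + π) * V y)
        = (Real.exp π - Real.exp (-π)) * (v x - deriv v x) := by
      rw [ftc, hvx, hdx]
      have h1 : x - x + π = π := by ring
      have h2 : x - 2 * π - x + π = -π := by ring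
      rw [h1, h2]; ring
    rw [shift, congr1, hval, ← hsinh]
    have hs : Real.sinh π ≠ 0 := ne_of_gt (by rw [Real.sinh_eq]; linarith)
    field_simp
end

section
/- Let v : ℝ → ℝ be 2π-periodic and twice continuously differentiable. If v(x) − v''(x) > 0 for every x ∈ ℝ, then −v(x) ≤ v'(x) ≤ v(x) for every x ∈ ℝ. If instead v(x) − v''(x) < 0 for every x ∈ ℝ, then v(x) ≤ v'(x) ≤ −v(x) for every x ∈ ℝ. -/
open Real

private lemma momentum_key (v : ℝ → ℝ) (hv : ContDiff ℝ 2 v)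
    (hper : ∀ x, v (x + 2 * π) = v x)
    (hV : ∀ x : ℝ, 0 < v x - iteratedDeriv 2 v x) :
    ∀ x : ℝ, -v x ≤ deriv v x ∧ deriv v x ≤ v x := by
  have hd1 : Differentiable ℝ v := hv.differentiable (by norm_num)
  have hv' : ContDiff ℝ 1 (deriv v) :=
    (contDiff_succ_iff_deriv.mp (by rw [one_add_one_eq_two]; exact hv)).2.2
  have hd2 : Differentiable ℝ (deriv v) := hv'.differentiable (by norm_num)
  have hit : ∀ x, iteratedDeriv 2 v x = deriv (deriv v) x := by
    intro x
    rw [show (2 : ℕ) = 1 + 1 from rfl, iteratedDeriv_succ, iteratedDeriv_one]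
  have hper' : ∀ x, deriv v (x + 2 * π) = deriv v x := by
    intro x
    have h1 : (fun y => v (y + 2 * π)) = v := funext hper
    calc deriv v (x + 2 * π) = deriv (fun y => v (y + 2 * π)) x :=
          (deriv_comp_add_const v (2 * π) x).symm
      _ = deriv v x := by rw [h1]
  intro x
  constructor
  · -- -v ≤ v', i.e. v + v' ≥ 0 : use f y = exp (-y) * (v y + v' y), antitone
    by_contra hc
    push_neg at hc
    set f : ℝ → ℝ := fun y => Real.exp (-y) * (v y + deriv v y) with hf
    have hfd : ∀ y, HasDerivAt f (Real.exp (-y) * (deriv (deriv v) y - v y)) y := by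
      intro y
      have h1 : HasDerivAt (fun y : ℝ => Real.exp (-y)) (Real.exp (-y) * (-1)) y :=
        (hasDerivAt_neg y).exp
      have h2 : HasDerivAt (fun y => v y + deriv v y)
          (deriv v y + deriv (deriv v) y) y :=
        ((hd1 y).hasDerivAt).add ((hd2 y).hasDerivAt)
      have : HasDerivAt (fun y => Real.exp (-y) * (v y + deriv v y)) _ y := h1.mul h2
      convert this using 1
      ring
    have hdiff : Differentiable ℝ f := fun y => (hfd y).differentiableAt
    have hanti : Antitone f := by
      apply antitone_of_deriv_nonpos hdiff
      intro y
      rw [(hfd y).deriv]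
      have := hV y
      rw [hit y] at this
      have hexp := (Real.exp_pos (-y)).le
      nlinarith
    have hfx : f x < 0 :=
      mul_neg_of_pos_of_neg (Real.exp_pos _) (by linarith)
    have hle : f (x + 2 * π) ≤ f x := hanti (by linarith [Real.pi_pos])
    have heq : f (x + 2 * π) = Real.exp (-(2 * π)) * f x := by
      simp only [hf, hper, hper']
      rw [show -(x + 2 * π) = -(2 * π) + -x by ring, Real.exp_add, mul_assoc]
    have h1 : Real.exp (-(2 * π)) < 1 := by
      rw [Real.exp_lt_one_iff]
      linarith [Real.pi_pos]
    nlinarith [Real.exp_pos (-(2 * π))]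
  · -- v' ≤ v, i.e. v - v' ≥ 0 : use g y = exp y * (v y - v' y), monotone
    by_contra hc
    push_neg at hc
    set g : ℝ → ℝ := fun y => Real.exp y * (v y - deriv v y) with hg
    have hgd : ∀ y, HasDerivAt g (Real.exp y * (v y - deriv (deriv v) y)) y := by
      intro y
      have h1 : HasDerivAt (fun y : ℝ => Real.exp y) (Real.exp y) y := Real.hasDerivAt_exp y
      have h2 : HasDerivAt (fun y => v y - deriv v y)
          (deriv v y - deriv (deriv v) y) y :=
        ((hd1 y).hasDerivAt).sub ((hd2 y).hasDerivAt)
      have : HasDerivAt (fun y => Real.exp y * (v y - deriv v y)) _ y := h1.mul h2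
      convert this using 1
      ring
    have hdiff : Differentiable ℝ g := fun y => (hgd y).differentiableAt
    have hmono : Monotone g := by
      apply monotone_of_deriv_nonneg hdiff
      intro y
      rw [(hgd y).deriv]
      have := hV y
      rw [hit y] at this
      have hexp := (Real.exp_pos y).le
      nlinarith
    have hgx : g x < 0 :=
      mul_neg_of_pos_of_neg (Real.exp_pos _) (by linarith)
    have hle : g x ≤ g (x + 2 * π) := hmono (by linarith [Real.pi_pos])
    have heq : g (x + 2 * π) = Real.exp (2 * π) * g x := by
      simp only [hg, hper, hper']
      rw [show x + 2 * π = 2 * π + x by ring, Real.exp_add, mul_assoc]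
    have h1 : (1 : ℝ) < Real.exp (2 * π) := by
      rw [Real.one_lt_exp_iff]
      positivity
    nlinarith

/-- The pointwise comparison (6.8): a one-signed momentum V = v − v_xx forces
|v_x| ≤ |v| (with matching sign pattern), for a C² 2π-periodic function v. -/
theorem sign_definite_momentum_comparison (v : ℝ → ℝ) (hv : ContDiff ℝ 2 v)
    (hper : ∀ x, v (x + 2 * π) = v x) :
    ((∀ x : ℝ, 0 < v x - iteratedDeriv 2 v x) →
      ∀ x : ℝ, -v x ≤ deriv v x ∧ deriv v x ≤ v x) ∧
    ((∀ x : ℝ, v x - iteratedDeriv 2 v x < 0) →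
      ∀ x : ℝ, v x ≤ deriv v x ∧ deriv v x ≤ -v x) := by
  constructor
  · exact momentum_key v hv hper
  · intro hV x
    have hneg := momentum_key (fun y => -v y) (hv.neg) (fun y => by simp [hper y])
      (by
        intro y
        have h2 : iteratedDeriv 2 (fun y => -v y) y = -iteratedDeriv 2 v y := by
          rw [show (fun y => -v y) = -v from rfl, iteratedDeriv_neg]
        simp only [h2]
        have := hV y
        linarith) x
    have hd : deriv (fun y => -v y) x = -deriv v x := deriv.neg
    rw [hd] at hneg
    obtain ⟨h1, h2⟩ := hneg
    simp only [neg_neg] at h1 h2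
    exact ⟨by linarith, by linarith⟩
end

section
/- Let T > 0 and let g : [0,T) × ℝ → ℝ be continuous and 2π-periodic in its second variable, such that the partial derivative ∂ₜg exists and is continuous on [0,T) × ℝ. Define M(t) = min_{x ∈ [0,2π]} g(t,x). Then: (i) for every t ∈ [0,T) there exists z(t) ∈ [0,2π] with M(t) = g(t, z(t)); (ii) M is locally Lipschitz on [0,T), hence differentiable at almost every t ∈ (0,T); and (iii) at every point t of differentiability of M, M'(t) = ∂ₜg(t, z) for every z ∈ [0,2π] satisfying g(t,z) = M(t). -/
open Real MeasureTheory Set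

/-- The periodic version of the Constantin–Escher differentiability lemma
(Lemma 3.7): for g continuous on [0,T)×ℝ, 2π-periodic in x, with continuous
time derivative gt, the minimum function M(t) = min_{x∈[0,2π]} g(t,x) is
attained, locally Lipschitz (hence differentiable a.e.), and at every point of
differentiability its derivative equals gt(t,z) for any minimizer z. -/
theorem constantin_escher_lemma (T : ℝ) (hT : 0 < T) (g gt : ℝ → ℝ → ℝ)
    (hg : ContinuousOn (fun p : ℝ × ℝ => g p.1 p.2) (Set.Ico 0 T ×ˢ Set.univ))
    (hper : ∀ t x, g t (x + 2 * π) = g t x)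
    (hgt : ∀ t ∈ Set.Ico (0 : ℝ) T, ∀ x : ℝ,
      HasDerivWithinAt (fun s => g s x) (gt t x) (Set.Ico 0 T) t)
    (hgtc : ContinuousOn (fun p : ℝ × ℝ => gt p.1 p.2) (Set.Ico 0 T ×ˢ Set.univ))
    (M : ℝ → ℝ) (hM : ∀ t, M t = sInf (g t '' Set.Icc 0 (2 * π))) :
    (∀ t ∈ Set.Ico (0 : ℝ) T, ∃ z ∈ Set.Icc (0 : ℝ) (2 * π), M t = g t z) ∧
    (∀ a b : ℝ, 0 ≤ a → b < T → ∃ K : NNReal, LipschitzOnWith K M (Set.Icc a b)) ∧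
    (∀ᵐ t ∂(volume.restrict (Set.Ioo 0 T)), DifferentiableAt ℝ M t) ∧
    (∀ t ∈ Set.Ioo (0 : ℝ) T, DifferentiableAt ℝ M t →
      ∀ z ∈ Set.Icc (0 : ℝ) (2 * π), g t z = M t → deriv M t = gt t z) := by
  have hpi : (0:ℝ) ≤ 2 * π := by positivity
  have hne : (Set.Icc (0:ℝ) (2*π)).Nonempty := Set.nonempty_Icc.2 hpi
  have hcont : ∀ t ∈ Set.Ico (0:ℝ) T, ContinuousOn (g t) (Set.Icc 0 (2*π)) := by
    intro t ht
    have h1 : Continuous (fun x : ℝ => ((t, x) : ℝ × ℝ)) := by continuity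
    have : ContinuousOn (fun x => g t x) Set.univ :=
      hg.comp h1.continuousOn (fun x _ => ⟨ht, trivial⟩)
    exact this.mono (Set.subset_univ _)
  have hmin : ∀ t ∈ Set.Ico (0:ℝ) T, ∃ z ∈ Set.Icc (0:ℝ) (2*π),
      M t = g t z ∧ ∀ y ∈ Set.Icc (0:ℝ) (2*π), g t z ≤ g t y := by
    intro t ht
    obtain ⟨z, hz, h1, h2⟩ := isCompact_Icc.exists_sInf_image_eq_and_le hne (hcont t ht)
    exact ⟨z, hz, by rw [hM]; exact h1, h2⟩
  have hMle : ∀ t ∈ Set.Ico (0:ℝ) T, ∀ y ∈ Set.Icc (0:ℝ) (2*π), M t ≤ g t y := by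
    intro t ht y hy
    obtain ⟨z, hz, h1, h2⟩ := hmin t ht
    rw [h1]; exact h2 y hy
  have hlip : ∀ a b : ℝ, 0 ≤ a → b < T →
      ∃ K : NNReal, LipschitzOnWith K M (Set.Icc a b) := by
    intro a b ha hb
    rcases le_or_gt a b with hab | hab
    · have hsubI : Set.Icc a b ⊆ Set.Ico 0 T := fun s hs =>
        ⟨ha.trans hs.1, lt_of_le_of_lt hs.2 hb⟩
      have hC : IsCompact (Set.Icc a b ×ˢ Set.Icc (0:ℝ) (2*π)) :=
        isCompact_Icc.prod isCompact_Icc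
      have hsub : Set.Icc a b ×ˢ Set.Icc (0:ℝ) (2*π) ⊆ Set.Ico 0 T ×ˢ Set.univ := by
        rintro ⟨s, x⟩ ⟨hs, _⟩
        exact ⟨hsubI hs, trivial⟩
      obtain ⟨C, hCb⟩ := hC.exists_bound_of_continuousOn (hgtc.mono hsub)
      set K : NNReal := ⟨max C 0, le_max_right _ _⟩ with hK
      have hKC : ∀ s ∈ Set.Icc a b, ∀ x ∈ Set.Icc (0:ℝ) (2*π), ‖gt s x‖₊ ≤ K := by
        intro s hs x hx
        have h1 : ‖gt s x‖ ≤ (K : ℝ) :=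
          (hCb (s, x) ⟨hs, hx⟩).trans (le_max_left C 0)
        exact_mod_cast h1
      have hlipx : ∀ x ∈ Set.Icc (0:ℝ) (2*π),
          LipschitzOnWith K (fun s => g s x) (Set.Icc a b) := by
        intro x hx
        apply (convex_Icc a b).lipschitzOnWith_of_nnnorm_hasFDerivWithin_le
          (f' := fun s => ContinuousLinearMap.smulRight (1 : ℝ →L[ℝ] ℝ) (gt s x))
        · intro s hs
          exact ((hgt s (hsubI hs) x).mono hsubI).hasFDerivWithinAt
        · intro s hs
          rw [ContinuousLinearMap.nnnorm_smulRight_apply]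
          simpa using hKC s hs x hx
      have key : ∀ t ∈ Set.Icc a b, ∀ s ∈ Set.Icc a b,
          M t - M s ≤ K * dist t s := by
        intro t ht s hs
        obtain ⟨z, hz, hMz, _⟩ := hmin s (hsubI hs)
        have h1 : M t ≤ g t z := hMle t (hsubI ht) z hz
        have h2 : dist (g t z) (g s z) ≤ K * dist t s :=
          (hlipx z hz).dist_le_mul t ht s hs
        rw [Real.dist_eq] at h2
        have h3 : g t z - g s z ≤ K * dist t s :=
          (le_abs_self _).trans h2
        rw [hMz]; linarith
      refine ⟨K, ?_⟩
      rw [lipschitzOnWith_iff_dist_le_mul]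
      intro t ht s hs
      rw [Real.dist_eq, abs_sub_le_iff]
      refine ⟨key t ht s hs, ?_⟩
      rw [dist_comm] at *
      exact key s hs t ht
    · exact ⟨1, by rw [Set.Icc_eq_empty (not_le.2 hab)]; exact lipschitzOnWith_empty _ _⟩
  have haeb : ∀ b : ℝ, 0 < b → b < T →
      ∀ᵐ t, t ∈ Set.Ioo 0 b → DifferentiableAt ℝ M t := by
    intro b hb0 hbT
    obtain ⟨K, hK⟩ := hlip 0 b le_rfl hbT
    obtain ⟨F, hF, hFM⟩ := hK.extend_real
    filter_upwards [hF.ae_differentiableAt] with t hdt htmem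
    have hnb : Set.Ioo 0 b ∈ nhds t := Ioo_mem_nhds htmem.1 htmem.2
    have heq : F =ᶠ[nhds t] M := by
      filter_upwards [hnb] with s hsmem
      exact (hFM (Set.Ioo_subset_Icc_self hsmem)).symm
    exact hdt.congr_of_eventuallyEq heq.symm
  refine ⟨fun t ht => (hmin t ht).imp (fun z hz => ⟨hz.1, hz.2.1⟩), hlip, ?_, ?_⟩
  · -- a.e. differentiability on Ioo 0 T
    rw [ae_iff, Measure.restrict_apply' measurableSet_Ioo]
    set b : ℕ → ℝ := fun n => T - T / (n + 2) with hb
    have hb0 : ∀ n : ℕ, 0 < b n := by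
      intro n
      have h2 : (1:ℝ) < (n:ℝ) + 2 := by
        have : (0:ℝ) ≤ (n:ℝ) := Nat.cast_nonneg n
        linarith
      have := div_lt_self hT h2
      simp only [hb]; linarith
    have hbT : ∀ n : ℕ, b n < T := by
      intro n
      have : (0:ℝ) < T / (n + 2) := by positivity
      simp only [hb]; linarith
    have hcover : {t | ¬ DifferentiableAt ℝ M t} ∩ Set.Ioo 0 T ⊆
        ⋃ n : ℕ, {t | ¬ (t ∈ Set.Ioo 0 (b n) → DifferentiableAt ℝ M t)} := by
      rintro t ⟨hnd, ht0, htT⟩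
      obtain ⟨n, hn⟩ := exists_nat_gt (T / (T - t))
      have hTt : 0 < T - t := by linarith
      have hTn : T < (n : ℝ) * (T - t) := (div_lt_iff₀ hTt).1 hn
      have hle : ((n:ℝ)) * (T - t) ≤ ((n:ℝ) + 2) * (T - t) := by nlinarith
      have h1 : T / ((n:ℝ) + 2) < T - t := by
        rw [div_lt_iff₀ (by positivity)]
        nlinarith
      have htb : t < b n := by simp only [hb]; linarith
      exact Set.mem_iUnion.2 ⟨n, fun h => hnd (h ⟨ht0, htb⟩)⟩
    refine measure_mono_null hcover (measure_iUnion_null fun n => ?_)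
    have := haeb (b n) (hb0 n) (hbT n)
    rwa [ae_iff] at this
  · intro t ht hdM z hz hgz
    have htI : t ∈ Set.Ico 0 T := ⟨le_of_lt ht.1, ht.2⟩
    have hmem : Set.Ioo 0 T ∈ nhds t := Ioo_mem_nhds ht.1 ht.2
    have hnhds : Set.Ico 0 T ∈ nhds t :=
      Filter.mem_of_superset hmem Set.Ioo_subset_Ico_self
    have hder : HasDerivAt (fun s => g s z) (gt t z) t :=
      (hgt t htI z).hasDerivAt hnhds
    have hφd : HasDerivAt (fun s => g s z - M s) (gt t z - deriv M t) t :=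
      hder.sub hdM.hasDerivAt
    have hlocmin : IsLocalMin (fun s => g s z - M s) t := by
      have hφt : g t z - M t = 0 := by rw [hgz]; ring
      filter_upwards [hmem] with s hsmem
      have hle : M s ≤ g s z := hMle s ⟨le_of_lt hsmem.1, hsmem.2⟩ z hz
      simp only [hφt]
      linarith
    have hzero : deriv (fun s => g s z - M s) t = 0 := hlocmin.deriv_eq_zero
    rw [hφd.deriv] at hzero
    linarith
end

section
/- Let T > 0, γ ∈ ℝ, and β : [0,T) → ℝ continuous. Let v : [0,T) × ℝ → ℝ be 2π-periodic in x and smooth enough that V := v − v_xx and its partial derivatives V_t, V_x are continuous, and suppose V satisfies pointwise V_t + (β(t)v − γ) V_x + 2β(t) V v_x = 0 on [0,T) × ℝ. Let q : [0,T) × ℝ → ℝ satisfy ∂ₜq(t,x) = β(t) v(t, q(t,x)) − γ and q(0,x) = x, where ∂ₜq, ∂ₓq and ∂ₜ∂ₓq = ∂ₓ∂ₜq exist and are continuous. Then for all (t,x) ∈ [0,T) × ℝ: ∂ₓq(t,x) = exp( ∫₀ᵗ β(s) v_x(s, q(s,x)) ds ) > 0, and V(t, q(t,x)) · (∂ₓq(t,x))²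 = V(0,x). -/
open Real MeasureTheory Set intervalIntegral

/-- Chain rule for `u ↦ V u (Q u)` from continuity of the spatial partial derivative. -/
lemma hasDerivWithinAt_comp_two_vars
    {V Vx : ℝ → ℝ → ℝ} {Q : ℝ → ℝ} {Wt Q' b : ℝ} {s : Set ℝ}
    (hVt : HasDerivWithinAt (fun u => V u (Q b)) Wt s b)
    (hVx : ∀ u ∈ s, ∀ y : ℝ, HasDerivAt (fun z => V u z) (Vx u y) y)
    (hVxc : ContinuousWithinAt (fun p : ℝ × ℝ => Vx p.1 p.2) (s ×ˢ Set.univ) (b, Q b))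
    (hQ : HasDerivWithinAt Q Q' s b) :
    HasDerivWithinAt (fun u => V u (Q u)) (Wt + Vx b (Q b) * Q') s b := by
  rw [hasDerivWithinAt_iff_isLittleO]
  have hA : (fun u => V u (Q b) - V b (Q b) - (u - b) • Wt) =o[nhdsWithin b s]
      fun u => u - b := hasDerivWithinAt_iff_isLittleO.1 hVt
  have hC : (fun u => Vx b (Q b) * (Q u - Q b - (u - b) • Q')) =o[nhdsWithin b s]
      fun u => u - b :=
    (hasDerivWithinAt_iff_isLittleO.1 hQ).const_mul_left (Vx b (Q b))
  have hQO : (fun u => Q u - Q b) =O[nhdsWithin b s] fun u => u - b :=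
    hQ.hasFDerivWithinAt.isBigO_sub
  have hB : (fun u => V u (Q u) - V u (Q b) - Vx b (Q b) * (Q u - Q b))
      =o[nhdsWithin b s] fun u => Q u - Q b := by
    rw [Asymptotics.isLittleO_iff]
    intro ε hε
    have hball : {p : ℝ × ℝ | |Vx p.1 p.2 - Vx b (Q b)| ≤ ε} ∈
        nhdsWithin (b, Q b) (s ×ˢ Set.univ) := by
      have : Metric.closedBall (Vx b (Q b)) ε ∈ nhds (Vx b (Q b)) :=
        Metric.closedBall_mem_nhds _ hε
      have := hVxc this
      simpa [Real.dist_eq, Metric.closedBall, Set.preimage] using this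
    rw [Metric.mem_nhdsWithin_iff] at hball
    obtain ⟨δ, hδ, hδsub⟩ := hball
    have h1 : ∀ᶠ u in nhdsWithin b s, dist u b < δ := by
      filter_upwards [mem_nhdsWithin_of_mem_nhds (Metric.ball_mem_nhds b hδ)] with u hu
      exact hu
    have h2 : ∀ᶠ u in nhdsWithin b s, dist (Q u) (Q b) < δ :=
      hQ.continuousWithinAt (Metric.ball_mem_nhds _ hδ)
    filter_upwards [h1, h2, self_mem_nhdsWithin] with u hu1 hu2 hus
    -- mean value estimate on the segment [[Q b, Q u]]
    set c := Vx b (Q b) with hc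
    have hmvt : ‖(V u (Q u) - Q u * c) - (V u (Q b) - Q b * c)‖ ≤ ε * ‖Q u - Q b‖ := by
      refine Convex.norm_image_sub_le_of_norm_hasDerivWithin_le
        (f := fun y => V u y - y * c) (f' := fun y => Vx u y - c)
        (fun y _ => ((hVx u hus y).sub (hasDerivAt_mul_const c)).hasDerivWithinAt)
        (fun y hy => ?_) (convex_uIcc _ _) left_mem_uIcc right_mem_uIcc
      have hy1 : |y - Q b| ≤ |Q u - Q b| := abs_sub_left_of_mem_uIcc hy
      have hmem : (u, y) ∈ Metric.ball (b, Q b) δ ∩ s ×ˢ Set.univ := by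
        constructor
        · rw [Metric.mem_ball, Prod.dist_eq]
          exact max_lt hu1 (lt_of_le_of_lt (by simpa [Real.dist_eq] using hy1) hu2)
        · exact ⟨hus, trivial⟩
      simpa [Real.norm_eq_abs] using hδsub hmem
    calc ‖V u (Q u) - V u (Q b) - Vx b (Q b) * (Q u - Q b)‖
        = ‖(V u (Q u) - Q u * c) - (V u (Q b) - Q b * c)‖ := by rw [hc]; ring_nf
      _ ≤ ε * ‖Q u - Q b‖ := hmvt
  have hBfull : (fun u => V u (Q u) - V u (Q b) - Vx b (Q b) * (Q u - Q b))
      =o[nhdsWithin b s] fun u => u - b := hB.trans_isBigO hQO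
  have := (hA.add hBfull).add hC
  refine this.congr' (Filter.Eventually.of_forall fun u => ?_) (Filter.Eventually.of_forall fun u => rfl)
  simp only [smul_eq_mul]
  ring

/-- Conservation of momentum along characteristics (Lemma 6.2): for the momentum
V = v − v_xx of a classical 2π-periodic solution of the rescaled DGH equation with
c₀ + γ = 0, satisfying V_t + (βv − γ)V_x + 2βV v_x = 0, and the Lagrangian flow q
with ∂ₜq = β v(t,q) − γ, q(0,x) = x, one has
∂ₓq(t,x) = exp(∫₀ᵗ β v_x(s, q(s,x)) ds) > 0 and V(t,q(t,x)) (∂ₓq)² = V(0,x). -/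
theorem momentum_conservation_along_characteristics
    (T : ℝ) (hT : 0 < T) (γ : ℝ) (β : ℝ → ℝ) (hβ : ContinuousOn β (Set.Ico 0 T))
    (v vx vxx V Vt Vx : ℝ → ℝ → ℝ)
    (hper : ∀ t x, v t (x + 2 * π) = v t x)
    (hvx : ∀ t ∈ Set.Ico (0 : ℝ) T, ∀ x : ℝ, HasDerivAt (fun y => v t y) (vx t x) x)
    (hvxx : ∀ t ∈ Set.Ico (0 : ℝ) T, ∀ x : ℝ, HasDerivAt (fun y => vx t y) (vxx t x) x)
    (hVdef : ∀ t x, V t x = v t x - vxx t x)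
    (hVt : ∀ t ∈ Set.Ico (0 : ℝ) T, ∀ x : ℝ,
      HasDerivWithinAt (fun s => V s x) (Vt t x) (Set.Ico 0 T) t)
    (hVx : ∀ t ∈ Set.Ico (0 : ℝ) T, ∀ x : ℝ, HasDerivAt (fun y => V t y) (Vx t x) x)
    (hvc : ContinuousOn (fun p : ℝ × ℝ => v p.1 p.2) (Set.Ico 0 T ×ˢ Set.univ))
    (hvxc : ContinuousOn (fun p : ℝ × ℝ => vx p.1 p.2) (Set.Ico 0 T ×ˢ Set.univ))
    (hVc : ContinuousOn (fun p : ℝ × ℝ => V p.1 p.2) (Set.Ico 0 T ×ˢ Set.univ))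
    (hVtc : ContinuousOn (fun p : ℝ × ℝ => Vt p.1 p.2) (Set.Ico 0 T ×ˢ Set.univ))
    (hVxc : ContinuousOn (fun p : ℝ × ℝ => Vx p.1 p.2) (Set.Ico 0 T ×ˢ Set.univ))
    (hpde : ∀ t ∈ Set.Ico (0 : ℝ) T, ∀ x : ℝ,
      Vt t x + (β t * v t x - γ) * Vx t x + 2 * β t * V t x * vx t x = 0)
    (q qx : ℝ → ℝ → ℝ)
    (hq0 : ∀ x, q 0 x = x)
    (hqt : ∀ t ∈ Set.Ico (0 : ℝ) T, ∀ x : ℝ,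
      HasDerivWithinAt (fun s => q s x) (β t * v t (q t x) - γ) (Set.Ico 0 T) t)
    (hqx : ∀ t ∈ Set.Ico (0 : ℝ) T, ∀ x : ℝ, HasDerivAt (fun y => q t y) (qx t x) x)
    (hqxc : ContinuousOn (fun p : ℝ × ℝ => qx p.1 p.2) (Set.Ico 0 T ×ˢ Set.univ))
    (hqtx : ∀ t ∈ Set.Ico (0 : ℝ) T, ∀ x : ℝ,
      HasDerivWithinAt (fun s => qx s x) (β t * vx t (q t x) * qx t x) (Set.Ico 0 T) t) :
    ∀ t ∈ Set.Ico (0 : ℝ) T, ∀ x : ℝ,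
      qx t x = Real.exp (∫ s in (0 : ℝ)..t, β s * vx s (q s x)) ∧
      0 < qx t x ∧
      V t (q t x) * (qx t x) ^ 2 = V 0 x := by
  intro t ht x
  have h0T : (0 : ℝ) ∈ Set.Ico (0 : ℝ) T := ⟨le_rfl, hT⟩
  -- qx 0 x = 1
  have hP0 : qx 0 x = 1 := by
    have h1 : HasDerivAt (fun y => q 0 y) 1 x := by
      have : (fun y => q 0 y) = fun y => y := funext hq0
      rw [this]; exact hasDerivAt_id x
    exact (hqx 0 h0T x).unique h1
  -- continuity facts along the characteristic
  have hQc : ContinuousOn (fun s => q s x) (Set.Ico 0 T) := fun s hs =>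
    (hqt s hs x).continuousWithinAt
  have hpairc : ContinuousOn (fun s => (s, q s x)) (Set.Ico 0 T) :=
    continuousOn_id.prodMk hQc
  have hmaps : ∀ s ∈ Set.Ico (0 : ℝ) T, (s, q s x) ∈ Set.Ico (0 : ℝ) T ×ˢ Set.univ :=
    fun s hs => ⟨hs, trivial⟩
  have hFc : ContinuousOn (fun s => β s * vx s (q s x)) (Set.Ico 0 T) :=
    hβ.mul (by simpa [Function.comp_def] using hvxc.comp hpairc hmaps)
  have hPc : ContinuousOn (fun s => qx s x) (Set.Ico 0 T) := by
    have hpairc2 : ContinuousOn (fun s : ℝ => (s, x)) (Set.Ico 0 T) :=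
      continuousOn_id.prodMk continuousOn_const
    simpa [Function.comp_def] using
      hqxc.comp hpairc2 (fun s hs => (⟨hs, trivial⟩ : (s, x) ∈ Set.Ico (0:ℝ) T ×ˢ Set.univ))
  have hWc : ContinuousOn (fun s => V s (q s x)) (Set.Ico 0 T) :=
    by simpa [Function.comp_def] using hVc.comp hpairc hmaps
  -- neighborhood facts
  have memIci : ∀ s ∈ Set.Ico (0 : ℝ) T, Set.Ico (0 : ℝ) T ∈ nhdsWithin s (Set.Ici s) := by
    intro s hs
    refine mem_nhdsWithin.2 ⟨Set.Iio T, isOpen_Iio, hs.2, ?_⟩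
    rintro y ⟨hy1, hy2⟩
    exact ⟨le_trans hs.1 hy2, hy1⟩
  have memIoi : ∀ s ∈ Set.Ico (0 : ℝ) T, Set.Ico (0 : ℝ) T ∈ nhdsWithin s (Set.Ioi s) := by
    intro s hs
    refine mem_nhdsWithin.2 ⟨Set.Iio T, isOpen_Iio, hs.2, ?_⟩
    rintro y ⟨hy1, hy2⟩
    exact ⟨le_trans hs.1 (le_of_lt hy2), hy1⟩
  -- FTC: right derivative of the primitive
  have hIderiv : ∀ s ∈ Set.Ico (0 : ℝ) T,
      HasDerivWithinAt (fun u => ∫ r in (0 : ℝ)..u, β r * vx r (q r x))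
        (β s * vx s (q s x)) (Set.Ici s) s := by
    intro s hs
    have hint : IntervalIntegrable (fun r => β r * vx r (q r x)) volume 0 s := by
      apply ContinuousOn.intervalIntegrable
      rw [Set.uIcc_of_le hs.1]
      exact hFc.mono fun y hy => ⟨hy.1, lt_of_le_of_lt hy.2 hs.2⟩
    have hmeas : StronglyMeasurableAtFilter (fun r => β r * vx r (q r x)) (nhdsWithin s (Set.Ioi s)) :=
      ⟨Set.Ico 0 T, memIoi s hs, hFc.aestronglyMeasurable measurableSet_Ico⟩
    have hcont : ContinuousWithinAt (fun r => β r * vx r (q r x)) (Set.Ioi s) s :=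
      (hFc s hs).mono_of_mem_nhdsWithin (memIoi s hs)
    exact intervalIntegral.integral_hasDerivWithinAt_right hint hmeas hcont
  have hsubIcc : Set.Icc (0 : ℝ) t ⊆ Set.Ico (0 : ℝ) T :=
    fun y hy => ⟨hy.1, lt_of_le_of_lt hy.2 ht.2⟩
  have hsubIco : Set.Ico (0 : ℝ) t ⊆ Set.Ico (0 : ℝ) T :=
    fun y hy => ⟨hy.1, lt_trans hy.2 ht.2⟩
  -- continuity of the primitive on [0, t]
  have hIcont : ContinuousOn (fun u => ∫ r in (0 : ℝ)..u, β r * vx r (q r x)) (Set.Icc 0 t) := by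
    have hint : IntegrableOn (fun r => β r * vx r (q r x)) (Set.uIcc 0 t) volume := by
      rw [Set.uIcc_of_le ht.1]
      exact (hFc.mono hsubIcc).integrableOn_compact isCompact_Icc
    have := intervalIntegral.continuousOn_primitive_interval hint
    rwa [Set.uIcc_of_le ht.1] at this
  -- first conservation: qx t x * exp(-∫) is constant
  have hgderiv : ∀ s ∈ Set.Ico (0 : ℝ) t,
      HasDerivWithinAt
        (fun u => qx u x * Real.exp (-(∫ r in (0 : ℝ)..u, β r * vx r (q r x)))) 0
        (Set.Ici s) s := by
    intro s hs
    have hs' := hsubIco hs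
    have h1 : HasDerivWithinAt (fun u => qx u x)
        (β s * vx s (q s x) * qx s x) (Set.Ici s) s :=
      (hqtx s hs' x).mono_of_mem_nhdsWithin (memIci s hs')
    have h2 : HasDerivWithinAt
        (fun u => Real.exp (-(∫ r in (0 : ℝ)..u, β r * vx r (q r x))))
        (Real.exp (-(∫ r in (0 : ℝ)..s, β r * vx r (q r x))) * (-(β s * vx s (q s x))))
        (Set.Ici s) s :=
      (Real.hasDerivAt_exp _).comp_hasDerivWithinAt s ((hIderiv s hs').neg)
    have := h1.mul h2
    refine this.congr_deriv ?_
    ring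
  have hgcont : ContinuousOn
      (fun u => qx u x * Real.exp (-(∫ r in (0 : ℝ)..u, β r * vx r (q r x))))
      (Set.Icc 0 t) :=
    (hPc.mono hsubIcc).mul (Real.continuous_exp.comp_continuousOn hIcont.neg)
  have hgconst := constant_of_has_deriv_right_zero hgcont hgderiv t (Set.right_mem_Icc.2 ht.1)
  have hg1 : qx t x * Real.exp (-(∫ r in (0 : ℝ)..t, β r * vx r (q r x))) = 1 := by
    rw [hgconst]
    simp [hP0]
  have hPt : qx t x = Real.exp (∫ r in (0 : ℝ)..t, β r * vx r (q r x)) := by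
    have := congrArg (fun z => z * Real.exp (∫ r in (0 : ℝ)..t, β r * vx r (q r x))) hg1
    simpa [mul_assoc, ← Real.exp_add] using this
  refine ⟨hPt, by rw [hPt]; exact Real.exp_pos _, ?_⟩
  -- second conservation: V(t, q) * (qx)^2 is constant
  have hWderiv : ∀ s ∈ Set.Ico (0 : ℝ) T,
      HasDerivWithinAt (fun u => V u (q u x))
        (Vt s (q s x) + Vx s (q s x) * (β s * v s (q s x) - γ)) (Set.Ico 0 T) s := by
    intro s hs
    exact hasDerivWithinAt_comp_two_vars (hVt s hs (q s x)) (fun u hu y => hVx u hu y)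
      (hVxc (s, q s x) ⟨hs, trivial⟩) (hqt s hs x)
  have hhderiv : ∀ s ∈ Set.Ico (0 : ℝ) t,
      HasDerivWithinAt (fun u => V u (q u x) * qx u x ^ 2) 0 (Set.Ici s) s := by
    intro s hs
    have hs' := hsubIco hs
    have h1 := (hWderiv s hs').mono_of_mem_nhdsWithin (memIci s hs')
    have h2 : HasDerivWithinAt (fun u => qx u x ^ 2)
        ((2 : ℝ) * qx s x ^ 1 * (β s * vx s (q s x) * qx s x)) (Set.Ici s) s :=
      ((hqtx s hs' x).mono_of_mem_nhdsWithin (memIci s hs')).pow 2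
    have := h1.mul h2
    refine this.congr_deriv ?_
    have hp := hpde s hs' (q s x)
    linear_combination (qx s x ^ 2) * hp
  have hhcont : ContinuousOn (fun u => V u (q u x) * qx u x ^ 2) (Set.Icc 0 t) :=
    (hWc.mono hsubIcc).mul ((hPc.mono hsubIcc).pow 2)
  have hhconst := constant_of_has_deriv_right_zero hhcont hhderiv t (Set.right_mem_Icc.2 ht.1)
  rw [hhconst]
  simp [hq0, hP0]
end

section
/- Let T > 0, γ ∈ ℝ, and β : [0,T) → ℝ continuous. Let v : [0,T) × ℝ → ℝ be 2π-periodic in x and smooth enough that V := v − v_xx and its partial derivatives V_t, V_x are continuous, and suppose V satisfies pointwise V_t + (β(t)v − γ) V_x + 2β(t) V v_x = 0 on [0,T) × ℝ. Let q : [0,T) × ℝ → ℝ satisfy ∂ₜq(t,x) = β(t) v(t, q(t,x)) − γ and q(0,x) = x, where ∂ₜq, ∂ₓq and ∂ₜ∂ₓq = ∂ₓ∂ₜq exist and are continuous, and assume that for every t ∈ [0,T) the map x ↦ q(t,x) is surjective onto ℝ. Then: if V(0,x) > 0 for all x ∈ ℝ, then V(t,x) > 0 for all (t,x) ∈ [0,T)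 × ℝ; and if V(0,x) < 0 for all x ∈ ℝ, then V(t,x) < 0 for all (t,x) ∈ [0,T) × ℝ. -/
open Real MeasureTheory Set intervalIntegral Filter Topology


lemma chain_aux {T : ℝ} (f ft fx : ℝ → ℝ → ℝ)
    (hft : ∀ t ∈ Set.Ico (0:ℝ) T, ∀ x : ℝ,
      HasDerivWithinAt (fun s => f s x) (ft t x) (Set.Ico 0 T) t)
    (hfx : ∀ t ∈ Set.Ico (0:ℝ) T, ∀ x : ℝ, HasDerivAt (fun y => f t y) (fx t x) x)
    (hftc : ContinuousOn (fun p : ℝ × ℝ => ft p.1 p.2) (Set.Ico 0 T ×ˢ Set.univ))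
    (g : ℝ → ℝ) (g' : ℝ) (t : ℝ) (ht : t ∈ Set.Ico (0:ℝ) T)
    (hg : HasDerivWithinAt g g' (Set.Ico 0 T) t) :
    HasDerivWithinAt (fun s => f s (g s)) (ft t (g t) + fx t (g t) * g')
      (Set.Ico 0 T) t := by
  set S : Set ℝ := Set.Ico (0:ℝ) T with hS
  have hB : HasDerivWithinAt (fun s => f t (g s)) (fx t (g t) * g') S t :=
    (hfx t ht (g t)).comp_hasDerivWithinAt t hg
  -- choose mean value points
  have key : ∀ s : ℝ, ∃ c, c ∈ S ∧ |c - t| ≤ |s - t| ∧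
      (s ∈ S \ {t} → ft c (g s) = (f s (g s) - f t (g s)) / (s - t)) := by
    intro s
    by_cases hs : s ∈ S \ {t}
    · have hsS : s ∈ S := hs.1
      have hst : s ≠ t := hs.2
      set a := min t s with ha
      set b := max t s with hb
      have hab : a < b := by
        rcases lt_or_gt_of_ne hst with h | h
        · simp [ha, hb, min_eq_right h.le, max_eq_left h.le, h]
        · simp [ha, hb, min_eq_left h.le, max_eq_right h.le, h]
      have haS : a ∈ S := by
        rcases le_total t s with h | h
        · simpa [ha, min_eq_left h] using ht
        · simpa [ha, min_eq_right h] using hsS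
      have hbS : b ∈ S := by
        rcases le_total t s with h | h
        · simpa [hb, max_eq_right h] using hsS
        · simpa [hb, max_eq_left h] using ht
      have hsub : Set.Icc a b ⊆ S := fun y hy =>
        ⟨le_trans haS.1 hy.1, lt_of_le_of_lt hy.2 hbS.2⟩
      have hcont : ContinuousOn (fun σ => f σ (g s)) (Set.Icc a b) := by
        intro y hy
        exact ((hft y (hsub hy) (g s)).continuousWithinAt).mono hsub
      have hderiv : ∀ y ∈ Set.Ioo a b, HasDerivAt (fun σ => f σ (g s)) (ft y (g s)) y := by
        intro y hy
        have hyS : y ∈ S := hsub ⟨hy.1.le, hy.2.le⟩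
        refine (hft y hyS (g s)).hasDerivAt ?_
        have : Set.Ioo (0:ℝ) T ∈ 𝓝 y :=
          isOpen_Ioo.mem_nhds ⟨lt_of_le_of_lt haS.1 hy.1, lt_of_lt_of_le hy.2 hbS.2.le⟩
        exact Filter.mem_of_superset this Set.Ioo_subset_Ico_self
      obtain ⟨c, hc, hceq⟩ := exists_hasDerivAt_eq_slope (fun σ => f σ (g s))
        (fun σ => ft σ (g s)) hab hcont hderiv
      refine ⟨c, hsub ⟨hc.1.le, hc.2.le⟩, ?_, fun _ => ?_⟩
      · have h1 : a ≤ c := hc.1.le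
        have h2 : c ≤ b := hc.2.le
        have h3 : a ≤ t := min_le_left _ _
        have h4 : t ≤ b := le_max_left _ _
        have h5 : a ≤ s := min_le_right _ _
        have h6 : s ≤ b := le_max_right _ _
        rw [abs_le]
        constructor
        · rcases le_total t s with h | h
          · have : a = t := min_eq_left h
            nlinarith [abs_nonneg (s - t), le_abs_self (s - t), neg_abs_le (s - t)]
          · have : a = s := min_eq_right h
            nlinarith [neg_abs_le (s - t)]
        · rcases le_total t s with h | h
          · have : b = s := max_eq_right h
            nlinarith [le_abs_self (s - t)]
          · have : b = t := max_eq_left h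
            nlinarith [neg_abs_le (s - t), le_abs_self (s-t), abs_nonneg (s-t)]
      · -- slope equality
        rcases lt_or_gt_of_ne hst with h | h
        · -- s < t : a = s, b = t
          have ha' : a = s := min_eq_right h.le
          have hb' : b = t := max_eq_left h.le
          rw [hceq, ha', hb']
          rw [div_eq_div_iff (by simp [sub_ne_zero]; exact hst.symm) (sub_ne_zero.2 hst)]
          ring
        · have ha' : a = t := min_eq_left h.le
          have hb' : b = s := max_eq_right h.le
          rw [hceq, ha', hb']
    · exact ⟨t, ht, by simp [abs_nonneg], fun h => absurd h hs⟩
  choose τ hτS hτle hτeq using key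
  have hτtend : Tendsto τ (𝓝[S \ {t}] t) (𝓝 t) := by
    rw [tendsto_iff_dist_tendsto_zero]
    have hd : Tendsto (fun s => dist s t) (𝓝[S \ {t}] t) (𝓝 0) := by
      have : Tendsto (fun s => dist s t) (𝓝 t) (𝓝 (dist t t)) :=
        (continuous_id.dist continuous_const).tendsto t
      simpa using this.mono_left nhdsWithin_le_nhds
    exact squeeze_zero (fun s => dist_nonneg)
      (fun s => by rw [Real.dist_eq, Real.dist_eq]; exact hτle s) hd
  have hgtend : Tendsto g (𝓝[S \ {t}] t) (𝓝 (g t)) :=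
    (hg.continuousWithinAt).mono_left (nhdsWithin_mono t Set.diff_subset)
  have hpair : Tendsto (fun s => (τ s, g s)) (𝓝[S \ {t}] t) (𝓝[S ×ˢ Set.univ] (t, g t)) := by
    rw [tendsto_nhdsWithin_iff]
    constructor
    · rw [nhds_prod_eq]; exact hτtend.prodMk hgtend
    · exact Filter.Eventually.of_forall fun s => ⟨hτS s, Set.mem_univ _⟩
  have hA : Tendsto (fun s => ft (τ s) (g s)) (𝓝[S \ {t}] t) (𝓝 (ft t (g t))) := by
    have hcw : ContinuousWithinAt (fun p : ℝ × ℝ => ft p.1 p.2) (S ×ˢ Set.univ) (t, g t) :=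
      hftc (t, g t) ⟨ht, Set.mem_univ _⟩
    exact hcw.tendsto.comp hpair
  have hBslope : Tendsto (slope (fun σ => f t (g σ)) t) (𝓝[S \ {t}] t)
      (𝓝 (fx t (g t) * g')) := hasDerivWithinAt_iff_tendsto_slope.1 hB
  rw [hasDerivWithinAt_iff_tendsto_slope]
  have heq : ∀ s ∈ S \ {t}, slope (fun σ => f σ (g σ)) t s
      = ft (τ s) (g s) + slope (fun σ => f t (g σ)) t s := by
    intro s hs
    have hst : s - t ≠ 0 := sub_ne_zero.2 hs.2
    rw [hτeq s hs, slope_def_field, slope_def_field]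
    field_simp
    ring
  refine Tendsto.congr' ?_ (hA.add hBslope)
  filter_upwards [self_mem_nhdsWithin] with s hs
  exact (heq s hs).symm

/-- Sign propagation for the momentum (Lemma 6.2): the sign of V = v − v_xx is
preserved in time along the rescaled DGH flow with c₀ + γ = 0, given the
Lagrangian flow map q(t,·) is surjective for each t. -/
theorem momentum_sign_propagation
    (T : ℝ) (hT : 0 < T) (γ : ℝ) (β : ℝ → ℝ) (hβ : ContinuousOn β (Set.Ico 0 T))
    (v vx vxx V Vt Vx : ℝ → ℝ → ℝ)
    (hper : ∀ t x, v t (x + 2 * π) = v t x)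
    (hvx : ∀ t ∈ Set.Ico (0 : ℝ) T, ∀ x : ℝ, HasDerivAt (fun y => v t y) (vx t x) x)
    (hvxx : ∀ t ∈ Set.Ico (0 : ℝ) T, ∀ x : ℝ, HasDerivAt (fun y => vx t y) (vxx t x) x)
    (hVdef : ∀ t x, V t x = v t x - vxx t x)
    (hVt : ∀ t ∈ Set.Ico (0 : ℝ) T, ∀ x : ℝ,
      HasDerivWithinAt (fun s => V s x) (Vt t x) (Set.Ico 0 T) t)
    (hVx : ∀ t ∈ Set.Ico (0 : ℝ) T, ∀ x : ℝ, HasDerivAt (fun y => V t y) (Vx t x) x)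
    (hvc : ContinuousOn (fun p : ℝ × ℝ => v p.1 p.2) (Set.Ico 0 T ×ˢ Set.univ))
    (hvxc : ContinuousOn (fun p : ℝ × ℝ => vx p.1 p.2) (Set.Ico 0 T ×ˢ Set.univ))
    (hVc : ContinuousOn (fun p : ℝ × ℝ => V p.1 p.2) (Set.Ico 0 T ×ˢ Set.univ))
    (hVtc : ContinuousOn (fun p : ℝ × ℝ => Vt p.1 p.2) (Set.Ico 0 T ×ˢ Set.univ))
    (hVxc : ContinuousOn (fun p : ℝ × ℝ => Vx p.1 p.2) (Set.Ico 0 T ×ˢ Set.univ))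
    (hpde : ∀ t ∈ Set.Ico (0 : ℝ) T, ∀ x : ℝ,
      Vt t x + (β t * v t x - γ) * Vx t x + 2 * β t * V t x * vx t x = 0)
    (q qx : ℝ → ℝ → ℝ)
    (hq0 : ∀ x, q 0 x = x)
    (hqt : ∀ t ∈ Set.Ico (0 : ℝ) T, ∀ x : ℝ,
      HasDerivWithinAt (fun s => q s x) (β t * v t (q t x) - γ) (Set.Ico 0 T) t)
    (hqx : ∀ t ∈ Set.Ico (0 : ℝ) T, ∀ x : ℝ, HasDerivAt (fun y => q t y) (qx t x) x)
    (hqxc : ContinuousOn (fun p : ℝ × ℝ => qx p.1 p.2) (Set.Ico 0 T ×ˢ Set.univ))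
    (hqtx : ∀ t ∈ Set.Ico (0 : ℝ) T, ∀ x : ℝ,
      HasDerivWithinAt (fun s => qx s x) (β t * vx t (q t x) * qx t x) (Set.Ico 0 T) t)
    (hsurj : ∀ t ∈ Set.Ico (0 : ℝ) T, Function.Surjective (fun x => q t x)) :
    ((∀ x : ℝ, 0 < V 0 x) → ∀ t ∈ Set.Ico (0 : ℝ) T, ∀ x : ℝ, 0 < V t x) ∧
    ((∀ x : ℝ, V 0 x < 0) → ∀ t ∈ Set.Ico (0 : ℝ) T, ∀ x : ℝ, V t x < 0) := by
  set S : Set ℝ := Set.Ico (0:ℝ) T with hSdef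
  have h0S : (0:ℝ) ∈ S := ⟨le_rfl, hT⟩
  have hqx01 : ∀ x : ℝ, qx 0 x = 1 := by
    intro x
    have h1 := hqx 0 h0S x
    have h2 : HasDerivAt (fun y => q 0 y) 1 x := by
      simpa [hq0] using hasDerivAt_id' x
    exact h1.unique h2
  have key : ∀ t ∈ S, ∀ x : ℝ, V t (q t x) * qx t x * qx t x = V 0 x := by
    intro t ht x
    set W : ℝ → ℝ := fun s => V s (q s x) * qx s x * qx s x with hW
    have hW' : ∀ s ∈ S, HasDerivWithinAt W 0 S s := by
      intro s hs
      have h1 : HasDerivWithinAt (fun σ => V σ (q σ x))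
          (Vt s (q s x) + Vx s (q s x) * (β s * v s (q s x) - γ)) S s :=
        chain_aux V Vt Vx hVt hVx hVtc (fun σ => q σ x) _ s hs (hqt s hs x)
      have h2 : HasDerivWithinAt (fun σ => qx σ x) (β s * vx s (q s x) * qx s x) S s :=
        hqtx s hs x
      have h3 := (h1.mul h2).mul h2
      have h0 : ((Vt s (q s x) + Vx s (q s x) * (β s * v s (q s x) - γ)) * qx s x
            + V s (q s x) * (β s * vx s (q s x) * qx s x)) * qx s x
            + V s (q s x) * qx s x * (β s * vx s (q s x) * qx s x) = 0 := by
        linear_combination (qx s x * qx s x) * hpde s hs (q s x)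
      exact h0 ▸ h3
    have hWc : ContinuousOn W S := fun s hs => (hW' s hs).continuousWithinAt
    have hIcc : Set.Icc (0:ℝ) t ⊆ S := fun y hy => ⟨hy.1, lt_of_le_of_lt hy.2 ht.2⟩
    have hconst := constant_of_has_deriv_right_zero (hWc.mono hIcc) (fun y hy => by
      have hyS : y ∈ S := hIcc ⟨hy.1, hy.2.le⟩
      refine (hW' y hyS).mono_of_mem_nhdsWithin ?_
      have h1 : Set.Ici y ∩ Set.Iio T ∈ 𝓝[Set.Ici y] y :=
        inter_mem_nhdsWithin _ (Iio_mem_nhds hyS.2)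
      refine Filter.mem_of_superset h1 fun z hz => ⟨le_trans hyS.1 hz.1, hz.2⟩)
    have := hconst t ⟨ht.1, le_rfl⟩
    simpa [hW, hq0, hqx01] using this
  constructor
  · intro hpos t ht y
    obtain ⟨x, hx⟩ := hsurj t ht y
    simp only at hx
    have hk := key t ht x
    rw [hx] at hk
    nlinarith [hpos x, mul_self_nonneg (qx t x)]
  · intro hneg t ht y
    obtain ⟨x, hx⟩ := hsurj t ht y
    simp only at hx
    have hk := key t ht x
    rw [hx] at hk
    nlinarith [hneg x, mul_self_nonneg (qx t x)]
end

section
/- Let T > 0, γ ∈ ℝ, and β : [0,T) → ℝ continuous. Let v : [0,T) × ℝ → ℝ be 2π-periodic in x and smooth enough that V := v − v_xx and its partial derivatives V_t, V_x are continuous, and suppose V satisfies pointwise V_t + (β(t)v − γ) V_x + 2β(t) V v_x = 0 on [0,T) × ℝ. Then for every t ∈ [0,T): d/dt ∫₀^{2π} V(t,x)² dx = −3β(t) ∫₀^{2π} V(t,x)² v_x(t,x) dx. Consequently, if K ≥ 0 and β(t) v_x(t,x) ≥ −K for all (t,x) ∈ [0,T) × ℝ, then ∫₀^{2π} V(t,x)²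 dx ≤ e^{3Kt} ∫₀^{2π} V(0,x)² dx for all t ∈ [0,T). -/
open Real MeasureTheory Set intervalIntegral
open scoped Topology
open Filter Function

/-- The L²-energy identity for the momentum (proof of Theorem 2.6):
d/dt ∫₀^{2π} V² dx = −3β(t) ∫₀^{2π} V² v_x dx, and the resulting Grönwall bound
∫₀^{2π} V(t)² dx ≤ e^{3Kt} ∫₀^{2π} V(0)² dx whenever β v_x ≥ −K. -/
theorem momentum_L2_energy_identity
    (T : ℝ) (hT : 0 < T) (γ : ℝ) (β : ℝ → ℝ) (hβ : ContinuousOn β (Set.Ico 0 T))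
    (v vx vxx V Vt Vx : ℝ → ℝ → ℝ)
    (hper : ∀ t x, v t (x + 2 * π) = v t x)
    (hvx : ∀ t ∈ Set.Ico (0 : ℝ) T, ∀ x : ℝ, HasDerivAt (fun y => v t y) (vx t x) x)
    (hvxx : ∀ t ∈ Set.Ico (0 : ℝ) T, ∀ x : ℝ, HasDerivAt (fun y => vx t y) (vxx t x) x)
    (hVdef : ∀ t x, V t x = v t x - vxx t x)
    (hVt : ∀ t ∈ Set.Ico (0 : ℝ) T, ∀ x : ℝ,
      HasDerivWithinAt (fun s => V s x) (Vt t x) (Set.Ico 0 T) t)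
    (hVx : ∀ t ∈ Set.Ico (0 : ℝ) T, ∀ x : ℝ, HasDerivAt (fun y => V t y) (Vx t x) x)
    (hvc : ContinuousOn (fun p : ℝ × ℝ => v p.1 p.2) (Set.Ico 0 T ×ˢ Set.univ))
    (hvxc : ContinuousOn (fun p : ℝ × ℝ => vx p.1 p.2) (Set.Ico 0 T ×ˢ Set.univ))
    (hVc : ContinuousOn (fun p : ℝ × ℝ => V p.1 p.2) (Set.Ico 0 T ×ˢ Set.univ))
    (hVtc : ContinuousOn (fun p : ℝ × ℝ => Vt p.1 p.2) (Set.Ico 0 T ×ˢ Set.univ))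
    (hVxc : ContinuousOn (fun p : ℝ × ℝ => Vx p.1 p.2) (Set.Ico 0 T ×ˢ Set.univ))
    (hpde : ∀ t ∈ Set.Ico (0 : ℝ) T, ∀ x : ℝ,
      Vt t x + (β t * v t x - γ) * Vx t x + 2 * β t * V t x * vx t x = 0) :
    (∀ t ∈ Set.Ico (0 : ℝ) T,
      HasDerivWithinAt (fun s => ∫ x in (0 : ℝ)..(2 * π), (V s x) ^ 2)
        (-3 * β t * ∫ x in (0 : ℝ)..(2 * π), (V t x) ^ 2 * vx t x) (Set.Ico 0 T) t) ∧
    (∀ K : ℝ, 0 ≤ K →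
      (∀ t ∈ Set.Ico (0 : ℝ) T, ∀ x : ℝ, -K ≤ β t * vx t x) →
      ∀ t ∈ Set.Ico (0 : ℝ) T,
        (∫ x in (0 : ℝ)..(2 * π), (V t x) ^ 2)
          ≤ Real.exp (3 * K * t) * ∫ x in (0 : ℝ)..(2 * π), (V 0 x) ^ 2) := by
  have h2π : (0:ℝ) ≤ 2 * π := by positivity
  -- slice continuity helpers
  have sliceT : ∀ (W : ℝ → ℝ → ℝ),
      ContinuousOn (fun p : ℝ × ℝ => W p.1 p.2) (Set.Ico 0 T ×ˢ Set.univ) →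
      ∀ x : ℝ, ContinuousOn (fun s => W s x) (Set.Ico 0 T) := by
    intro W hW x
    exact hW.comp ((continuous_id.prodMk continuous_const).continuousOn)
      (fun s hs => ⟨hs, mem_univ _⟩)
  have sliceX : ∀ (W : ℝ → ℝ → ℝ),
      ContinuousOn (fun p : ℝ × ℝ => W p.1 p.2) (Set.Ico 0 T ×ˢ Set.univ) →
      ∀ t ∈ Set.Ico (0:ℝ) T, Continuous (fun x => W t x) := by
    intro W hW t ht
    rw [← continuousOn_univ]
    exact hW.comp ((continuous_const.prodMk continuous_id).continuousOn)
      (fun x _ => ⟨ht, mem_univ _⟩)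
  -- periodicity of vx, vxx, V
  have hvx_per : ∀ t ∈ Set.Ico (0:ℝ) T, ∀ x : ℝ, vx t (x + 2*π) = vx t x := by
    intro t ht x
    have h1 : HasDerivAt (fun y => v t (y + 2*π)) (vx t (x + 2*π) * 1) x :=
      (hvx t ht (x + 2*π)).comp x ((hasDerivAt_id x).add_const (2*π))
    have h2 : (fun y : ℝ => v t (y + 2*π)) = fun y => v t y := funext fun y => hper t y
    rw [h2, mul_one] at h1
    exact h1.unique (hvx t ht x)
  have hvxx_per : ∀ t ∈ Set.Ico (0:ℝ) T, ∀ x : ℝ, vxx t (x + 2*π) = vxx t x := by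
    intro t ht x
    have h1 : HasDerivAt (fun y => vx t (y + 2*π)) (vxx t (x + 2*π) * 1) x :=
      (hvxx t ht (x + 2*π)).comp x ((hasDerivAt_id x).add_const (2*π))
    have h2 : (fun y : ℝ => vx t (y + 2*π)) = fun y => vx t y := funext fun y => hvx_per t ht y
    rw [h2, mul_one] at h1
    exact h1.unique (hvxx t ht x)
  have hV_per : ∀ t ∈ Set.Ico (0:ℝ) T, ∀ x : ℝ, V t (x + 2*π) = V t x := by
    intro t ht x
    rw [hVdef, hVdef, hper, hvxx_per t ht]
  -- integration by parts identity
  have hIBP : ∀ t ∈ Set.Ico (0:ℝ) T,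
      (∫ x in (0:ℝ)..(2*π),
        (β t * vx t x * (V t x)^2 + (β t * v t x - γ) * (2 * V t x * Vx t x))) = 0 := by
    intro t ht
    have hd : ∀ x ∈ Set.uIcc (0:ℝ) (2*π),
        HasDerivAt (fun y => (β t * v t y - γ) * (V t y)^2)
          (β t * vx t x * (V t x)^2 + (β t * v t x - γ) * (2 * V t x * Vx t x)) x := by
      intro x _
      have h1 : HasDerivAt (fun y => β t * v t y - γ) (β t * vx t x) x :=
        ((hvx t ht x).const_mul (β t)).sub_const γ
      have h2 : HasDerivAt (fun y => (V t y)^2) (2 * V t x * Vx t x) x := by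
        have h := (hVx t ht x).pow 2
        norm_num at h
        exact h
      exact h1.mul h2
    have hint : IntervalIntegrable
        (fun x => β t * vx t x * (V t x)^2 + (β t * v t x - γ) * (2 * V t x * Vx t x))
        volume 0 (2*π) := by
      apply Continuous.intervalIntegrable
      have hV := sliceX V hVc t ht
      have hVx' := sliceX Vx hVxc t ht
      have hvx' := sliceX vx hvxc t ht
      have hv' := sliceX v hvc t ht
      fun_prop
    rw [intervalIntegral.integral_eq_sub_of_hasDerivAt hd hint]
    have e1 : V t (2*π) = V t 0 := by
      have := hV_per t ht 0; simpa using this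
    have e2 : v t (2*π) = v t 0 := by
      have := hper t 0; simpa using this
    rw [e1, e2]
    ring
  -- value of the integral of 2 V Vt
  have hgid : ∀ t ∈ Set.Ico (0:ℝ) T,
      (∫ x in (0:ℝ)..(2*π), 2 * V t x * Vt t x)
        = -3 * β t * ∫ x in (0:ℝ)..(2*π), (V t x)^2 * vx t x := by
    intro t ht
    have hVcx := sliceX V hVc t ht
    have hVtcx := sliceX Vt hVtc t ht
    have hVxcx := sliceX Vx hVxc t ht
    have hvxcx := sliceX vx hvxc t ht
    have hvcx := sliceX v hvc t ht
    have hpt : ∀ x : ℝ, 2 * V t x * Vt t x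
        = -(β t * vx t x * (V t x)^2 + (β t * v t x - γ) * (2 * V t x * Vx t x))
          + (-3 * β t) * ((V t x)^2 * vx t x) := by
      intro x
      have h := hpde t ht x
      have hVt_eq : Vt t x = -((β t * v t x - γ) * Vx t x) - 2 * β t * V t x * vx t x := by
        linarith
      rw [hVt_eq]; ring
    have h1 : IntervalIntegrable
        (fun x => -(β t * vx t x * (V t x)^2 + (β t * v t x - γ) * (2 * V t x * Vx t x)))
        volume 0 (2*π) := by
      apply Continuous.intervalIntegrable; fun_prop
    have h2 : IntervalIntegrable (fun x => (-3 * β t) * ((V t x)^2 * vx t x)) volume 0 (2*π) := by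
      apply Continuous.intervalIntegrable; fun_prop
    calc (∫ x in (0:ℝ)..(2*π), 2 * V t x * Vt t x)
        = ∫ x in (0:ℝ)..(2*π),
            (-(β t * vx t x * (V t x)^2 + (β t * v t x - γ) * (2 * V t x * Vx t x))
              + (-3 * β t) * ((V t x)^2 * vx t x)) :=
          intervalIntegral.integral_congr (fun x _ => hpt x)
      _ = (∫ x in (0:ℝ)..(2*π),
            -(β t * vx t x * (V t x)^2 + (β t * v t x - γ) * (2 * V t x * Vx t x)))
          + ∫ x in (0:ℝ)..(2*π), (-3 * β t) * ((V t x)^2 * vx t x) :=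
          intervalIntegral.integral_add h1 h2
      _ = -3 * β t * ∫ x in (0:ℝ)..(2*π), (V t x)^2 * vx t x := by
          rw [intervalIntegral.integral_neg, hIBP t ht, neg_zero, zero_add,
            intervalIntegral.integral_const_mul]
  -- representation of the energy as a primitive
  have hrep : ∀ s ∈ Set.Ico (0:ℝ) T,
      (∫ x in (0:ℝ)..(2*π), (V s x)^2)
        = (∫ x in (0:ℝ)..(2*π), (V 0 x)^2)
          + ∫ τ in (0:ℝ)..s, ∫ x in (0:ℝ)..(2*π), 2 * V τ x * Vt τ x := by
    intro s hs
    obtain ⟨hs0, hsT⟩ := hs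
    have h0T : (0:ℝ) ∈ Set.Ico (0:ℝ) T := ⟨le_refl 0, hT⟩
    have hIccsub : Set.Icc (0:ℝ) s ⊆ Set.Ico 0 T := fun τ hτ => ⟨hτ.1, lt_of_le_of_lt hτ.2 hsT⟩
    have hinner : ∀ x : ℝ,
        (∫ τ in (0:ℝ)..s, 2 * V τ x * Vt τ x) = (V s x)^2 - (V 0 x)^2 := by
      intro x
      have hcV : ContinuousOn (fun τ => V τ x) (Set.Icc 0 s) := (sliceT V hVc x).mono hIccsub
      have hcont : ContinuousOn (fun τ => (V τ x)^2) (Set.Icc 0 s) := hcV.pow 2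
      have hderiv : ∀ τ ∈ Set.Ioo (0:ℝ) s,
          HasDerivWithinAt (fun τ => (V τ x)^2) (2 * V τ x * Vt τ x) (Set.Ioi τ) τ := by
        intro τ hτ
        have hτm : τ ∈ Set.Ico (0:ℝ) T := ⟨hτ.1.le, hτ.2.trans hsT⟩
        have hnb : Set.Ico (0:ℝ) T ∈ 𝓝 τ :=
          mem_nhds_iff.mpr ⟨Set.Ioo 0 T, Set.Ioo_subset_Ico_self, isOpen_Ioo,
            ⟨hτ.1, hτ.2.trans hsT⟩⟩
        have hd : HasDerivAt (fun τ => V τ x) (Vt τ x) τ := (hVt τ hτm x).hasDerivAt hnb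
        have h := hd.pow 2
        norm_num at h
        exact h.hasDerivWithinAt
      have hint : IntervalIntegrable (fun τ => 2 * V τ x * Vt τ x) volume 0 s := by
        apply ContinuousOn.intervalIntegrable_of_Icc hs0
        exact (continuousOn_const.mul ((sliceT V hVc x).mono hIccsub)).mul
          ((sliceT Vt hVtc x).mono hIccsub)
      rw [intervalIntegral.integral_eq_sub_of_hasDeriv_right_of_le hs0 hcont hderiv hint]
    have hiV : ∀ r, r ∈ Set.Ico (0:ℝ) T →
        IntervalIntegrable (fun x => (V r x)^2) volume 0 (2*π) := by
      intro r hr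
      exact (((sliceX V hVc r hr).pow 2)).intervalIntegrable _ _
    have hGint : IntegrableOn (fun p : ℝ × ℝ => 2 * V p.1 p.2 * Vt p.1 p.2)
        (Set.Ioc 0 s ×ˢ Set.Ioc 0 (2*π)) volume := by
      have hGc : ContinuousOn (fun p : ℝ × ℝ => 2 * V p.1 p.2 * Vt p.1 p.2)
          (Set.Icc 0 s ×ˢ Set.Icc 0 (2*π)) :=
        ((continuousOn_const.mul hVc).mul hVtc).mono
          (Set.prod_mono hIccsub (Set.subset_univ _))
      exact (hGc.integrableOn_compact (isCompact_Icc.prod isCompact_Icc)).mono_set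
        (Set.prod_mono Set.Ioc_subset_Icc_self Set.Ioc_subset_Icc_self)
    have hswap : (∫ x in Set.Ioc (0:ℝ) (2*π), ∫ τ in Set.Ioc (0:ℝ) s, 2 * V τ x * Vt τ x)
        = ∫ τ in Set.Ioc (0:ℝ) s, ∫ x in Set.Ioc (0:ℝ) (2*π), 2 * V τ x * Vt τ x := by
      have hint2 : Integrable (Function.uncurry (fun τ x => 2 * V τ x * Vt τ x))
          ((volume.restrict (Set.Ioc (0:ℝ) s)).prod (volume.restrict (Set.Ioc (0:ℝ) (2*π)))) := by
        rw [Measure.prod_restrict, ← Measure.volume_eq_prod]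
        exact hGint
      exact (MeasureTheory.integral_integral_swap hint2).symm
    have step1 : (∫ x in (0:ℝ)..(2*π), (V s x)^2) - (∫ x in (0:ℝ)..(2*π), (V 0 x)^2)
        = ∫ x in (0:ℝ)..(2*π), ((V s x)^2 - (V 0 x)^2) :=
      (intervalIntegral.integral_sub (hiV s ⟨hs0, hsT⟩) (hiV 0 h0T)).symm
    have step2 : (∫ x in (0:ℝ)..(2*π), ((V s x)^2 - (V 0 x)^2))
        = ∫ x in (0:ℝ)..(2*π), ∫ τ in (0:ℝ)..s, 2 * V τ x * Vt τ x :=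
      intervalIntegral.integral_congr (fun x _ => (hinner x).symm)
    have step3 : (∫ x in (0:ℝ)..(2*π), ∫ τ in (0:ℝ)..s, 2 * V τ x * Vt τ x)
        = ∫ τ in (0:ℝ)..s, ∫ x in (0:ℝ)..(2*π), 2 * V τ x * Vt τ x := by
      simp only [intervalIntegral.integral_of_le hs0, intervalIntegral.integral_of_le h2π]
      exact hswap
    linarith [step1, step2, step3]
  -- continuity of the g-integral in time
  have hGcont : ∀ t₀ ∈ Set.Ico (0:ℝ) T,
      ContinuousWithinAt (fun s => ∫ x in (0:ℝ)..(2*π), 2 * V s x * Vt s x)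
        (Set.Ico 0 T) t₀ := by
    intro t₀ ht₀
    obtain ⟨b', hb1, hb2⟩ := exists_between ht₀.2
    have hIccb : Set.Icc (0:ℝ) b' ⊆ Set.Ico 0 T := fun τ hτ => ⟨hτ.1, lt_of_le_of_lt hτ.2 hb2⟩
    have hGc : ContinuousOn (fun p : ℝ × ℝ => 2 * V p.1 p.2 * Vt p.1 p.2)
        (Set.Icc 0 b' ×ˢ Set.Icc 0 (2*π)) :=
      ((continuousOn_const.mul hVc).mul hVtc).mono (Set.prod_mono hIccb (Set.subset_univ _))
    obtain ⟨M, hM⟩ := (isCompact_Icc.prod isCompact_Icc).exists_bound_of_continuousOn hGc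
    apply intervalIntegral.continuousWithinAt_of_dominated_interval (bound := fun _ => M)
    · filter_upwards [self_mem_nhdsWithin] with s hs
      exact ((continuous_const.mul (sliceX V hVc s hs)).mul
        (sliceX Vt hVtc s hs)).aestronglyMeasurable
    · have hIio : Set.Iio b' ∈ 𝓝[Set.Ico 0 T] t₀ := nhdsWithin_le_nhds (Iio_mem_nhds hb1)
      filter_upwards [self_mem_nhdsWithin, hIio] with s hs hs'
      apply ae_of_all
      intro x hx
      have hx' : x ∈ Set.Icc (0:ℝ) (2*π) := by
        rw [Set.uIoc_of_le h2π] at hx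
        exact Set.Ioc_subset_Icc_self hx
      exact hM (s, x) ⟨⟨hs.1, le_of_lt hs'⟩, hx'⟩
    · exact intervalIntegrable_const
    · apply ae_of_all
      intro x _
      exact ((continuousOn_const.mul (sliceT V hVc x)).mul (sliceT Vt hVtc x)) t₀ ht₀
  -- Part 1: the derivative identity
  have part1 : ∀ t ∈ Set.Ico (0:ℝ) T,
      HasDerivWithinAt (fun s => ∫ x in (0:ℝ)..(2*π), (V s x)^2)
        (-3 * β t * ∫ x in (0:ℝ)..(2*π), (V t x)^2 * vx t x) (Set.Ico 0 T) t := by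
    intro t ht
    set g : ℝ → ℝ := fun s => ∫ x in (0:ℝ)..(2*π), 2 * V s x * Vt s x with hg
    have hgOn : ContinuousOn g (Set.Ioo 0 T) := by
      intro τ hτ
      exact (hGcont τ ⟨hτ.1.le, hτ.2⟩).mono Set.Ioo_subset_Ico_self
    have hgI : IntervalIntegrable g volume 0 t := by
      apply ContinuousOn.intervalIntegrable_of_Icc ht.1
      intro τ hτ
      exact (hGcont τ ⟨hτ.1, lt_of_le_of_lt hτ.2 ht.2⟩).mono
        (fun y hy => ⟨hy.1, lt_of_le_of_lt hy.2 ht.2⟩)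
    have hprim : HasDerivWithinAt (fun u => ∫ τ in (0:ℝ)..u, g τ) (g t) (Set.Ico 0 T) t := by
      rcases eq_or_lt_of_le ht.1 with h0 | h0
      · -- t = 0
        have h0' : t = 0 := h0.symm
        subst h0'
        have hmeas : StronglyMeasurableAtFilter g (𝓝[>] (0:ℝ)) :=
          ⟨Set.Ioo 0 T, Ioo_mem_nhdsGT_of_mem ⟨le_refl 0, hT⟩,
            hgOn.aestronglyMeasurable measurableSet_Ioo⟩
        have hb : ContinuousWithinAt g (Set.Ioi (0:ℝ)) 0 := by
          apply (hGcont 0 ⟨le_refl 0, hT⟩).mono_of_mem_nhdsWithin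
          apply mem_nhdsWithin.mpr
          exact ⟨Set.Iio T, isOpen_Iio, hT, fun y hy => ⟨le_of_lt hy.2, hy.1⟩⟩
        have hD : HasDerivWithinAt (fun u => ∫ τ in (0:ℝ)..u, g τ) (g 0) (Set.Ici 0) 0 :=
          intervalIntegral.integral_hasDerivWithinAt_right hgI hmeas hb
        exact hD.mono (fun y hy => hy.1)
      · -- 0 < t
        have hmeas : StronglyMeasurableAtFilter g (𝓝 t) :=
          ⟨Set.Ioo 0 T, mem_nhds_iff.mpr ⟨Set.Ioo 0 T, subset_rfl, isOpen_Ioo, ⟨h0, ht.2⟩⟩,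
            hgOn.aestronglyMeasurable measurableSet_Ioo⟩
        have hcontAt : ContinuousAt g t := by
          apply (hGcont t ht).continuousAt
          exact mem_nhds_iff.mpr ⟨Set.Ioo 0 T, Set.Ioo_subset_Ico_self, isOpen_Ioo, ⟨h0, ht.2⟩⟩
        exact (intervalIntegral.integral_hasDerivAt_right hgI hmeas hcontAt).hasDerivWithinAt
    have hD : HasDerivWithinAt
        (fun u => (∫ x in (0:ℝ)..(2*π), (V 0 x)^2) + ∫ τ in (0:ℝ)..u, g τ)
        (g t) (Set.Ico 0 T) t := hprim.const_add _
    have hD2 := hD.congr (fun s hs => hrep s hs) (hrep t ht)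
    rw [show g t = -3 * β t * ∫ x in (0:ℝ)..(2*π), (V t x)^2 * vx t x from hgid t ht] at hD2
    exact hD2
  refine ⟨part1, ?_⟩
  -- Part 2: Grönwall
  intro K hK hbound t ht
  have hIccsub : Set.Icc (0:ℝ) t ⊆ Set.Ico 0 T := fun τ hτ => ⟨hτ.1, lt_of_le_of_lt hτ.2 ht.2⟩
  have hfc : ContinuousOn (fun s => ∫ x in (0:ℝ)..(2*π), (V s x)^2) (Set.Icc 0 t) :=
    fun τ hτ => ((part1 τ (hIccsub hτ)).continuousWithinAt).mono hIccsub
  have key := le_gronwallBound_of_liminf_deriv_right_le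
    (f := fun s => ∫ x in (0:ℝ)..(2*π), (V s x)^2)
    (f' := fun τ => -3 * β τ * ∫ x in (0:ℝ)..(2*π), (V τ x)^2 * vx τ x)
    (δ := ∫ x in (0:ℝ)..(2*π), (V 0 x)^2) (K := 3*K) (ε := 0) (a := 0) (b := t)
    hfc
    (by
      intro τ hτ r hr
      have hτ' : τ ∈ Set.Ico (0:ℝ) T := ⟨hτ.1, hτ.2.trans ht.2⟩
      have hIci : HasDerivWithinAt (fun s => ∫ x in (0:ℝ)..(2*π), (V s x)^2)
          (-3 * β τ * ∫ x in (0:ℝ)..(2*π), (V τ x)^2 * vx τ x) (Set.Ici τ) τ := by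
        apply (part1 τ hτ').mono_of_mem_nhdsWithin
        apply mem_nhdsWithin.mpr
        exact ⟨Set.Iio T, isOpen_Iio, hτ'.2, fun y hy => ⟨hτ'.1.trans hy.2, hy.1⟩⟩
      exact hIci.liminf_right_slope_le hr)
    (le_refl _)
    (by
      intro τ hτ
      have hτ' : τ ∈ Set.Ico (0:ℝ) T := ⟨hτ.1, hτ.2.trans ht.2⟩
      have hVcx := sliceX V hVc τ hτ'
      have hvxcx := sliceX vx hvxc τ hτ'
      have hptw : ∀ x ∈ Set.Icc (0:ℝ) (2*π),
          (-3 * β τ) * ((V τ x)^2 * vx τ x) ≤ (3*K) * (V τ x)^2 := by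
        intro x _
        have h1 := hbound τ hτ' x
        nlinarith [mul_nonneg (by linarith : (0:ℝ) ≤ K + β τ * vx τ x) (sq_nonneg (V τ x))]
      have hi1 : IntervalIntegrable (fun x => (-3 * β τ) * ((V τ x)^2 * vx τ x))
          volume 0 (2*π) := by
        apply Continuous.intervalIntegrable; fun_prop
      have hi2 : IntervalIntegrable (fun x => (3*K) * (V τ x)^2) volume 0 (2*π) := by
        apply Continuous.intervalIntegrable; fun_prop
      have hmono := intervalIntegral.integral_mono_on h2π hi1 hi2 hptw
      rw [intervalIntegral.integral_const_mul, intervalIntegral.integral_const_mul] at hmono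
      show -3 * β τ * (∫ x in (0:ℝ)..(2*π), (V τ x)^2 * vx τ x)
        ≤ 3 * K * (∫ x in (0:ℝ)..(2*π), (V τ x)^2) + 0
      linarith)
    t ⟨ht.1, le_refl t⟩
  rw [sub_zero, gronwallBound_ε0] at key
  calc (∫ x in (0:ℝ)..(2*π), (V t x)^2)
      ≤ (∫ x in (0:ℝ)..(2*π), (V 0 x)^2) * Real.exp (3*K*t) := key
    _ = Real.exp (3*K*t) * ∫ x in (0:ℝ)..(2*π), (V 0 x)^2 := mul_comm _ _
end

section
/- Let T > 0, γ ∈ ℝ, and β : [0,T) → (0,∞) continuous. Let v : [0,T) × ℝ → ℝ be 2π-periodic in x with v, v_x, v_xx, v_t, v_tx continuous, satisfying for all (t,x) ∈ [0,T) × ℝ: v_tx − γ v_xx + β(t) v v_xx = β(t) v² − β(t) v_x²/2 − β(t) (G*(v² + v_x²/2))(t,x), where (G*f)(x) = (1/(2 sinh π)) ∫₀^{2π} cosh((x−y) − 2π⌊(x−y)/(2π)⌋ − π) f(y) dy. Define M(t) = min_{x∈[0,2π]} v_x(t,x). Then M is locally Lipschitz on [0,T), and for almost every t ∈ (0,T):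 M'(t) = β(t)·( v(t,z(t))² − M(t)²/2 − (G*(v² + v_x²/2))(t, z(t)) ) for any z(t) with v_x(t,z(t)) = M(t); in particular M'(t) ≤ (β(t)/2)·( max_{x∈[0,2π]} v(t,x)² − M(t)² ) for almost every t ∈ (0,T). -/
open Real MeasureTheory Set intervalIntegral

/-- Convolution with the Green's function G(x) = cosh(x − 2π⌊x/(2π)⌋ − π)/(2 sinh π)
of 1 − ∂²ₓₓ on the torus 𝕋 = ℝ/2πℤ. -/
noncomputable def Gconv (f : ℝ → ℝ) (x : ℝ) : ℝ :=
  (1 / (2 * Real.sinh π)) *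
    ∫ y in (0 : ℝ)..(2 * π),
      Real.cosh ((x - y) - 2 * π * (⌊(x - y) / (2 * π)⌋ : ℤ) - π) * f y

lemma gconv_key (u u' : ℝ → ℝ) (hu : ∀ x, HasDerivAt u (u' x) x)
    (hu'c : Continuous u') (hperu : ∀ x, u (x + 2 * π) = u x) (z : ℝ) :
    u z ^ 2 / 2 ≤ Gconv (fun y => u y ^ 2 + u' y ^ 2 / 2) z := by
  have htp : (0:ℝ) < 2 * π := by positivity
  have huc : Continuous u := continuous_iff_continuousAt.2 fun x => (hu x).continuousAt
  -- u' is periodic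
  have hperu' : ∀ x, u' (x + 2 * π) = u' x := by
    intro x
    have h2 : HasDerivAt (fun y => u (y + 2 * π)) (u' (x + 2 * π)) x := by
      simpa [Function.comp_def] using (hu (x + 2 * π)).comp x ((hasDerivAt_id x).add_const (2 * π))
    have h3 : (fun y => u (y + 2 * π)) = u := funext hperu
    rw [h3] at h2
    exact h2.unique (hu x)
  set w : ℝ → ℝ := fun y => u y ^ 2 + u' y ^ 2 / 2 with hw
  have hwc : Continuous w := by fun_prop
  have hperw : ∀ x, w (x + 2 * π) = w x := fun x => by simp only [hw, hperu, hperu']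
  set f : ℝ → ℝ := fun s =>
    Real.cosh (s - 2 * π * (⌊s / (2 * π)⌋ : ℤ) - π) * w (z - s) with hf
  have hfper : Function.Periodic f (2 * π) := by
    intro s
    have hfl : ⌊(s + 2 * π) / (2 * π)⌋ = ⌊s / (2 * π)⌋ + 1 := by
      rw [add_div, div_self htp.ne']
      exact Int.floor_add_one _
    have hw2 : w (z - (s + 2 * π)) = w (z - s) := by
      have h := hperw (z - (s + 2 * π))
      rw [show z - (s + 2 * π) + 2 * π = z - s by ring] at h
      exact h.symm
    simp only [hf, hfl, hw2]
    congr 2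
    push_cast
    ring
  -- step A: Gconv integral equals ∫ f (z - y)
  have stepA : (∫ y in (0:ℝ)..(2*π),
      Real.cosh ((z - y) - 2 * π * (⌊(z - y) / (2 * π)⌋ : ℤ) - π) * w y)
      = ∫ y in (0:ℝ)..(2*π), f (z - y) := by
    apply intervalIntegral.integral_congr
    intro y _
    simp only [hf, sub_sub_cancel]
  -- step B+C : substitute and use periodicity
  have stepB : (∫ y in (0:ℝ)..(2*π), f (z - y)) = ∫ s in (0:ℝ)..(2*π), f s := by
    rw [intervalIntegral.integral_comp_sub_left f z]
    have := hfper.intervalIntegral_add_eq (z - 2*π) 0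
    simpa [sub_add_cancel] using this
  -- step D : remove the floor
  have stepD : (∫ s in (0:ℝ)..(2*π), f s)
      = ∫ s in (0:ℝ)..(2*π), Real.cosh (s - π) * w (z - s) := by
    apply intervalIntegral.integral_congr_ae
    have h2 : ∀ᵐ s : ℝ ∂volume, s ≠ 2*π := by
      rw [MeasureTheory.ae_iff]
      simpa [not_not] using measure_singleton (α := ℝ) (2*π)
    filter_upwards [h2] with s hs hmem
    rw [Set.uIoc_of_le htp.le] at hmem
    have hfl : ⌊s / (2 * π)⌋ = 0 := by
      rw [Int.floor_eq_zero_iff]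
      constructor
      · exact div_nonneg hmem.1.le htp.le
      · rw [div_lt_one htp]
        exact lt_of_le_of_ne hmem.2 hs
    simp [hf, hfl]
  -- step E : split cosh
  set Ip : ℝ := ∫ s in (0:ℝ)..(2*π), Real.exp s * w (z - s) with hIpdef
  set Im : ℝ := ∫ s in (0:ℝ)..(2*π), Real.exp (-s) * w (z - s) with hImdef
  have hintp : IntervalIntegrable (fun s => Real.exp s * w (z - s)) volume 0 (2*π) := by
    apply Continuous.intervalIntegrable; fun_prop
  have hintm : IntervalIntegrable (fun s => Real.exp (-s) * w (z - s)) volume 0 (2*π) := by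
    apply Continuous.intervalIntegrable; fun_prop
  have stepE : (∫ s in (0:ℝ)..(2*π), Real.cosh (s - π) * w (z - s))
      = Real.exp (-π) / 2 * Ip + Real.exp π / 2 * Im := by
    have hcosh : ∀ s : ℝ, Real.cosh (s - π) * w (z - s)
        = Real.exp (-π) / 2 * (Real.exp s * w (z - s))
          + Real.exp π / 2 * (Real.exp (-s) * w (z - s)) := by
      intro s
      have e1 : Real.exp (s - π) = Real.exp (-π) * Real.exp s := by
        rw [← Real.exp_add]; ring_nf
      have e2 : Real.exp (π - s) = Real.exp π * Real.exp (-s) := by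
        rw [← Real.exp_add]; ring_nf
      rw [Real.cosh_eq, neg_sub, e1, e2]; ring
    simp only [hcosh]
    rw [intervalIntegral.integral_add ((hintp.const_mul _)) ((hintm.const_mul _)),
      intervalIntegral.integral_const_mul, intervalIntegral.integral_const_mul]
  -- derivative of s ↦ u (z - s)
  have hcomp : ∀ s : ℝ, HasDerivAt (fun s => u (z - s)) (-u' (z - s)) s := by
    intro s
    have h1 : HasDerivAt (fun s : ℝ => z - s) (-1) s := by
      simpa using ((hasDerivAt_id s).const_sub z)
    simpa [mul_comm, Function.comp_def] using (hu (z - s)).comp s h1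
  have huz : u (z - 2*π) = u z := by
    have := hperu (z - 2*π)
    rw [show z - 2*π + 2*π = z by ring] at this
    exact this.symm
  -- FTC bound for Ip
  have hIp : (Real.exp (2*π) - 1) * u z ^ 2 ≤ 2 * Ip := by
    have hF : ∀ s ∈ Set.uIcc (0:ℝ) (2*π), HasDerivAt (fun s => Real.exp s * u (z - s) ^ 2)
        (Real.exp s * (u (z - s) ^ 2 - 2 * u (z - s) * u' (z - s))) s := by
      intro s _
      have := (Real.hasDerivAt_exp s).mul ((hcomp s).pow 2)
      exact this.congr_deriv (by rw [Pi.pow_apply]; ring)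
    have hFint : IntervalIntegrable
        (fun s => Real.exp s * (u (z - s) ^ 2 - 2 * u (z - s) * u' (z - s)))
        volume 0 (2*π) := by
      apply Continuous.intervalIntegrable; fun_prop
    have hftc := intervalIntegral.integral_eq_sub_of_hasDerivAt hF hFint
    have hmono : (∫ s in (0:ℝ)..(2*π),
        Real.exp s * (u (z - s) ^ 2 - 2 * u (z - s) * u' (z - s)))
        ≤ ∫ s in (0:ℝ)..(2*π), 2 * (Real.exp s * w (z - s)) := by
      apply intervalIntegral.integral_mono_on htp.le hFint (hintp.const_mul 2)
      intro s _
      have h1 : u (z - s) ^ 2 - 2 * u (z - s) * u' (z - s) ≤ 2 * w (z - s) := by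
        simp only [hw]
        nlinarith [sq_nonneg (u (z - s) + u' (z - s))]
      nlinarith [Real.exp_pos s, mul_le_mul_of_nonneg_left h1 (Real.exp_pos s).le]
    rw [hftc] at hmono
    rw [intervalIntegral.integral_const_mul] at hmono
    rw [huz] at hmono
    simp only [Real.exp_zero, sub_zero, one_mul] at hmono
    linarith
  -- FTC bound for Im
  have hIm : (1 - Real.exp (-(2*π))) * u z ^ 2 ≤ 2 * Im := by
    have hF : ∀ s ∈ Set.uIcc (0:ℝ) (2*π), HasDerivAt (fun s => -(Real.exp (-s) * u (z - s) ^ 2))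
        (Real.exp (-s) * (u (z - s) ^ 2 + 2 * u (z - s) * u' (z - s))) s := by
      intro s _
      have he : HasDerivAt (fun s : ℝ => Real.exp (-s)) (-Real.exp (-s)) s := by
        simpa [Function.comp_def] using (Real.hasDerivAt_exp (-s)).comp s ((hasDerivAt_id s).neg)
      have := (he.mul ((hcomp s).pow 2)).neg
      exact this.congr_deriv (by rw [Pi.pow_apply]; ring)
    have hFint : IntervalIntegrable
        (fun s => Real.exp (-s) * (u (z - s) ^ 2 + 2 * u (z - s) * u' (z - s)))
        volume 0 (2*π) := by
      apply Continuous.intervalIntegrable; fun_prop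
    have hftc := intervalIntegral.integral_eq_sub_of_hasDerivAt hF hFint
    have hmono : (∫ s in (0:ℝ)..(2*π),
        Real.exp (-s) * (u (z - s) ^ 2 + 2 * u (z - s) * u' (z - s)))
        ≤ ∫ s in (0:ℝ)..(2*π), 2 * (Real.exp (-s) * w (z - s)) := by
      apply intervalIntegral.integral_mono_on htp.le hFint (hintm.const_mul 2)
      intro s _
      have h1 : u (z - s) ^ 2 + 2 * u (z - s) * u' (z - s) ≤ 2 * w (z - s) := by
        simp only [hw]
        nlinarith [sq_nonneg (u (z - s) - u' (z - s))]
      nlinarith [Real.exp_pos (-s), mul_le_mul_of_nonneg_left h1 (Real.exp_pos (-s)).le]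
    rw [hftc] at hmono
    rw [intervalIntegral.integral_const_mul] at hmono
    rw [huz] at hmono
    simp only [Real.exp_zero, sub_zero, one_mul, neg_zero] at hmono
    linarith
  -- assemble
  have hGeq : Gconv w z = 1 / (2 * Real.sinh π) * (Real.exp (-π) / 2 * Ip + Real.exp π / 2 * Im) := by
    rw [Gconv, stepA, stepB, stepD, stepE]
  rw [hGeq]
  have hsinh : 0 < Real.sinh π := Real.sinh_pos_iff.2 Real.pi_pos
  have hE : (0:ℝ) < Real.exp π := Real.exp_pos _
  have hFp : (0:ℝ) < Real.exp (-π) := Real.exp_pos _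
  have hEF : Real.exp π * Real.exp (-π) = 1 := by
    rw [← Real.exp_add]; simp
  have hE2 : Real.exp (2*π) = Real.exp π * Real.exp π := by
    rw [← Real.exp_add]; ring_nf
  have hF2 : Real.exp (-(2*π)) = Real.exp (-π) * Real.exp (-π) := by
    rw [← Real.exp_add]; ring_nf
  rw [hE2] at hIp
  rw [hF2] at hIm
  have b1 : (Real.exp π - Real.exp (-π)) * u z ^ 2 ≤ Real.exp (-π) * (2 * Ip) := by
    have h := mul_le_mul_of_nonneg_left hIp hFp.le
    have he : Real.exp (-π) * ((Real.exp π * Real.exp π - 1) * u z ^ 2)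
        = (Real.exp π - Real.exp (-π)) * u z ^ 2 := by
      linear_combination (Real.exp π * u z ^ 2) * hEF
    linarith [h, he]
  have b2 : (Real.exp π - Real.exp (-π)) * u z ^ 2 ≤ Real.exp π * (2 * Im) := by
    have h := mul_le_mul_of_nonneg_left hIm hE.le
    have he : Real.exp π * ((1 - Real.exp (-π) * Real.exp (-π)) * u z ^ 2)
        = (Real.exp π - Real.exp (-π)) * u z ^ 2 := by
      linear_combination (-(Real.exp (-π) * u z ^ 2)) * hEF
    linarith [h, he]
  have hsinheq : Real.sinh π = (Real.exp π - Real.exp (-π)) / 2 := Real.sinh_eq π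
  have key : Real.sinh π * u z ^ 2 ≤ Real.exp (-π) / 2 * Ip + Real.exp π / 2 * Im := by
    rw [hsinheq]; linarith
  calc u z ^ 2 / 2 = 1 / (2 * Real.sinh π) * (Real.sinh π * u z ^ 2) := by
        field_simp
      _ ≤ 1 / (2 * Real.sinh π) * (Real.exp (-π) / 2 * Ip + Real.exp π / 2 * Im) := by
        apply mul_le_mul_of_nonneg_left key (by positivity)

/-- The Riccati-type evolution (6.14) of the minimal slope M(t) = min_x v_x(t,x)
for a classical 2π-periodic solution of the once-differentiated rescaled DGH
equation (6.13) with c₀ + γ = 0 (Proposition 6.2): M is locally Lipschitz and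
for a.e. t, M'(t) = β(t)(v(t,z)² − M(t)²/2 − G*(v² + v_x²/2)(t,z)) at any
minimizer z, whence M'(t) ≤ (β(t)/2)(max_x v(t,x)² − M(t)²). -/
theorem minimal_slope_riccati_evolution
    (T : ℝ) (hT : 0 < T) (γ : ℝ) (β : ℝ → ℝ)
    (hβ : ContinuousOn β (Set.Ico 0 T)) (hβpos : ∀ t ∈ Set.Ico (0 : ℝ) T, 0 < β t)
    (v vx vxx vt vtx : ℝ → ℝ → ℝ)
    (hper : ∀ t x, v t (x + 2 * π) = v t x)
    (hvx : ∀ t ∈ Set.Ico (0 : ℝ) T, ∀ x : ℝ, HasDerivAt (fun y => v t y) (vx t x) x)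
    (hvxx : ∀ t ∈ Set.Ico (0 : ℝ) T, ∀ x : ℝ, HasDerivAt (fun y => vx t y) (vxx t x) x)
    (hvt : ∀ t ∈ Set.Ico (0 : ℝ) T, ∀ x : ℝ,
      HasDerivWithinAt (fun s => v s x) (vt t x) (Set.Ico 0 T) t)
    (hvtx : ∀ t ∈ Set.Ico (0 : ℝ) T, ∀ x : ℝ,
      HasDerivWithinAt (fun s => vx s x) (vtx t x) (Set.Ico 0 T) t)
    (hvc : ContinuousOn (fun p : ℝ × ℝ => v p.1 p.2) (Set.Ico 0 T ×ˢ Set.univ))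
    (hvxc : ContinuousOn (fun p : ℝ × ℝ => vx p.1 p.2) (Set.Ico 0 T ×ˢ Set.univ))
    (hvxxc : ContinuousOn (fun p : ℝ × ℝ => vxx p.1 p.2) (Set.Ico 0 T ×ˢ Set.univ))
    (hvtc : ContinuousOn (fun p : ℝ × ℝ => vt p.1 p.2) (Set.Ico 0 T ×ˢ Set.univ))
    (hvtxc : ContinuousOn (fun p : ℝ × ℝ => vtx p.1 p.2) (Set.Ico 0 T ×ˢ Set.univ))
    (hpde : ∀ t ∈ Set.Ico (0 : ℝ) T, ∀ x : ℝ,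
      vtx t x - γ * vxx t x + β t * v t x * vxx t x
        = β t * (v t x) ^ 2 - β t * (vx t x) ^ 2 / 2
          - β t * Gconv (fun y => (v t y) ^ 2 + (vx t y) ^ 2 / 2) x)
    (M : ℝ → ℝ) (hM : ∀ t, M t = sInf (vx t '' Set.Icc 0 (2 * π))) :
    (∀ a b : ℝ, 0 ≤ a → b < T → ∃ K : NNReal, LipschitzOnWith K M (Set.Icc a b)) ∧
    (∀ᵐ t ∂(volume.restrict (Set.Ioo 0 T)), ∀ m' : ℝ, HasDerivAt M m' t →
      (∀ z ∈ Set.Icc (0 : ℝ) (2 * π), vx t z = M t →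
        m' = β t * ((v t z) ^ 2 - (M t) ^ 2 / 2
          - Gconv (fun y => (v t y) ^ 2 + (vx t y) ^ 2 / 2) z)) ∧
      m' ≤ (β t / 2) * (sSup ((fun x => (v t x) ^ 2) '' Set.Icc 0 (2 * π)) - (M t) ^ 2)) := by
  have htp : (0:ℝ) < 2 * π := by positivity
  have contvx : ∀ t ∈ Set.Ico (0:ℝ) T, Continuous (vx t) := fun t ht =>
    continuous_iff_continuousAt.2 fun x => (hvxx t ht x).continuousAt
  have contv : ∀ t ∈ Set.Ico (0:ℝ) T, Continuous (v t) := fun t ht =>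
    continuous_iff_continuousAt.2 fun x => (hvx t ht x).continuousAt
  have hne : (Set.Icc (0:ℝ) (2*π)).Nonempty := Set.nonempty_Icc.2 htp.le
  have himg : ∀ t ∈ Set.Ico (0:ℝ) T, IsCompact (vx t '' Set.Icc 0 (2*π)) := fun t ht =>
    isCompact_Icc.image (contvx t ht)
  have hMle : ∀ t ∈ Set.Ico (0:ℝ) T, ∀ x ∈ Set.Icc (0:ℝ) (2*π), M t ≤ vx t x := by
    intro t ht x hx
    rw [hM]
    exact csInf_le (himg t ht).bddBelow (Set.mem_image_of_mem _ hx)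
  have hMex : ∀ t ∈ Set.Ico (0:ℝ) T, ∃ z ∈ Set.Icc (0:ℝ) (2*π), vx t z = M t := by
    intro t ht
    have hmem := (himg t ht).sInf_mem (hne.image _)
    rw [← hM] at hmem
    obtain ⟨z, hz, hzeq⟩ := hmem
    exact ⟨z, hz, hzeq⟩
  -- periodicity of the slope
  have hvxper : ∀ t ∈ Set.Ico (0:ℝ) T, Function.Periodic (vx t) (2*π) := by
    intro t ht x
    have h2 : HasDerivAt (fun y => v t (y + 2 * π)) (vx t (x + 2 * π)) x := by
      simpa [Function.comp_def] using (hvx t ht (x + 2 * π)).comp x ((hasDerivAt_id x).add_const (2 * π))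
    have h3 : (fun y => v t (y + 2 * π)) = fun y => v t y := funext (hper t)
    rw [h3] at h2
    exact h2.unique (hvx t ht x)
  have hMleR : ∀ t ∈ Set.Ico (0:ℝ) T, ∀ x : ℝ, M t ≤ vx t x := by
    intro t ht x
    have h0 : vx t (x - (⌊x / (2*π)⌋ : ℤ) • (2*π)) = vx t x := (hvxper t ht).sub_zsmul_eq _
    have hx0 : x - (⌊x / (2*π)⌋ : ℤ) • (2*π) ∈ Set.Icc (0:ℝ) (2*π) := by
      rw [zsmul_eq_mul]
      constructor
      · exact Int.sub_floor_div_mul_nonneg x htp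
      · exact (Int.sub_floor_div_mul_lt x htp).le
    rw [← h0]
    exact hMle t ht _ hx0
  constructor
  · -- local Lipschitz bounds
    intro a b ha hb
    rcases le_or_gt a b with hab | hab
    swap
    · exact ⟨1, fun x hx => absurd hx (by simp [Set.Icc_eq_empty (not_le.2 hab)])⟩
    have hsub : Set.Icc a b ⊆ Set.Ico 0 T := fun s hs =>
      ⟨ha.trans hs.1, lt_of_le_of_lt hs.2 hb⟩
    have hcpt : IsCompact (Set.Icc a b ×ˢ Set.Icc (0:ℝ) (2*π)) :=
      isCompact_Icc.prod isCompact_Icc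
    have hconts : ContinuousOn (fun p : ℝ × ℝ => vtx p.1 p.2)
        (Set.Icc a b ×ˢ Set.Icc (0:ℝ) (2*π)) :=
      hvtxc.mono (Set.prod_mono hsub (Set.subset_univ _))
    obtain ⟨C, hC⟩ := hcpt.exists_bound_of_continuousOn hconts
    set K : NNReal := ⟨max C 0, le_max_right _ _⟩ with hK
    refine ⟨K, ?_⟩
    rw [lipschitzOnWith_iff_dist_le_mul]
    have key : ∀ s ∈ Set.Icc a b, ∀ r ∈ Set.Icc a b, M s - M r ≤ (K : ℝ) * dist s r := by
      intro s hs r hr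
      obtain ⟨z, hz, hzeq⟩ := hMex r (hsub hr)
      have lipx : LipschitzOnWith K (fun τ => vx τ z) (Set.Icc a b) := by
        apply (convex_Icc a b).lipschitzOnWith_of_nnnorm_hasDerivWithin_le
          (f' := fun τ => vtx τ z)
          (fun τ hτ => (hvtx τ (hsub hτ) z).mono hsub)
        intro τ hτ
        have := hC (τ, z) ⟨hτ, hz⟩
        rw [← NNReal.coe_le_coe]
        simp only [coe_nnnorm, hK, NNReal.coe_mk]
        exact le_trans this (le_max_left _ _)
      have hdist := lipschitzOnWith_iff_dist_le_mul.1 lipx s hs r hr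
      calc M s - M r ≤ vx s z - vx r z := by
            have h1 := hMle s (hsub hs) z hz
            linarith [h1, hzeq.ge, hzeq.le]
          _ ≤ |vx s z - vx r z| := le_abs_self _
          _ ≤ (K : ℝ) * dist s r := by
            rwa [Real.dist_eq] at hdist
    intro s hs r hr
    rw [Real.dist_eq (M s) (M r), abs_sub_le_iff]
    exact ⟨key s hs r hr, by rw [dist_comm]; exact key r hr s hs⟩
  · -- the a.e. (in fact everywhere on (0,T)) identity and bound
    rw [MeasureTheory.ae_restrict_iff' measurableSet_Ioo]
    refine MeasureTheory.ae_of_all _ ?_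
    intro t ht m' hm'
    have ht' : t ∈ Set.Ico 0 T := ⟨ht.1.le, ht.2⟩
    have hnhds : Set.Ioo (0:ℝ) T ∈ nhds t := isOpen_Ioo.mem_nhds ht
    have hcore : ∀ z ∈ Set.Icc (0:ℝ) (2*π), vx t z = M t →
        m' = β t * ((v t z) ^ 2 - (M t) ^ 2 / 2
          - Gconv (fun y => (v t y) ^ 2 + (vx t y) ^ 2 / 2) z) := by
      intro z hz hzM
      have hD : HasDerivAt (fun s => vx s z) (vtx t z) t :=
        (hvtx t ht' z).hasDerivAt (Filter.mem_of_superset hnhds Set.Ioo_subset_Ico_self)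
      have hg : HasDerivAt (fun s => vx s z - M s) (vtx t z - m') t := hD.sub hm'
      have hmin : IsLocalMin (fun s => vx s z - M s) t := by
        apply Filter.eventually_of_mem hnhds
        intro s hs
        have h1 := hMle s ⟨hs.1.le, hs.2⟩ z hz
        simp only [hzM]
        linarith
      have h0 : vtx t z - m' = 0 := hmin.hasDerivAt_eq_zero hg
      have hminx : IsLocalMin (vx t) z :=
        Filter.Eventually.of_forall fun x => by rw [hzM]; exact hMleR t ht' x
      have hxx0 : vxx t z = 0 := hminx.hasDerivAt_eq_zero (hvxx t ht' z)
      have hp := hpde t ht' z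
      rw [hxx0, hzM] at hp
      have hm : m' = vtx t z := by linarith
      rw [hm]
      linarith [hp]
    refine ⟨hcore, ?_⟩
    obtain ⟨z, hz, hzM⟩ := hMex t ht'
    have hmeq := hcore z hz hzM
    have hkey : (v t z) ^ 2 / 2 ≤ Gconv (fun y => (v t y) ^ 2 + (vx t y) ^ 2 / 2) z :=
      gconv_key (v t) (vx t) (hvx t ht') (contvx t ht') (hper t) z
    have hS : (v t z) ^ 2 ≤ sSup ((fun x => (v t x) ^ 2) '' Set.Icc 0 (2*π)) := by
      apply le_csSup
      · exact (isCompact_Icc.image ((contv t ht').pow 2)).bddAbove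
      · exact Set.mem_image_of_mem _ hz
    have hβp := hβpos t ht'
    rw [hmeq]
    nlinarith [mul_le_mul_of_nonneg_left hkey hβp.le, mul_le_mul_of_nonneg_left hS hβp.le]
end

section
/- Let T ∈ (0,∞], N ≥ 0, let β : [0,T) → (0,∞) be continuous, and let M : [0,T) → ℝ be locally Lipschitz with M'(t) ≤ β(t) N − β(t) M(t)²/2 for almost every t ∈ (0,T). If M(0) < −√(2N), then M(t) ≤ −√(2N) for all t ∈ [0,T) and M is nonincreasing on [0,T). -/
open Real MeasureTheory Set

lemma lipschitz_decrease_of_ae_deriv_nonpos {K : NNReal} {f : ℝ → ℝ}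
    (hf : LipschitzWith K f) {a b : ℝ} (hab : a ≤ b)
    (h : ∀ᵐ t ∂(volume : Measure ℝ), t ∈ Ioo a b → ∀ m' : ℝ, HasDerivAt f m' t → m' ≤ 0) :
    f b ≤ f a := by
  set g : ℝ → ℝ := fun t => K * t - f t with hg
  have hgmono : Monotone g := by
    intro x y hxy
    have := hf.dist_le_mul x y
    rw [Real.dist_eq, Real.dist_eq] at this
    have h2 : |x - y| = y - x := by rw [abs_sub_comm]; exact abs_of_nonneg (by linarith)
    rw [h2] at this
    have h3 := (abs_le.1 this).1
    simp only [hg]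
    nlinarith
  have hgcont : Continuous g := by
    have : Continuous f := hf.continuous
    continuity
  -- the Stieltjes function of g equals g
  have hGeq : ∀ x, hgmono.stieltjesFunction x = g x := by
    intro x
    rw [Monotone.stieltjesFunction_eq]
    exact rightLim_eq_of_tendsto (h := nhdsGT_neBot x)
      ((hgcont.tendsto x).mono_left nhdsWithin_le_nhds)
  set μ := hgmono.stieltjesFunction.measure with hμ
  have hae : ∀ᵐ t ∂(volume : Measure ℝ), t ∈ Ioo a b →
      ENNReal.ofReal (K : ℝ) ≤ μ.rnDeriv volume t := by
    filter_upwards [h, hgmono.ae_hasDerivAt] with t ht hder htmem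
    have hfd : HasDerivAt f ((K : ℝ) - (μ.rnDeriv volume t).toReal) t := by
      have hid : HasDerivAt (fun u : ℝ => (K : ℝ) * u) (K : ℝ) t := by
        simpa using (hasDerivAt_id t).const_mul (K : ℝ)
      have := hid.sub hder
      simpa [hg, Pi.sub_def] using this
    have hle := ht htmem _ hfd
    have hKle : (K : ℝ) ≤ (μ.rnDeriv volume t).toReal := by linarith
    rcases eq_or_ne (μ.rnDeriv volume t) ⊤ with htop | htop
    · simp [htop]
    · rw [← ENNReal.ofReal_toReal htop]
      exact ENNReal.ofReal_le_ofReal hKle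
  have key : ENNReal.ofReal ((K : ℝ) * (b - a)) ≤ ENNReal.ofReal (g b - g a) := by
    calc ENNReal.ofReal ((K : ℝ) * (b - a))
        = ENNReal.ofReal (K : ℝ) * volume (Ioo a b) := by
          rw [Real.volume_Ioo, ← ENNReal.ofReal_mul K.coe_nonneg]
      _ = ∫⁻ _ in Ioo a b, ENNReal.ofReal (K : ℝ) ∂volume := by
          rw [setLIntegral_const]
      _ ≤ ∫⁻ t in Ioo a b, μ.rnDeriv volume t ∂volume := by
          refine lintegral_mono_ae ?_
          exact (ae_restrict_iff' measurableSet_Ioo).2 hae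
      _ ≤ ∫⁻ t in Ioc a b, μ.rnDeriv volume t ∂volume :=
          lintegral_mono_set Ioo_subset_Ioc_self
      _ ≤ μ (Ioc a b) := Measure.setLIntegral_rnDeriv_le _
      _ = ENNReal.ofReal (hgmono.stieltjesFunction b - hgmono.stieltjesFunction a) := by
          rw [hμ, StieltjesFunction.measure_Ioc]
      _ = ENNReal.ofReal (g b - g a) := by rw [hGeq, hGeq]
  rcases (ENNReal.ofReal_le_ofReal_iff').1 key with hc | hc
  · simp only [hg] at hc; nlinarith
  · have hK0 : (K : ℝ) * (b - a) = 0 :=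
      le_antisymm hc (mul_nonneg K.coe_nonneg (by linarith))
    have := hgmono hab
    simp only [hg] at this
    nlinarith


/-- The persistence statement (6.4'') of Proposition 6.2, as a deterministic
Riccati comparison result: if M is locally Lipschitz on [0,T) with
M' ≤ βN − βM²/2 a.e. and M(0) < −√(2N), then M(t) ≤ −√(2N) on [0,T) and M is
nonincreasing there. Here T ∈ (0,∞] is encoded as an extended real number. -/
theorem riccati_persistence (T : EReal) (hT : 0 < T) (N : ℝ) (hN : 0 ≤ N)
    (β : ℝ → ℝ) (hβc : ContinuousOn β {t : ℝ | 0 ≤ t ∧ (t : EReal) < T})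
    (hβpos : ∀ t : ℝ, 0 ≤ t → (t : EReal) < T → 0 < β t)
    (M : ℝ → ℝ)
    (hMlip : ∀ a b : ℝ, 0 ≤ a → (b : EReal) < T →
      ∃ K : NNReal, LipschitzOnWith K M (Set.Icc a b))
    (hRic : ∀ᵐ (t : ℝ) ∂(volume : Measure ℝ), 0 < t → (t : EReal) < T →
      ∀ m' : ℝ, HasDerivAt M m' t → m' ≤ β t * N - β t * (M t) ^ 2 / 2)
    (hM0 : M 0 < -Real.sqrt (2 * N)) :
    (∀ t : ℝ, 0 ≤ t → (t : EReal) < T → M t ≤ -Real.sqrt (2 * N)) ∧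
    AntitoneOn M {t : ℝ | 0 ≤ t ∧ (t : EReal) < T} := by
  set s := Real.sqrt (2 * N) with hsdef
  have hs0 : 0 ≤ s := Real.sqrt_nonneg _
  have hs2 : s ^ 2 = 2 * N := Real.sq_sqrt (by linarith)
  -- Key comparison step: if M ≤ -s on the interior of [a, b] ⊆ [0, T), then M b ≤ M a.
  have key : ∀ a b : ℝ, 0 ≤ a → a ≤ b → (b : EReal) < T →
      (∀ t ∈ Ioo a b, M t ≤ -s) → M b ≤ M a := by
    intro a b ha hab hb hsm
    obtain ⟨K, hK⟩ := hMlip a b ha hb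
    obtain ⟨g, hg, hgeq⟩ := hK.extend_real
    have hga : M a = g a := hgeq (left_mem_Icc.2 hab)
    have hgb : M b = g b := hgeq (right_mem_Icc.2 hab)
    rw [hga, hgb]
    refine lipschitz_decrease_of_ae_deriv_nonpos hg hab ?_
    filter_upwards [hRic] with t ht htmem m' hm'
    have ht0 : 0 < t := lt_of_le_of_lt ha htmem.1
    have htT : (t : EReal) < T := lt_trans (by exact_mod_cast htmem.2) hb
    have hMg : M =ᶠ[nhds t] g :=
      Filter.eventuallyEq_of_mem (Icc_mem_nhds htmem.1 htmem.2) hgeq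
    have hMd : HasDerivAt M m' t := (hMg.hasDerivAt_iff).2 hm'
    have hle := ht ht0 htT m' hMd
    have hms : M t ≤ -s := hsm t htmem
    have hβ : 0 < β t := hβpos t ht0.le htT
    have hM2 : 2 * N ≤ M t ^ 2 := by
      nlinarith [mul_nonneg (by linarith : (0:ℝ) ≤ -s - M t) (by linarith : (0:ℝ) ≤ s - M t)]
    nlinarith [mul_nonneg hβ.le (by linarith : (0:ℝ) ≤ M t ^ 2 - 2 * N)]
  -- First: M stays strictly below -s on [0, T).
  have part1 : ∀ t : ℝ, 0 ≤ t → (t : EReal) < T → M t < -s := by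
    intro t ht htT
    by_contra hcon
    push_neg at hcon
    obtain ⟨K, hK⟩ := hMlip 0 t le_rfl htT
    have hcont : ContinuousOn M (Icc 0 t) := hK.continuousOn
    set A := Icc 0 t ∩ M ⁻¹' Ici (-s) with hA
    have hA_ne : A.Nonempty := ⟨t, ⟨ht, le_rfl⟩, hcon⟩
    have hA_closed : IsClosed A :=
      hcont.preimage_isClosed_of_isClosed isClosed_Icc isClosed_Ici
    have hbdd : BddBelow A := ⟨0, fun u hu => hu.1.1⟩
    set c := sInf A with hc
    have hcA : c ∈ A := hA_closed.csInf_mem hA_ne hbdd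
    have hc0 : 0 < c := by
      rcases hcA.1.1.lt_or_eq with h | h
      · exact h
      · exfalso
        have : -s ≤ M 0 := by rw [h]; exact hcA.2
        linarith
    have hcT : (c : EReal) < T := lt_of_le_of_lt (by exact_mod_cast hcA.1.2) htT
    have hlt : ∀ u ∈ Ioo 0 c, M u ≤ -s := by
      intro u hu
      by_contra h'
      push_neg at h'
      have huA : u ∈ A := ⟨⟨hu.1.le, hu.2.le.trans hcA.1.2⟩, h'.le⟩
      exact absurd (csInf_le hbdd huA) (not_le.2 hu.2)
    have := key 0 c le_rfl hc0.le hcT hlt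
    have : -s ≤ M c := hcA.2
    linarith [key 0 c le_rfl hc0.le hcT hlt]
  constructor
  · exact fun t ht htT => (part1 t ht htT).le
  · rintro a ⟨ha0, haT⟩ b ⟨hb0, hbT⟩ hab
    refine key a b ha0 hab hbT fun u hu => ?_
    have huT : (u : EReal) < T := lt_trans (by exact_mod_cast hu.2) hbT
    exact (part1 u (ha0.trans hu.1.le) huT).le
end

section
/- Let N ≥ 0, b* > 0, c ∈ (0,1), and let β : [0,∞) → (0,∞) be continuous with β(t) ≥ c·e^{−b* t / 2} for all t ≥ 0. Then there is no locally Lipschitz function M : [0,∞) → ℝ satisfying both M'(t) ≤ β(t) N − β(t) M(t)²/2 for almost every t > 0 and M(0) < −(1/2)√((b*)²/c² + 8N) − b*/(2c). Equivalently, any locally Lipschitz M : [0,T) → ℝ satisfying this differential inequality almost everywhere together with this initial bound, and defined on a maximal interval, must have T < ∞. -/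
open Real MeasureTheory Set

open Filter Topology

lemma aux_slope_seq {h : ℝ → ℝ} {d x : ℝ} (hd : HasDerivAt h d x) :
    Tendsto (fun n : ℕ => (h (x + 1/((n:ℝ)+1)) - h x) * ((n:ℝ)+1)) atTop (𝓝 d) := by
  have h1 : Tendsto (fun n : ℕ => x + 1/((n:ℝ)+1)) atTop (𝓝[≠] x) := by
    apply tendsto_nhdsWithin_of_tendsto_nhds_of_eventually_within
    · simpa using tendsto_const_nhds.add (tendsto_one_div_add_atTop_nhds_zero_nat (𝕜 := ℝ))
    · filter_upwards with n
      have hpos : (0:ℝ) < 1/((n:ℝ)+1) := by positivity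
      simp only [mem_compl_iff, mem_singleton_iff]
      intro hcontra
      nlinarith [hcontra]
  have h2 := (hasDerivAt_iff_tendsto_slope.1 hd).comp h1
  refine h2.congr fun n => ?_
  have hpos : (0:ℝ) < 1/((n:ℝ)+1) := by positivity
  simp only [Function.comp_apply, slope_def_field]
  field_simp
  ring

lemma aux_deriv_abs_le {f : ℝ → ℝ} {K : NNReal} (hf : LipschitzWith K f) (x : ℝ) :
    |deriv f x| ≤ K := by
  by_cases hx : DifferentiableAt ℝ f x
  · have h1 : ‖fderiv ℝ f x‖ ≤ K := norm_fderiv_le_of_lipschitz ℝ hf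
    have h2 : deriv f x = fderiv ℝ f x 1 := fderiv_apply_one_eq_deriv.symm
    calc |deriv f x| = ‖fderiv ℝ f x 1‖ := by rw [h2]; rfl
      _ ≤ ‖fderiv ℝ f x‖ * ‖(1:ℝ)‖ := (fderiv ℝ f x).le_opNorm 1
      _ ≤ K := by simpa using h1
  · rw [deriv_zero_of_not_differentiableAt hx]; simpa using K.coe_nonneg

lemma aux_deriv_integrable {f : ℝ → ℝ} {K : NNReal} (hf : LipschitzWith K f) (a b : ℝ) :
    IntervalIntegrable (deriv f) volume a b := by
  rw [intervalIntegrable_iff]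
  apply Measure.integrableOn_of_bounded (M := (K:ℝ))
  · exact (measure_Ioc_lt_top (a := min a b) (b := max a b)).ne
  · exact (measurable_deriv f).aestronglyMeasurable
  · filter_upwards with x using by simpa [Real.norm_eq_abs] using aux_deriv_abs_le hf x

lemma aux_lip_ftc {f : ℝ → ℝ} {K : NNReal} (hf : LipschitzWith K f) (a b : ℝ) :
    f b - f a = ∫ x in a..b, deriv f x := by
  have hcont : Continuous f := hf.continuous
  set F : ℕ → ℝ → ℝ := fun n x => (f (x + 1/((n:ℝ)+1)) - f x) * ((n:ℝ)+1) with hF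
  have hbound : ∀ n x, |F n x| ≤ (K:ℝ) := by
    intro n x
    have hd := hf.dist_le_mul (x + 1/((n:ℝ)+1)) x
    rw [Real.dist_eq, Real.dist_eq] at hd
    have hpos : (0:ℝ) < 1/((n:ℝ)+1) := by positivity
    have : |f (x + 1/((n:ℝ)+1)) - f x| ≤ (K:ℝ) * (1/((n:ℝ)+1)) := by
      have he : x + 1/((n:ℝ)+1) - x = 1/((n:ℝ)+1) := by ring
      rw [he, abs_of_pos hpos] at hd; exact hd
    have h2 : |F n x| = |f (x + 1/((n:ℝ)+1)) - f x| * ((n:ℝ)+1) := by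
      rw [hF]; rw [abs_mul]
      congr 1
      exact abs_of_pos (by positivity)
    rw [h2]
    calc |f (x + 1/((n:ℝ)+1)) - f x| * ((n:ℝ)+1)
        ≤ ((K:ℝ) * (1/((n:ℝ)+1))) * ((n:ℝ)+1) := by
          apply mul_le_mul_of_nonneg_right this (by positivity)
      _ = (K:ℝ) := by field_simp
  have key : Tendsto (fun n => ∫ x in a..b, F n x) atTop (𝓝 (∫ x in a..b, deriv f x)) := by
    apply intervalIntegral.tendsto_integral_filter_of_dominated_convergence (fun _ => (K:ℝ))
    · filter_upwards with n
      exact ((hcont.comp (continuous_id.add continuous_const)).sub hcont).mul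
        continuous_const |>.aestronglyMeasurable
    · filter_upwards with n
      filter_upwards with x _
      simpa [Real.norm_eq_abs] using hbound n x
    · exact intervalIntegrable_const
    · filter_upwards [hf.ae_differentiableAt_of_real] with x hx _
      exact aux_slope_seq hx.hasDerivAt
  have hint : ∀ c d : ℝ, IntervalIntegrable f volume c d := fun c d =>
    hcont.intervalIntegrable c d
  set G : ℝ → ℝ := fun y => ∫ x in a..y, f x with hG
  have hGd : ∀ y, HasDerivAt G (f y) y := fun y =>
    intervalIntegral.integral_hasDerivAt_right (hint a y)
      hcont.stronglyMeasurable.stronglyMeasurableAtFilter hcont.continuousAt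
  have hval : ∀ n, ∫ x in a..b, F n x
      = ((G (b + 1/((n:ℝ)+1)) - G b) - (G (a + 1/((n:ℝ)+1)) - G a)) * ((n:ℝ)+1) := by
    intro n
    set u := 1/((n:ℝ)+1) with hu
    have h1 : ∫ x in a..b, F n x = (∫ x in a..b, (f (x + u) - f x)) * ((n:ℝ)+1) := by
      rw [hF]
      exact intervalIntegral.integral_mul_const _ _
    have h2 : ∫ x in a..b, (f (x + u) - f x)
        = (∫ x in a..b, f (x + u)) - ∫ x in a..b, f x := by
      apply intervalIntegral.integral_sub
      · exact (hcont.comp (continuous_id.add continuous_const)).intervalIntegrable a b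
      · exact hint a b
    have h3 : (∫ x in a..b, f (x + u)) = ∫ x in (a+u)..(b+u), f x :=
      intervalIntegral.integral_comp_add_right f u
    have h4 : G (a + u) + ∫ x in (a+u)..(b+u), f x = G (b + u) :=
      intervalIntegral.integral_add_adjacent_intervals (hint a (a+u)) (hint (a+u) (b+u))
    have h5 : G a = 0 := intervalIntegral.integral_same
    have h6 : G b = ∫ x in a..b, f x := rfl
    rw [h1, h2, h3]
    rw [← h4, h5, h6]
    ring
  have lim2 : Tendsto (fun n => ∫ x in a..b, F n x) atTop (𝓝 (f b - f a)) := by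
    have hb2 := aux_slope_seq (hGd b)
    have ha2 := aux_slope_seq (hGd a)
    have := hb2.sub ha2
    refine this.congr fun n => ?_
    rw [hval n]; ring
  exact tendsto_nhds_unique lim2 key

set_option maxHeartbeats 2000000 in
/-- The deterministic core of Proposition 6.3 (pathwise finite-time blow-up):
if β(t) ≥ c e^{−b*t/2} on [0,∞), there is no locally Lipschitz M : [0,∞) → ℝ
satisfying M' ≤ βN − βM²/2 a.e. together with the initial bound
M(0) < −(1/2)√((b*)²/c² + 8N) − b*/(2c). -/
theorem wave_breaking_finite_time (N bstar c : ℝ) (hN : 0 ≤ N) (hb : 0 < bstar)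
    (hc0 : 0 < c) (hc1 : c < 1) (β : ℝ → ℝ)
    (hβc : ContinuousOn β (Set.Ici 0)) (hβpos : ∀ t : ℝ, 0 ≤ t → 0 < β t)
    (hβlb : ∀ t : ℝ, 0 ≤ t → c * Real.exp (-bstar * t / 2) ≤ β t) :
    ¬ ∃ M : ℝ → ℝ,
      (∀ a b : ℝ, 0 ≤ a → ∃ K : NNReal, LipschitzOnWith K M (Set.Icc a b)) ∧
      (∀ᵐ (t : ℝ) ∂(volume : Measure ℝ), 0 < t →
        ∀ m' : ℝ, HasDerivAt M m' t → m' ≤ β t * N - β t * (M t) ^ 2 / 2) ∧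
      M 0 < -(1 / 2) * Real.sqrt (bstar ^ 2 / c ^ 2 + 8 * N) - bstar / (2 * c) := by
  rintro ⟨M, hlip, h2, h0⟩
  -- Constants
  obtain ⟨s, hs⟩ : ∃ s : ℝ, s = Real.sqrt (bstar ^ 2 / c ^ 2 + 8 * N) := ⟨_, rfl⟩
  rw [← hs] at h0
  have hsq : s ^ 2 = bstar ^ 2 / c ^ 2 + 8 * N := by rw [hs]; exact Real.sq_sqrt (by positivity)
  have hsq2 : c ^ 2 * s ^ 2 = bstar ^ 2 + 8 * c ^ 2 * N := by
    rw [hsq]; field_simp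
  have hsnn : 0 ≤ s := by rw [hs]; exact Real.sqrt_nonneg _
  obtain ⟨A0, hA0def⟩ : ∃ A0 : ℝ, A0 = -M 0 := ⟨_, rfl⟩
  have hA0lb : s / 2 + bstar / (2 * c) < A0 := by
    rw [hA0def]; nlinarith
  have hA0lb' : c * s + bstar < 2 * c * A0 := by
    have h1 := mul_lt_mul_of_pos_right hA0lb (by positivity : (0:ℝ) < 2 * c)
    have h2 : (s / 2 + bstar / (2 * c)) * (2 * c) = c * s + bstar := by field_simp
    rw [h2] at h1
    linarith
  have hA0pos : 0 < A0 := by nlinarith [mul_nonneg hc0.le hsnn]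
  have h2A : s < 2 * A0 := by nlinarith
  have hs2 : s ^ 2 < 4 * A0 ^ 2 := by nlinarith [mul_self_lt_mul_self hsnn h2A]
  have h2N : 2 * N < A0 ^ 2 := by nlinarith [mul_pos hc0 hc0]
  have hkey : 0 < c * A0 ^ 2 - bstar * A0 - 2 * c * N := by
    have hp := mul_pos (by nlinarith [mul_nonneg hc0.le hsnn] : (0:ℝ) < 2 * c * A0 - bstar - c * s)
      (by nlinarith [mul_nonneg hc0.le hsnn] : (0:ℝ) < 2 * c * A0 - bstar + c * s)
    nlinarith [hp]
  obtain ⟨κ, hκdef⟩ : ∃ κ : ℝ, κ = (A0 ^ 2 - 2 * N) / (2 * A0 ^ 2) := ⟨_, rfl⟩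
  have hκpos : 0 < κ := hκdef ▸ div_pos (by linarith) (by positivity)
  obtain ⟨D, hDdef⟩ : ∃ D : ℝ, D = 2 * κ * c / bstar := ⟨_, rfl⟩
  have hDpos : 0 < D := by rw [hDdef]; positivity
  obtain ⟨δ, hδdef⟩ : ∃ δ : ℝ, δ = D - 1 / A0 := ⟨_, rfl⟩
  have hδpos : 0 < δ := by
    have h : D - 1 / A0 = (c * (A0 ^ 2 - 2 * N) - bstar * A0) / (bstar * A0 ^ 2) := by
      rw [hDdef, hκdef]; field_simp
    rw [hδdef, h]
    apply div_pos (by nlinarith) (by positivity)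
  obtain ⟨T, hTdef⟩ : ∃ T : ℝ, T = max 1 (2 / bstar * Real.log (D / δ) + 1) := ⟨_, rfl⟩
  have hT1 : (1:ℝ) ≤ T := hTdef ▸ le_max_left _ _
  have hT0 : (0:ℝ) ≤ T := by linarith
  have hTexp : Real.exp (-bstar * T / 2) < δ / D := by
    have hlog : 2 / bstar * Real.log (D / δ) + 1 ≤ T := hTdef ▸ le_max_right _ _
    have h1 : -bstar * T / 2 < Real.log (δ / D) := by
      have h2 : Real.log (δ / D) = -Real.log (D / δ) := by
        rw [Real.log_div hδpos.ne' hDpos.ne', Real.log_div hDpos.ne' hδpos.ne']; ring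
      rw [h2]
      have h3 := mul_le_mul_of_nonneg_left hlog hb.le
      have h4 : bstar * (2 / bstar * Real.log (D / δ) + 1)
          = 2 * Real.log (D / δ) + bstar := by field_simp
      rw [h4] at h3
      nlinarith
    calc Real.exp (-bstar * T / 2) < Real.exp (Real.log (δ / D)) := Real.exp_lt_exp.2 h1
      _ = δ / D := Real.exp_log (by positivity)
  -- Lipschitz extension
  obtain ⟨K, hK⟩ := hlip 0 (T + 1) le_rfl
  obtain ⟨g, hg, hgeq⟩ := hK.extend_real
  have hg0 : g 0 = -A0 := by
    have := hgeq (⟨le_rfl, by linarith⟩ : (0:ℝ) ∈ Icc (0:ℝ) (T + 1))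
    rw [← this, hA0def]; ring
  -- transfer of the a.e. differential inequality to g
  have hae : ∀ᵐ t ∂(volume : Measure ℝ), t ∈ Ioo (0:ℝ) (T + 1) → DifferentiableAt ℝ g t →
      deriv g t ≤ β t * N - β t * (g t) ^ 2 / 2 := by
    filter_upwards [h2] with t ht hmem hdiff
    have hnb : Icc (0:ℝ) (T + 1) ∈ 𝓝 t := Icc_mem_nhds hmem.1 hmem.2
    have heq : M =ᶠ[𝓝 t] g := by filter_upwards [hnb] with x hx using hgeq hx
    have hder : HasDerivAt M (deriv g t) t := (hdiff.hasDerivAt).congr_of_eventuallyEq heq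
    have h5 := ht hmem.1 _ hder
    rwa [hgeq (Ioo_subset_Icc_self hmem)] at h5
  -- Step 1 : invariance g ≤ -A0 on [0, T+1]
  have step1 : ∀ t ∈ Icc (0:ℝ) (T + 1), g t ≤ -A0 := by
    by_contra hcon
    push_neg at hcon
    obtain ⟨t₁, ht₁mem, ht₁⟩ := hcon
    have hsqrt2N : (Real.sqrt (2 * N)) ^ 2 = 2 * N := Real.sq_sqrt (by positivity)
    have hsqrt2Nnn := Real.sqrt_nonneg (2 * N)
    have hA0gt : Real.sqrt (2 * N) < A0 := by nlinarith
    set L : ℝ := min (g t₁) (-Real.sqrt (2 * N)) with hLdef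
    have hLgt : -A0 < L := lt_min ht₁ (by linarith)
    have ht₁0 : 0 ≤ t₁ := ht₁mem.1
    set S : Set ℝ := Icc 0 t₁ ∩ {u | g u ≤ -A0} with hSdef
    have hScompact : IsCompact S :=
      isCompact_Icc.inter_right (isClosed_le hg.continuous continuous_const)
    have hSne : S.Nonempty := ⟨0, ⟨le_rfl, ht₁0⟩, by rw [mem_setOf_eq, hg0]⟩
    set σ := sSup S with hσdef
    have hσS : σ ∈ S := hScompact.sSup_mem hSne
    have hgσ : g σ ≤ -A0 := hσS.2
    have hσt₁ : σ ≤ t₁ := hσS.1.2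
    have hσ0 : 0 ≤ σ := hσS.1.1
    set S2 : Set ℝ := Icc σ t₁ ∩ {u | L ≤ g u} with hS2def
    have hS2compact : IsCompact S2 :=
      isCompact_Icc.inter_right (isClosed_le continuous_const hg.continuous)
    have hS2ne : S2.Nonempty := ⟨t₁, ⟨hσt₁, le_rfl⟩, by simp only [mem_setOf_eq, hLdef]; exact min_le_left _ _⟩
    set σ' := sInf S2 with hσ'def
    have hσ'S2 : σ' ∈ S2 := hS2compact.sInf_mem hS2ne
    have hgσ' : L ≤ g σ' := hσ'S2.2
    have hσσ' : σ ≤ σ' := hσ'S2.1.1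
    have hσ't₁ : σ' ≤ t₁ := hσ'S2.1.2
    have hσne : σ ≠ σ' := by intro hgeqq; rw [hgeqq] at hgσ; linarith
    have hltbelow : ∀ u, σ ≤ u → u < σ' → g u < L := by
      intro u hu hu'
      by_contra hgu
      push_neg at hgu
      have hmem : u ∈ S2 := ⟨⟨hu, hu'.le.trans hσ't₁⟩, hgu⟩
      exact absurd (csInf_le hS2compact.bddBelow hmem) (not_le.2 hu')
    have hftc := aux_lip_ftc hg σ σ'
    have hmono : ∫ x in σ..σ', deriv g x ≤ ∫ x in σ..σ', (0:ℝ) := by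
      apply intervalIntegral.integral_mono_ae_restrict hσσ'
        (aux_deriv_integrable hg σ σ') intervalIntegrable_const
      have hns : ∀ᵐ u ∂(volume : Measure ℝ), u ≠ σ := by
        rw [ae_iff]
        simp only [ne_eq, not_not, setOf_eq_eq_singleton]
        exact measure_singleton σ
      have hns' : ∀ᵐ u ∂(volume : Measure ℝ), u ≠ σ' := by
        rw [ae_iff]
        simp only [ne_eq, not_not, setOf_eq_eq_singleton]
        exact measure_singleton σ'
      have hdiffae := hg.ae_differentiableAt_of_real (μ := volume)
      filter_upwards [ae_restrict_mem measurableSet_Icc, ae_restrict_of_ae hns,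
        ae_restrict_of_ae hns', ae_restrict_of_ae hdiffae, ae_restrict_of_ae hae]
        with u humem hune hune' hudiff huineq
      have hu1 : σ < u := lt_of_le_of_ne humem.1 (Ne.symm hune)
      have hu2 : u < σ' := lt_of_le_of_ne humem.2 hune'
      have hu0 : 0 < u := lt_of_le_of_lt hσ0 hu1
      have huT : u < T + 1 := by
        have := lt_of_lt_of_le hu2 hσ't₁
        linarith [ht₁mem.2]
      have hguL : g u < L := hltbelow u humem.1 hu2
      have hineq := huineq ⟨hu0, huT⟩ hudiff
      have hguL2 : g u ≤ -Real.sqrt (2 * N) :=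
        le_of_lt (lt_of_lt_of_le hguL (min_le_right _ _))
      have hgu2 : 2 * N ≤ (g u) ^ 2 := by
        have hms := mul_self_le_mul_self hsqrt2Nnn
          (by linarith : Real.sqrt (2 * N) ≤ -g u)
        have heq1 : -g u * -g u = (g u) ^ 2 := by ring
        have heq2 : Real.sqrt (2 * N) * Real.sqrt (2 * N) = (Real.sqrt (2 * N)) ^ 2 := by ring
        linarith [hms, heq1, heq2, hsqrt2N]
      have hβu := hβpos u hu0.le
      have h9 : N ≤ (g u) ^ 2 / 2 := by linarith
      have h10 := mul_le_mul_of_nonneg_left h9 hβu.le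
      linarith
    rw [intervalIntegral.integral_zero] at hmono
    rw [← hftc] at hmono
    linarith
  -- φ = -1/g (cut off so as to be globally Lipschitz)
  have hginv_lip : LipschitzOnWith (Real.toNNReal (A0⁻¹ * A0⁻¹))
      (fun x : ℝ => -x⁻¹) (Iic (-A0)) := by
    rw [lipschitzOnWith_iff_dist_le_mul]
    intro x hx y hy
    simp only [mem_Iic] at hx hy
    rw [Real.dist_eq, Real.dist_eq]
    have hx0 : x < 0 := lt_of_le_of_lt hx (by linarith)
    have hy0 : y < 0 := lt_of_le_of_lt hy (by linarith)
    have hxy0 : 0 < x * y := mul_pos_of_neg_of_neg hx0 hy0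
    have h1 : -x⁻¹ - -y⁻¹ = (x - y) / (x * y) := by
      rw [eq_div_iff (ne_of_gt hxy0)]
      field_simp [hx0.ne, hy0.ne]
      ring
    rw [h1, abs_div]
    rw [Real.coe_toNNReal _ (by positivity)]
    have hxy : A0 * A0 ≤ |x * y| := by
      rw [abs_of_pos hxy0]; nlinarith
    calc |x - y| / |x * y| ≤ |x - y| / (A0 * A0) := by
          apply div_le_div_of_nonneg_left (abs_nonneg _) (by positivity) hxy
      _ = A0⁻¹ * A0⁻¹ * |x - y| := by rw [div_eq_mul_inv, mul_inv]; ring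
  have hmin_lip : LipschitzWith K (fun t => min (g t) (-A0)) := hg.min_const (-A0)
  set φ : ℝ → ℝ := (fun x : ℝ => -x⁻¹) ∘ (fun t => min (g t) (-A0)) with hφdef
  have hφlip : LipschitzWith (Real.toNNReal (A0⁻¹ * A0⁻¹) * K) φ := by
    have hmaps : MapsTo (fun t => min (g t) (-A0)) univ (Iic (-A0)) :=
      fun x _ => mem_Iic.2 (min_le_right _ _)
    have := hginv_lip.comp (LipschitzOnWith.mono (hmin_lip.lipschitzOnWith) (subset_univ _)) hmaps
    rw [lipschitzOnWith_univ] at this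
    exact this
  have hφeq : ∀ t ∈ Icc (0:ℝ) (T + 1), φ t = -(g t)⁻¹ := by
    intro t ht
    show -(min (g t) (-A0))⁻¹ = -(g t)⁻¹
    rw [min_eq_left (step1 t ht)]
  -- a.e. derivative bound for φ on [0, T]
  have haeφ : ∀ᵐ u ∂(volume.restrict (Icc (0:ℝ) T)),
      deriv φ u ≤ -(κ * c * Real.exp (-bstar * u / 2)) := by
    have hns : ∀ᵐ u ∂(volume : Measure ℝ), u ≠ (0:ℝ) := by
      rw [ae_iff]
      simp only [ne_eq, not_not, setOf_eq_eq_singleton]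
      exact measure_singleton 0
    have hns' : ∀ᵐ u ∂(volume : Measure ℝ), u ≠ T := by
      rw [ae_iff]
      simp only [ne_eq, not_not, setOf_eq_eq_singleton]
      exact measure_singleton T
    have hdiffae := hg.ae_differentiableAt_of_real (μ := volume)
    filter_upwards [ae_restrict_mem measurableSet_Icc, ae_restrict_of_ae hns,
      ae_restrict_of_ae hns', ae_restrict_of_ae hdiffae, ae_restrict_of_ae hae]
      with u humem hu0 huT hudiff huineq
    have hu0' : 0 < u := lt_of_le_of_ne humem.1 (Ne.symm hu0)
    have huT' : u < T + 1 := by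
      have := lt_of_le_of_ne humem.2 huT
      linarith
    have hqA : g u ≤ -A0 := step1 u ⟨hu0'.le, by linarith⟩
    have hq0 : g u < 0 := by linarith
    have hq2 : A0 ^ 2 ≤ (g u) ^ 2 := by nlinarith
    have hq2pos : 0 < (g u) ^ 2 := by nlinarith
    have hm' := huineq ⟨hu0', huT'⟩ hudiff
    have hnb : Icc (0:ℝ) (T + 1) ∈ 𝓝 u := Icc_mem_nhds hu0' huT'
    have heq2 : φ =ᶠ[𝓝 u] (fun v => -(g v)⁻¹) := by
      filter_upwards [hnb] with x hx
      show -(min (g x) (-A0))⁻¹ = -(g x)⁻¹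
      rw [min_eq_left (step1 x hx)]
    have hdφ : HasDerivAt φ (deriv g u / (g u) ^ 2) u := by
      have h1 : HasDerivAt (fun v => -(g v)⁻¹) (deriv g u / (g u) ^ 2) u := by
        have h2 := (hudiff.hasDerivAt.inv hq0.ne).neg
        refine h2.congr_deriv ?_
        ring
      exact h1.congr_of_eventuallyEq heq2
    rw [hdφ.deriv]
    have hβu := hβpos u hu0'.le
    have hβlbu := hβlb u hu0'.le
    have hEpos : 0 < Real.exp (-bstar * u / 2) := Real.exp_pos _
    have hA2 : (0:ℝ) < A0 ^ 2 := by positivity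
    have e1 : N - (g u) ^ 2 / 2 ≤ -(κ * (g u) ^ 2) := by
      have hexp : N - (g u) ^ 2 / 2 + κ * (g u) ^ 2 = N * (A0 ^ 2 - (g u) ^ 2) / A0 ^ 2 := by
        rw [hκdef]; field_simp; ring
      have h5 : N * (A0 ^ 2 - (g u) ^ 2) / A0 ^ 2 ≤ 0 := by
        apply div_nonpos_of_nonpos_of_nonneg _ hA2.le
        nlinarith
      have h6 : N - (g u) ^ 2 / 2 + κ * (g u) ^ 2 ≤ 0 := by rw [hexp]; exact h5
      linarith
    have e2 : deriv g u ≤ -(κ * (c * Real.exp (-bstar * u / 2)) * (g u) ^ 2) := by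
      have hXnp : -(κ * (g u) ^ 2) ≤ 0 := by nlinarith
      calc deriv g u ≤ β u * N - β u * (g u) ^ 2 / 2 := hm'
        _ = β u * (N - (g u) ^ 2 / 2) := by ring
        _ ≤ β u * (-(κ * (g u) ^ 2)) := mul_le_mul_of_nonneg_left e1 hβu.le
        _ ≤ (c * Real.exp (-bstar * u / 2)) * (-(κ * (g u) ^ 2)) :=
            mul_le_mul_of_nonpos_right hβlbu hXnp
        _ = -(κ * (c * Real.exp (-bstar * u / 2)) * (g u) ^ 2) := by ring
    calc deriv g u / (g u) ^ 2
        ≤ (-(κ * (c * Real.exp (-bstar * u / 2)) * (g u) ^ 2)) / (g u) ^ 2 :=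
          (div_le_div_iff_of_pos_right hq2pos).2 e2
      _ = -(κ * c * Real.exp (-bstar * u / 2)) := by
          field_simp [ne_of_gt hq2pos]
          rw [div_self hq0.ne]
  -- ψ and the final contradiction
  set ψ : ℝ → ℝ := fun t => D * Real.exp (-bstar * t / 2) with hψdef
  have hψd : ∀ t : ℝ, HasDerivAt ψ (-(κ * c * Real.exp (-bstar * t / 2))) t := by
    intro t
    have h1 : HasDerivAt (fun t : ℝ => -bstar * t / 2) (-bstar / 2) t := by
      simpa using ((hasDerivAt_id t).const_mul (-bstar)).div_const 2
    have h2 := (h1.exp).const_mul D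
    refine h2.congr_deriv ?_
    rw [hDdef]; field_simp
  have hcontint : Continuous (fun u : ℝ => -(κ * c * Real.exp (-bstar * u / 2))) := by
    fun_prop
  have hψftc : ∫ u in (0:ℝ)..T, -(κ * c * Real.exp (-bstar * u / 2)) = ψ T - ψ 0 :=
    intervalIntegral.integral_eq_sub_of_hasDerivAt (fun t _ => hψd t)
      (hcontint.intervalIntegrable 0 T)
  have hφftc := aux_lip_ftc hφlip 0 T
  have hcomp : ∫ u in (0:ℝ)..T, deriv φ u
      ≤ ∫ u in (0:ℝ)..T, -(κ * c * Real.exp (-bstar * u / 2)) :=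
    intervalIntegral.integral_mono_ae_restrict hT0 (aux_deriv_integrable hφlip 0 T)
      (hcontint.intervalIntegrable 0 T) haeφ
  have hφ0 : φ 0 = 1 / A0 := by
    rw [hφeq 0 ⟨le_rfl, by linarith⟩, hg0, inv_neg, neg_neg, one_div]
  have hgT : g T ≤ -A0 := step1 T ⟨hT0, by linarith⟩
  have hφT : 0 < φ T := by
    rw [hφeq T ⟨hT0, by linarith⟩]
    have hgT0 : g T < 0 := by linarith
    simpa using inv_lt_zero.2 hgT0
  have hψT : ψ T - ψ 0 < -(1 / A0) := by
    have h1 : ψ 0 = D := by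
      show D * Real.exp (-bstar * 0 / 2) = D
      norm_num
    have h3 : D * Real.exp (-bstar * T / 2) < D * (δ / D) :=
      mul_lt_mul_of_pos_left hTexp hDpos
    have h4 : D * (δ / D) = δ := by field_simp
    have h5 : ψ T = D * Real.exp (-bstar * T / 2) := rfl
    rw [h5, h1]
    linarith [h3, h4, hδdef]
  linarith [hφT, hφ0, hψT, hcomp, hφftc, hψftc]
end

section
/- Let 0 < τ* < ∞, K > 0, let β : [0,τ*] → (0,∞) be continuous, and let M : [0,τ*) → ℝ be locally Lipschitz such that liminf_{t→τ*} M(t) = −∞ and |M'(t) + β(t) M(t)²/2| ≤ K β(t) for almost every t ∈ (0,τ*). Then lim_{t→τ*} M(t) · ∫_t^{τ*} β(s) ds = −2. -/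
open Real MeasureTheory Set Filter intervalIntegral

private lemma lip_deriv_bound {L : NNReal} {f : ℝ → ℝ} (hf : LipschitzWith L f) (x : ℝ) :
    |deriv f x| ≤ L := by
  by_cases hd : DifferentiableAt ℝ f x
  · have h := hasDerivAt_iff_tendsto_slope.1 hd.hasDerivAt
    refine le_of_tendsto h.abs ?_
    filter_upwards [self_mem_nhdsWithin] with y hy
    have hyx : y ≠ x := hy
    have hd2 : |f y - f x| ≤ L * |y - x| := by
      simpa [Real.dist_eq] using hf.dist_le_mul y x
    rw [slope_def_field, abs_div]
    rw [div_le_iff₀ (abs_pos.2 (sub_ne_zero.2 hyx))]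
    simpa using hd2
  · rw [deriv_zero_of_not_differentiableAt hd]; simp

private lemma lip_ftc {L : NNReal} {f : ℝ → ℝ} (hf : LipschitzWith L f) {a b : ℝ} (hab : a ≤ b) :
    f b - f a = ∫ x in a..b, deriv f x := by
  have hcont : Continuous f := hf.continuous
  have hint : ∀ c d : ℝ, IntervalIntegrable f volume c d := fun c d =>
    hcont.intervalIntegrable c d
  set h : ℕ → ℝ := fun n => ((n : ℝ) + 1)⁻¹ with hh
  have hpos : ∀ n, 0 < h n := fun n => by positivity
  have hto : Tendsto h atTop (nhds 0) := by
    simpa [hh, one_div] using tendsto_one_div_add_atTop_nhds_zero_nat (𝕜 := ℝ)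
  set F : ℕ → ℝ → ℝ := fun n x => (f (x + h n) - f x) * ((n : ℝ) + 1) with hF
  have hFslope : ∀ n x, F n x = slope f x (x + h n) := by
    intro n x
    rw [slope_def_field]
    have e : x + h n - x = h n := by ring
    rw [e, hh]
    simp [hF, hh, div_inv_eq_mul]
  have hseq : ∀ x : ℝ, Tendsto (fun n => x + h n) atTop (nhdsWithin x {x}ᶜ) := by
    intro x
    apply tendsto_nhdsWithin_of_tendsto_nhds_of_eventually_within
    · simpa using tendsto_const_nhds.add hto
    · filter_upwards with n
      exact (ne_of_lt (lt_add_of_pos_right x (hpos n))).symm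
  have hDC : Tendsto (fun n => ∫ x in Ioc a b, F n x) atTop
      (nhds (∫ x in Ioc a b, deriv f x)) := by
    apply tendsto_integral_of_dominated_convergence (fun _ => (L : ℝ))
    · intro n
      exact (((hcont.comp (continuous_id.add continuous_const)).sub hcont).mul
        continuous_const).aestronglyMeasurable
    · exact integrableOn_const measure_Ioc_lt_top.ne
    · intro n
      filter_upwards with x
      have hd2 : |f (x + h n) - f x| ≤ L * |h n| := by
        simpa [Real.dist_eq] using hf.dist_le_mul (x + h n) x
      have e : |F n x| = |f (x + h n) - f x| * ((n:ℝ)+1) := by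
        rw [hF]; rw [abs_mul]; congr 1; exact abs_of_pos (by positivity)
      rw [Real.norm_eq_abs, e]
      have h1 : |h n| = ((n:ℝ)+1)⁻¹ := abs_of_pos (hpos n)
      rw [h1] at hd2
      calc |f (x + h n) - f x| * ((n:ℝ)+1) ≤ (L * ((n:ℝ)+1)⁻¹) * ((n:ℝ)+1) :=
            mul_le_mul_of_nonneg_right hd2 (by positivity)
        _ = L := by field_simp
    · refine ae_restrict_of_ae ?_
      filter_upwards [hf.ae_differentiableAt (μ := volume)] with x hx
      have hda := (hasDerivAt_iff_tendsto_slope.1 hx.hasDerivAt).comp (hseq x)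
      exact hda.congr (fun n => (hFslope n x).symm)
  have hid : ∀ n, ∫ x in Ioc a b, F n x =
      ((∫ x in b..(b + h n), f x) - ∫ x in a..(a + h n), f x) * ((n : ℝ) + 1) := by
    intro n
    have hintc : IntervalIntegrable (fun x => f (x + h n)) volume a b :=
      (hcont.comp (continuous_id.add continuous_const)).intervalIntegrable a b
    have e2 : ∫ x in a..b, F n x =
        ((∫ x in a..b, f (x + h n)) - ∫ x in a..b, f x) * ((n : ℝ) + 1) := by
      calc ∫ x in a..b, F n x = ∫ x in a..b, (f (x + h n) - f x) * ((n:ℝ)+1) := rfl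
        _ = (∫ x in a..b, (f (x + h n) - f x)) * ((n:ℝ)+1) :=
            intervalIntegral.integral_mul_const _ _
        _ = ((∫ x in a..b, f (x + h n)) - ∫ x in a..b, f x) * ((n:ℝ)+1) := by
            rw [intervalIntegral.integral_sub hintc (hint a b)]
    have e3 : ∫ x in a..b, f (x + h n) = ∫ x in (a + h n)..(b + h n), f x :=
      intervalIntegral.integral_comp_add_right f (h n)
    have c1 : (∫ x in a..b, f x) + ∫ x in b..(b + h n), f x = ∫ x in a..(b + h n), f x :=
      intervalIntegral.integral_add_adjacent_intervals (hint a b) (hint b (b + h n))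
    have c2 : (∫ x in a..(a + h n), f x) + ∫ x in (a + h n)..(b + h n), f x
        = ∫ x in a..(b + h n), f x :=
      intervalIntegral.integral_add_adjacent_intervals (hint a (a + h n)) (hint (a + h n) (b + h n))
    rw [← intervalIntegral.integral_of_le hab, e2, e3]
    nlinarith [c1, c2]
  have hRHS : Tendsto (fun n => ((∫ x in b..(b + h n), f x) - ∫ x in a..(a + h n), f x)
      * ((n : ℝ) + 1)) atTop (nhds (f b - f a)) := by
    have key : ∀ c : ℝ, Tendsto (fun n => (∫ x in c..(c + h n), f x) * ((n : ℝ) + 1))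
        atTop (nhds (f c)) := by
      intro c
      have hG : HasDerivAt (fun u => ∫ x in c..u, f x) (f c) c :=
        intervalIntegral.integral_hasDerivAt_right (hint c c)
          hcont.stronglyMeasurable.stronglyMeasurableAtFilter hcont.continuousAt
      have hs := (hasDerivAt_iff_tendsto_slope.1 hG).comp (hseq c)
      have e : ∀ n, slope (fun u => ∫ x in c..u, f x) c (c + h n)
          = (∫ x in c..(c + h n), f x) * ((n : ℝ) + 1) := by
        intro n
        rw [slope_def_field]
        have e2 : c + h n - c = h n := by ring
        rw [e2, hh]
        simp [div_inv_eq_mul]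
      exact hs.congr e
    have := (key b).sub (key a)
    exact this.congr (by intro n; ring)
  have := tendsto_nhds_unique (hDC.congr fun n => hid n) hRHS
  rw [intervalIntegral.integral_of_le hab, ← this]

private lemma lipOn_ftc {L : NNReal} {g : ℝ → ℝ} {a b : ℝ}
    (hg : LipschitzOnWith L g (Icc a b)) :
    ∃ d : ℝ → ℝ, Measurable d ∧ (∀ x, |d x| ≤ L) ∧
      (∀ᵐ x ∂(volume : Measure ℝ), x ∈ Ioo a b → HasDerivAt g (d x) x) ∧
      (∀ t ∈ Icc a b, ∀ t' ∈ Icc a b, t ≤ t' → g t' - g t = ∫ x in t..t', d x) := by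
  obtain ⟨f, hfL, hEq⟩ := hg.extend_real
  refine ⟨deriv f, measurable_deriv f, fun x => lip_deriv_bound hfL x, ?_, ?_⟩
  · filter_upwards [hfL.ae_differentiableAt (μ := volume)] with x hx hmem
    have hnhds : Icc a b ∈ nhds x := Icc_mem_nhds hmem.1 hmem.2
    have heq : f =ᶠ[nhds x] g := by
      filter_upwards [hnhds] with y hy
      exact (hEq hy).symm
    exact heq.hasDerivAt_iff.1 hx.hasDerivAt
  · intro t ht t' ht' htt'
    have := lip_ftc hfL htt'
    rwa [← hEq ht, ← hEq ht'] at this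

private lemma bdd_meas_intInt {d : ℝ → ℝ} {C : ℝ} (hd : Measurable d) (hC : ∀ x, |d x| ≤ C)
    (u v : ℝ) : IntervalIntegrable d volume u v := by
  rw [intervalIntegrable_iff]
  have hCint : IntegrableOn (fun _ : ℝ => C) (Set.uIoc u v) volume :=
    integrableOn_const measure_Ioc_lt_top.ne
  exact hCint.mono' hd.aestronglyMeasurable (by filter_upwards with x; exact hC x)

private lemma ae_ne_vol (t : ℝ) : ∀ᵐ x : ℝ ∂volume, x ≠ t := by
  have h : (volume : Measure ℝ) {t} = 0 := measure_singleton t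
  exact ae_iff.2 (by simpa using h)

private lemma trap {τ K : ℝ} (hK : 0 < K) {β : ℝ → ℝ}
    (hβpos : ∀ t ∈ Set.Icc (0 : ℝ) τ, 0 < β t) {M : ℝ → ℝ}
    (hMlip : ∀ a b : ℝ, 0 ≤ a → b < τ → ∃ K' : NNReal, LipschitzOnWith K' M (Set.Icc a b))
    (hRic : ∀ᵐ (t : ℝ) ∂(volume : Measure ℝ), t ∈ Set.Ioo 0 τ →
      ∀ m' : ℝ, HasDerivAt M m' t → |m' + β t * (M t) ^ 2 / 2| ≤ K * β t)
    {c : ℝ} (hc0 : 0 < c) (hc : 2 * K < c ^ 2)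
    {t0 : ℝ} (ht00 : 0 ≤ t0) (ht0τ : t0 < τ) (hM0 : M t0 < -c) :
    ∀ t ∈ Ico t0 τ, M t < -c := by
  rintro b ⟨hbt0, hbτ⟩
  by_contra hMb
  push_neg at hMb   -- -c ≤ M b
  obtain ⟨L, hL⟩ := hMlip t0 b ht00 hbτ
  have hMcont : ContinuousOn M (Icc t0 b) := hL.continuousOn
  -- the first time M goes above -c
  set A : Set ℝ := Icc t0 b ∩ M ⁻¹' (Ici (-c)) with hA
  have hAne : A.Nonempty := ⟨b, ⟨hbt0, le_refl b⟩, hMb⟩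
  have hAclosed : IsClosed A := hMcont.preimage_isClosed_of_isClosed isClosed_Icc isClosed_Ici
  have hAbdd : BddBelow A := ⟨t0, fun x hx => hx.1.1⟩
  set s1 := sInf A with hs1
  have hs1A : s1 ∈ A := hAclosed.csInf_mem hAne hAbdd
  have hs1M : -c ≤ M s1 := hs1A.2
  have hs1mem : s1 ∈ Icc t0 b := hs1A.1
  rcases eq_or_lt_of_le hs1mem.1 with heq | hlt
  · rw [← heq] at hs1M; linarith
  -- t0 < s1 ; on [t0, s1) M < -c
  have hlt' : ∀ s ∈ Ico t0 s1, M s < -c := by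
    rintro s ⟨hst0, hss1⟩
    by_contra hs
    push_neg at hs
    have : s ∈ A := ⟨⟨hst0, le_trans hss1.le hs1mem.2⟩, hs⟩
    exact absurd (csInf_le hAbdd this) (not_le.2 hss1)
  -- by continuity M s1 ≤ -c as well, so M ≤ -c on [t0, s1]
  have hs1le : M s1 ≤ -c := by
    have hcl : s1 ∈ closure (Ico t0 s1) := by
      rw [closure_Ico (ne_of_lt hlt)]
      exact ⟨hlt.le, le_refl s1⟩
    have hnb : (nhdsWithin s1 (Ico t0 s1)).NeBot := mem_closure_iff_nhdsWithin_neBot.1 hcl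
    have hct : ContinuousWithinAt M (Ico t0 s1) s1 :=
      (hMcont.continuousWithinAt hs1mem).mono
        (fun x hx => ⟨hx.1, le_trans hx.2.le hs1mem.2⟩)
    refine le_of_tendsto hct ?_
    filter_upwards [self_mem_nhdsWithin] with y hy
    exact (hlt' y hy).le
  have hle : ∀ s ∈ Icc t0 s1, M s ≤ -c := by
    rintro s ⟨hst0, hss1⟩
    rcases lt_or_eq_of_le hss1 with hlt2 | heq2
    · exact (hlt' s ⟨hst0, hlt2⟩).le
    · rw [heq2]; exact hs1le
  -- FTC on [t0, s1]
  obtain ⟨d, hdmeas, hdbd, hdae, hdftc⟩ := lipOn_ftc hL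
  have hsub : Icc t0 s1 ⊆ Icc t0 b := Icc_subset_Icc (le_refl _) hs1mem.2
  have hftc : M s1 - M t0 = ∫ x in t0..s1, d x :=
    hdftc t0 ⟨le_refl t0, hbt0⟩ s1 hs1mem hs1mem.1
  have hdint := bdd_meas_intInt hdmeas hdbd
  -- a.e. d ≤ 0 on [t0, s1]
  have hae0 : ∀ᵐ x ∂(volume.restrict (Icc t0 s1)), d x ≤ 0 := by
    have h1 : ∀ᵐ x ∂(volume : Measure ℝ), x ∈ Ioo t0 s1 → d x ≤ 0 := by
      filter_upwards [hdae, hRic] with x hx hric hmem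
      have hx1 : x ∈ Ioo t0 b := ⟨hmem.1, lt_of_lt_of_le hmem.2 hs1mem.2⟩
      have hder := hx hx1
      have hxτ : x ∈ Ioo 0 τ := ⟨lt_of_le_of_lt ht00 hmem.1, lt_trans hx1.2 hbτ⟩
      have hb := hric hxτ _ hder
      have hβx : 0 < β x := hβpos x ⟨hxτ.1.le, hxτ.2.le⟩
      have hMx : M x ≤ -c := hle x ⟨hmem.1.le, hmem.2.le⟩
      have hMsq : c ^ 2 ≤ (M x) ^ 2 := by nlinarith
      have habs := abs_le.1 hb
      nlinarith [habs.1, habs.2]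
    filter_upwards [ae_restrict_of_ae h1, ae_restrict_mem measurableSet_Icc,
      ae_restrict_of_ae (ae_ne_vol t0), ae_restrict_of_ae (ae_ne_vol s1)] with x h1x hmem hne0 hne1
    exact h1x ⟨lt_of_le_of_ne hmem.1 (Ne.symm hne0), lt_of_le_of_ne hmem.2 hne1⟩
  have hint0 : (∫ x in t0..s1, d x) ≤ ∫ x in t0..s1, (0 : ℝ) := by
    refine intervalIntegral.integral_mono_ae_restrict hs1mem.1 (hdint t0 s1)
      intervalIntegrable_const ?_
    exact hae0
  rw [intervalIntegral.integral_const, smul_zero] at hint0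
  -- contradiction: M s1 ≤ M t0 < -c but M s1 ≥ -c
  have : M s1 ≤ M t0 := by linarith [hftc, hint0]
  linarith

set_option maxHeartbeats 1000000 in
/-- The deterministic core of the wave-breaking rate Theorem 2.9: if M is locally
Lipschitz on [0,τ*), liminf_{t→τ*} M(t) = −∞, and |M' + βM²/2| ≤ Kβ a.e., then
M(t)·∫ₜ^{τ*} β(s) ds → −2 as t → τ*. -/
theorem wave_breaking_rate (τ : ℝ) (hτ : 0 < τ) (K : ℝ) (hK : 0 < K)
    (β : ℝ → ℝ) (hβc : ContinuousOn β (Set.Icc 0 τ))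
    (hβpos : ∀ t ∈ Set.Icc (0 : ℝ) τ, 0 < β t)
    (M : ℝ → ℝ)
    (hMlip : ∀ a b : ℝ, 0 ≤ a → b < τ →
      ∃ K' : NNReal, LipschitzOnWith K' M (Set.Icc a b))
    (hblow : ∀ C : ℝ, ∃ᶠ t in nhdsWithin τ (Set.Iio τ), M t < C)
    (hRic : ∀ᵐ (t : ℝ) ∂(volume : Measure ℝ), t ∈ Set.Ioo 0 τ →
      ∀ m' : ℝ, HasDerivAt M m' t → |m' + β t * (M t) ^ 2 / 2| ≤ K * β t) :
    Filter.Tendsto (fun t => M t * ∫ s in t..τ, β s)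
      (nhdsWithin τ (Set.Iio τ)) (nhds (-2)) := by
  have hβint : ∀ u v : ℝ, u ∈ Icc (0:ℝ) τ → v ∈ Icc (0:ℝ) τ →
      IntervalIntegrable β volume u v := fun u v hu hv =>
    (hβc.mono (uIcc_subset_Icc hu hv)).intervalIntegrable
  set B : ℝ → ℝ := fun t => ∫ s in t..τ, β s with hBdef
  have hτmem : τ ∈ Icc (0:ℝ) τ := right_mem_Icc.2 hτ.le
  -- eventual trap
  have hev : ∀ c : ℝ, 0 < c → 2*K < c^2 →
      ∀ᶠ t in nhdsWithin τ (Set.Iio τ), (M t < -c ∧ 0 < t) := by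
    intro c hc0 hc
    have hIoi : Ioi (0:ℝ) ∈ nhdsWithin τ (Iio τ) := nhdsWithin_le_nhds (Ioi_mem_nhds hτ)
    have hIoi2 : ∀ᶠ t in nhdsWithin τ (Set.Iio τ), 0 < t ∧ t < τ := by
      filter_upwards [hIoi, self_mem_nhdsWithin] with t h1 h2
      exact ⟨h1, h2⟩
    have hex := ((hblow (-c)).and_eventually hIoi2).exists
    obtain ⟨t0, hMt0, ht00, ht0τ⟩ := hex
    have htrap := trap hK hβpos hMlip hRic hc0 hc (le_of_lt ht00) ht0τ hMt0
    have h1 : Ioi t0 ∈ nhdsWithin τ (Iio τ) := nhdsWithin_le_nhds (Ioi_mem_nhds ht0τ)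
    filter_upwards [h1, self_mem_nhdsWithin, hIoi] with t ht1 ht2 ht3
    exact ⟨htrap t ⟨le_of_lt ht1, ht2⟩, ht3⟩
  -- M tends to -infinity
  have hMbot : Tendsto M (nhdsWithin τ (Set.Iio τ)) atBot := by
    rw [tendsto_atBot]
    intro C
    set c : ℝ := max (Real.sqrt (2*K) + 1) (|C| + 1) with hcdef
    have hs0 : 0 ≤ Real.sqrt (2*K) := Real.sqrt_nonneg _
    have hc0 : 0 < c := lt_of_lt_of_le (by positivity) (le_max_left _ _)
    have hc2 : 2*K < c^2 := by
      have h1 : Real.sqrt (2*K) + 1 ≤ c := le_max_left _ _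
      nlinarith [Real.sq_sqrt (by positivity : (0:ℝ) ≤ 2*K)]
    filter_upwards [hev c hc0 hc2] with t ht
    have h2 : |C| + 1 ≤ c := le_max_right _ _
    have h3 : -|C| ≤ C := neg_abs_le C
    linarith [ht.1]
  have hinv0 : Tendsto (fun t => (M t)⁻¹) (nhdsWithin τ (Set.Iio τ)) (nhds 0) :=
    tendsto_inv₀_cobounded.comp
      (hMbot.mono_right (by rw [Real.cobounded_eq]; exact le_sup_left))
  -- B tends to 0
  obtain ⟨Cb, hCb⟩ := isCompact_Icc.exists_bound_of_continuousOn hβc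
  have hB0 : Tendsto B (nhdsWithin τ (Set.Iio τ)) (nhds 0) := by
    apply squeeze_zero_norm' (a := fun t => Cb * |τ - t|)
    · filter_upwards [nhdsWithin_le_nhds (Ioi_mem_nhds hτ), self_mem_nhdsWithin] with t h1 h2
      apply intervalIntegral.norm_integral_le_of_norm_le_const
      intro x hx
      exact hCb x (uIcc_subset_Icc ⟨le_of_lt h1, le_of_lt h2⟩ hτmem (uIoc_subset_uIcc hx))
    · have hcont : Tendsto (fun t : ℝ => Cb * |τ - t|) (nhds τ) (nhds (Cb * |τ - τ|)) :=
        (continuous_const.mul ((continuous_const.sub continuous_id).abs)).tendsto τ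
      simpa using hcont.mono_left nhdsWithin_le_nhds
  have hBpos : ∀ t : ℝ, 0 ≤ t → t < τ → 0 < B t := by
    intro t h0 htτ
    refine intervalIntegral_pos_of_pos_on (hβint t τ ⟨h0, htτ.le⟩ hτmem) ?_ htτ
    intro x hx
    exact hβpos x ⟨le_trans h0 hx.1.le, hx.2.le⟩
  have hBsplit : ∀ t b : ℝ, 0 ≤ t → t ≤ b → b < τ → (∫ s in t..b, β s) = B t - B b := by
    intro t b h0 htb hbτ
    have h := intervalIntegral.integral_add_adjacent_intervals
      (hβint t b ⟨h0, le_trans htb hbτ.le⟩ ⟨le_trans h0 htb, hbτ.le⟩)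
      (hβint b τ ⟨le_trans h0 htb, hbτ.le⟩ hτmem)
    simp only [hBdef]
    linarith
  -- main estimate
  rw [Metric.tendsto_nhds]
  intro ε' hε'
  set ε : ℝ := min (ε'/8) (1/2) with hεdef
  have hε0 : 0 < ε := lt_min (by positivity) one_half_pos
  have hεhalf : ε ≤ 1/2 := min_le_right _ _
  have hεε' : 8 * ε ≤ ε' := by
    have := min_le_left (ε'/8) (1/2)
    simp only [hεdef]
    linarith
  set c : ℝ := Real.sqrt (2*K/ε) + 1 with hcdef
  have hc0 : 0 < c := by positivity
  have hcsq : 2*K/ε < c^2 := by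
    nlinarith [Real.sq_sqrt (show (0:ℝ) ≤ 2*K/ε by positivity), Real.sqrt_nonneg (2*K/ε)]
  have hKc : 2*K < ε * c^2 := by
    rw [div_lt_iff₀ hε0] at hcsq
    linarith
  have hc2K : 2*K < c^2 := by
    nlinarith [hKc, mul_nonneg (show (0:ℝ) ≤ 1/2 - ε by linarith) (sq_nonneg c)]
  -- pick t1
  obtain ⟨t0, ht0τ, ht0prop⟩ := (nhdsLT_basis τ).eventually_iff.1 (hev c hc0 hc2K)
  set t1 : ℝ := max ((t0 + τ)/2) (τ/2) with ht1def
  have ht1mem : t1 ∈ Ioo t0 τ :=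
    ⟨lt_of_lt_of_le (by linarith) (le_max_left _ _), max_lt (by linarith) (by linarith)⟩
  have hP : ∀ t : ℝ, t1 ≤ t → t < τ → M t < -c ∧ 0 < t := fun t h1 h2 =>
    ht0prop ⟨lt_of_lt_of_le ht1mem.1 h1, h2⟩
  have ht10 : 0 < t1 := (hP t1 le_rfl ht1mem.2).2
  -- key estimate for each t in [t1, τ)
  have hkey : ∀ t : ℝ, t1 ≤ t → t < τ →
      (1-ε)/2 * B t ≤ -(M t)⁻¹ ∧ -(M t)⁻¹ ≤ (1+ε)/2 * B t := by
    intro t htt1 htτ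
    have ht0' : 0 < t := lt_of_lt_of_le ht10 htt1
    have hstep : ∀ b : ℝ, t ≤ b → b < τ →
        (1-ε)/2 * (B t - B b) ≤ (M b)⁻¹ - (M t)⁻¹ ∧
        (M b)⁻¹ - (M t)⁻¹ ≤ (1+ε)/2 * (B t - B b) := by
      intro b htb hbτ
      obtain ⟨L, hL⟩ := hMlip t1 b ht10.le hbτ
      have ht1b : t1 ≤ b := le_trans htt1 htb
      have hMneg : ∀ y ∈ Icc t1 b, M y < -c := fun y hy =>
        (hP y hy.1 (lt_of_le_of_lt hy.2 hbτ)).1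
      have hMne : ∀ y ∈ Icc t1 b, M y ≠ 0 := fun y hy =>
        ne_of_lt (lt_trans (hMneg y hy) (by linarith))
      have hMabs : ∀ y ∈ Icc t1 b, c ≤ |M y| := by
        intro y hy
        rw [abs_of_neg (lt_trans (hMneg y hy) (by linarith))]
        linarith [hMneg y hy]
      -- inverse is Lipschitz on [t1, b]
      set cn : NNReal := ⟨c, hc0.le⟩ with hcn
      set L2 : NNReal := L * (cn * cn)⁻¹ with hL2
      have hL2coe : (L2 : ℝ) = (L : ℝ) * (c * c)⁻¹ := by
        rw [hL2, NNReal.coe_mul, NNReal.coe_inv, NNReal.coe_mul]; rfl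
      have hhL : LipschitzOnWith L2 (fun y => (M y)⁻¹) (Icc t1 b) := by
        apply LipschitzOnWith.of_dist_le_mul
        intro x hx y hy
        have hMx := hMne x hx
        have hMy := hMne y hy
        rw [Real.dist_eq, Real.dist_eq]
        have e : (M x)⁻¹ - (M y)⁻¹ = (M y - M x) / (M x * M y) := by
          field_simp
        rw [e, abs_div, abs_mul]
        have hnum : |M y - M x| ≤ (L : ℝ) * |y - x| := by
          have := hL.dist_le_mul y hy x hx
          rwa [Real.dist_eq, Real.dist_eq] at this
        have hden : c * c ≤ |M x| * |M y| :=
          mul_le_mul (hMabs x hx) (hMabs y hy) hc0.le (abs_nonneg _)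
        have hcc : (0:ℝ) < c * c := by positivity
        calc |M y - M x| / (|M x| * |M y|) ≤ ((L:ℝ) * |y - x|) / (c * c) :=
              div_le_div₀ (by positivity) hnum hcc hden
          _ = (L2 : ℝ) * |x - y| := by
              rw [hL2coe, abs_sub_comm]
              ring
      obtain ⟨d2, hd2meas, hd2bd, hd2ae, hd2ftc⟩ := lipOn_ftc hhL
      have hmemt : t ∈ Icc t1 b := ⟨htt1, htb⟩
      have hmemb : b ∈ Icc t1 b := ⟨ht1b, le_rfl⟩
      have hftc : (M b)⁻¹ - (M t)⁻¹ = ∫ x in t..b, d2 x := hd2ftc t hmemt b hmemb htb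
      -- a.e. bounds on d2
      have haeb : ∀ᵐ x ∂(volume : Measure ℝ), x ∈ Ioo t1 b →
          ((1-ε)/2 * β x ≤ d2 x ∧ d2 x ≤ (1+ε)/2 * β x) := by
        filter_upwards [hd2ae, hRic] with x hx hric hmem
        have hder := hx hmem
        have hMx : M x < -c := hMneg x ⟨hmem.1.le, hmem.2.le⟩
        have hMxne : M x ≠ 0 := ne_of_lt (lt_trans hMx (by linarith))
        have hinvne : (M x)⁻¹ ≠ 0 := inv_ne_zero hMxne
        have hval : -(d2 x) / ((M x)⁻¹)^2 = -(d2 x) * (M x)^2 := by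
          rw [inv_pow, div_inv_eq_mul]
        have hder2 : HasDerivAt M (-(d2 x) * (M x)^2) x := by
          have h1 := hder.inv hinvne
          rw [hval] at h1
          simpa [inv_inv, Pi.inv_def] using h1
        have hxΙ : x ∈ Ioo 0 τ := ⟨lt_trans ht10 hmem.1, lt_trans hmem.2 hbτ⟩
        have hb2 := hric hxΙ _ hder2
        have hβx : 0 < β x := hβpos x ⟨hxΙ.1.le, hxΙ.2.le⟩
        have hMsq : c^2 ≤ (M x)^2 := by nlinarith
        have hMsq0 : 0 < (M x)^2 := by positivity
        have habs := abs_le.1 hb2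
        have h1 := habs.1
        have h2 := habs.2
        have hεm : 2*K ≤ ε * (M x)^2 :=
          le_trans hKc.le (mul_le_mul_of_nonneg_left hMsq hε0.le)
        have hprod : (β x / 2) * (2*K) ≤ (β x / 2) * (ε * (M x)^2) :=
          mul_le_mul_of_nonneg_left hεm (by positivity)
        constructor
        · have key1 : ((1-ε)/2 * β x) * (M x)^2 ≤ d2 x * (M x)^2 := by linarith
          exact le_of_mul_le_mul_right key1 hMsq0
        · have key2 : d2 x * (M x)^2 ≤ ((1+ε)/2 * β x) * (M x)^2 := by linarith
          exact le_of_mul_le_mul_right key2 hMsq0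
      -- integrate
      have hd2int := bdd_meas_intInt hd2meas hd2bd t b
      have hβintb : IntervalIntegrable β volume t b :=
        hβint t b ⟨ht0'.le, htτ.le⟩ ⟨le_trans ht0'.le htb, hbτ.le⟩
      have haeres : ∀ q : ℝ → Prop, (∀ᵐ x ∂(volume : Measure ℝ), x ∈ Ioo t1 b → q x) →
          (∀ᵐ x ∂(volume.restrict (Icc t b)), q x) := by
        intro q hq
        filter_upwards [ae_restrict_of_ae hq, ae_restrict_mem measurableSet_Icc,
          ae_restrict_of_ae (ae_ne_vol t1), ae_restrict_of_ae (ae_ne_vol b)]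
          with x h1 h2 h3 h4
        exact h1 ⟨lt_of_le_of_ne (le_trans htt1 h2.1) (Ne.symm h3), lt_of_le_of_ne h2.2 h4⟩
      have hlow : (∫ x in t..b, (1-ε)/2 * β x) ≤ ∫ x in t..b, d2 x := by
        refine intervalIntegral.integral_mono_ae_restrict htb (hβintb.const_mul _) hd2int ?_
        exact haeres _ (by filter_upwards [haeb] with x hx hm; exact (hx hm).1)
      have hhigh : (∫ x in t..b, d2 x) ≤ ∫ x in t..b, (1+ε)/2 * β x := by
        refine intervalIntegral.integral_mono_ae_restrict htb hd2int (hβintb.const_mul _) ?_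
        exact haeres _ (by filter_upwards [haeb] with x hx hm; exact (hx hm).2)
      rw [intervalIntegral.integral_const_mul] at hlow hhigh
      rw [hBsplit t b ht0'.le htb hbτ] at hlow hhigh
      rw [hftc]
      exact ⟨hlow, hhigh⟩
    -- take b → τ⁻
    have hevb : ∀ᶠ b in nhdsWithin τ (Set.Iio τ), t ≤ b ∧ b < τ := by
      filter_upwards [nhdsWithin_le_nhds (Ioi_mem_nhds htτ), self_mem_nhdsWithin] with b h1 h2
      exact ⟨h1.le, h2⟩
    have hlim1 : Tendsto (fun b => (M b)⁻¹ - (M t)⁻¹) (nhdsWithin τ (Set.Iio τ))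
        (nhds (0 - (M t)⁻¹)) := hinv0.sub tendsto_const_nhds
    have hlimlo : Tendsto (fun b => (1-ε)/2 * (B t - B b)) (nhdsWithin τ (Set.Iio τ))
        (nhds ((1-ε)/2 * (B t - 0))) := tendsto_const_nhds.mul (tendsto_const_nhds.sub hB0)
    have hlimhi : Tendsto (fun b => (1+ε)/2 * (B t - B b)) (nhdsWithin τ (Set.Iio τ))
        (nhds ((1+ε)/2 * (B t - 0))) := tendsto_const_nhds.mul (tendsto_const_nhds.sub hB0)
    constructor
    · have := le_of_tendsto_of_tendsto hlimlo hlim1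
        (by filter_upwards [hevb] with b hb; exact (hstep b hb.1 hb.2).1)
      simpa using this
    · have := le_of_tendsto_of_tendsto hlim1 hlimhi
        (by filter_upwards [hevb] with b hb; exact (hstep b hb.1 hb.2).2)
      simpa using this
  -- conclude
  filter_upwards [nhdsWithin_le_nhds (Ioi_mem_nhds ht1mem.2), self_mem_nhdsWithin] with t h1 h2
  obtain ⟨hlow, hhigh⟩ := hkey t h1.le h2
  have hMt : M t < -c := (hP t h1.le h2).1
  have hMt0 : M t < 0 := lt_trans hMt (by linarith)
  have hBt : 0 < B t := hBpos t (lt_trans ht10 h1).le h2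
  set P : ℝ := -(M t)⁻¹ with hPdef
  have hP0 : 0 < P := by
    simp only [hPdef]
    rw [neg_pos]
    exact inv_neg''.2 hMt0
  set Q : ℝ := B t / P with hQdef
  have hQP : Q * P = B t := div_mul_cancel₀ _ (ne_of_gt hP0)
  have hQ0 : 0 < Q := div_pos hBt hP0
  have hMB : M t * B t = -Q := by
    have hMP : M t = -P⁻¹ := by
      simp only [hPdef]
      rw [inv_neg, inv_inv, neg_neg]
    rw [hMP, ← hQP]
    field_simp
  -- bounds on Q
  have hup : (1-ε)/2 * Q ≤ 1 := by
    refine le_of_mul_le_mul_right ?_ hP0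
    calc ((1-ε)/2 * Q) * P = (1-ε)/2 * (Q * P) := by ring
      _ = (1-ε)/2 * B t := by rw [hQP]
      _ ≤ P := hlow
      _ = 1 * P := (one_mul P).symm
  have hdn : 1 ≤ (1+ε)/2 * Q := by
    refine le_of_mul_le_mul_right ?_ hP0
    calc 1 * P = P := one_mul P
      _ ≤ (1+ε)/2 * B t := hhigh
      _ = (1+ε)/2 * (Q * P) := by rw [hQP]
      _ = ((1+ε)/2 * Q) * P := by ring
  have hfact : (0:ℝ) ≤ (1/2 - ε) * Q := mul_nonneg (by linarith) hQ0.le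
  have hQ4 : Q ≤ 4 := by nlinarith [hup, hfact]
  have hεQ : ε * Q ≤ 4 * ε := by nlinarith [mul_le_mul_of_nonneg_left hQ4 hε0.le]
  rw [Real.dist_eq, hMB]
  have hb1 : -Q + 2 ≤ 4 * ε := by nlinarith [hdn, hεQ]
  have hb2 : -(4*ε) ≤ -Q + 2 := by nlinarith [hup, hεQ]
  rw [abs_lt]
  constructor <;> nlinarith [hb1, hb2, hεε', hε']
end
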